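/- arXiv:2307.01732 — 6 statements merged into one kernel-verified Lean document; each statement's English description precedes it below -/
import Mathlib

section
/- Let t be a positive integer, let G be a finite simple graph not containing K_{t,t} as a subgraph, and let (G, 𝒫ⁱ) for i = 1, …, |V(G)| be an uncontraction sequence of G. Suppose that, for some m ∈ {1, …, |V(G)|}, there are parts X₁, X₂, X₃, X₄ ∈ 𝒫ᵐ which induce a red path in this order in the partitioned trigraph of (G, 𝒫ᵐ) (i.e., the edges X₁X₂, X₂X₃, X₃X₄ are present and red, and there are no other edges among these four parts), there is no edge of G between X₁ and X₄, and the induced subgraph G[X₁ ∪ X₂ ∪ X₃ ∪ X₄] contains at least 4t pairwise vertex-disjoint paths from X₁ to X₄. Then the width of this uncontraction sequence is greater than 2. -/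
/-- `P` is a partition of the vertex set into nonempty parts. -/
def IsPartition {V : Type} (P : Finset (Finset V)) : Prop :=
  (∀ X ∈ P, X.Nonempty) ∧ ∀ v : V, ∃! X, X ∈ P ∧ v ∈ X

/-- Adjacency of two parts in the partitioned trigraph: the parts are distinct and
`G` has an edge between them. -/
def TriAdj {V : Type} (G : SimpleGraph V) (X Y : Finset V) : Prop :=
  X ≠ Y ∧ ∃ x ∈ X, ∃ y ∈ Y, G.Adj x y

/-- A red edge of the partitioned trigraph: the parts are adjacent but not completely joined. -/
def RedAdj {V : Type} (G : SimpleGraph V) (X Y : Finset V) : Prop :=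
  TriAdj G X Y ∧ ¬ ∀ x ∈ X, ∀ y ∈ Y, G.Adj x y

/-- A black edge of the partitioned trigraph: the parts are adjacent and completely joined. -/
def BlackAdj {V : Type} (G : SimpleGraph V) (X Y : Finset V) : Prop :=
  TriAdj G X Y ∧ ∀ x ∈ X, ∀ y ∈ Y, G.Adj x y

/-- No edge of `G` between the two sets. -/
def NoEdgeBetween {V : Type} (G : SimpleGraph V) (X Y : Finset V) : Prop :=
  ∀ x ∈ X, ∀ y ∈ Y, ¬ G.Adj x y

/-- The red degree of the part `X` in the partitioned trigraph of `(G, P)`. -/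
noncomputable def redDegree {V : Type} (G : SimpleGraph V) (P : Finset (Finset V))
    (X : Finset V) : ℕ :=
  {Y : Finset V | Y ∈ P ∧ RedAdj G X Y}.ncard

/-- `Q` is obtained from the partition `P` by splitting one part into two nonempty parts. -/
def SplitsFrom {V : Type} (Q P : Finset (Finset V)) : Prop :=
  ∃ X Y Z : Finset V, X ∈ P ∧ Y.Nonempty ∧ Z.Nonempty ∧ (∀ v ∈ Y, v ∉ Z) ∧
    (∀ v : V, v ∈ X ↔ v ∈ Y ∨ v ∈ Z) ∧
    ∀ W : Finset V, W ∈ Q ↔ W = Y ∨ W = Z ∨ (W ∈ P ∧ W ≠ X)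

/-- `P 0, P 1, …, P (|V| - 1)` is an uncontraction sequence: it starts with the trivial
partition `{V}`, ends with the partition into singletons, and each partition is obtained
from the previous one by splitting one part into two. -/
def IsUncontractionSeq {V : Type} [Fintype V] (P : ℕ → Finset (Finset V)) : Prop :=
  (∀ i < Fintype.card V, IsPartition (P i)) ∧
  P 0 = {Finset.univ} ∧
  (∀ X ∈ P (Fintype.card V - 1), ∃ v : V, X = {v}) ∧
  ∀ i : ℕ, i + 1 < Fintype.card V → SplitsFrom (P (i + 1)) (P i)

/-- The uncontraction sequence `P` has width at most `d`: in each of its partitioned trigraphs,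
every part has red degree at most `d`. -/
def UncontractionWidthLE {V : Type} [Fintype V] (G : SimpleGraph V)
    (P : ℕ → Finset (Finset V)) (d : ℕ) : Prop :=
  ∀ i < Fintype.card V, ∀ X ∈ P i, redDegree G (P i) X ≤ d

/-- The twin-width of `G` is at most `d`: there is an uncontraction sequence of width at
most `d`. -/
def TwinWidthLE {V : Type} [Fintype V] (G : SimpleGraph V) (d : ℕ) : Prop :=
  ∃ P : ℕ → Finset (Finset V), IsUncontractionSeq P ∧ UncontractionWidthLE G P d

/-- `G` contains no `K_{t,t}` subgraph. -/
def KttFree {V : Type} (G : SimpleGraph V) (t : ℕ) : Prop :=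
  ¬ ∃ A B : Finset V, A.card = t ∧ B.card = t ∧ (∀ a ∈ A, a ∉ B) ∧
      ∀ a ∈ A, ∀ b ∈ B, G.Adj a b

/-- The four parts induce a red path `X₁ X₂ X₃ X₄` in the partitioned trigraph:
the consecutive pairs are joined by red edges and there are no other edges among the parts. -/
def RedPath4 {V : Type} (G : SimpleGraph V) (X₁ X₂ X₃ X₄ : Finset V) : Prop :=
  X₁ ≠ X₂ ∧ X₁ ≠ X₃ ∧ X₁ ≠ X₄ ∧ X₂ ≠ X₃ ∧ X₂ ≠ X₄ ∧ X₃ ≠ X₄ ∧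
  RedAdj G X₁ X₂ ∧ RedAdj G X₂ X₃ ∧ RedAdj G X₃ X₄ ∧
  NoEdgeBetween G X₁ X₃ ∧ NoEdgeBetween G X₁ X₄ ∧ NoEdgeBetween G X₂ X₄

/-- The induced subgraph `G[X₁ ∪ X₂ ∪ X₃ ∪ X₄]` contains `s` pairwise vertex-disjoint
paths starting in `X₁` and ending in `X₄`. -/
def DisjointPathsX1X4 {V : Type} (G : SimpleGraph V) (X₁ X₂ X₃ X₄ : Finset V) (s : ℕ) : Prop :=
  ∃ (a b : Fin s → V) (p : ∀ k : Fin s, G.Walk (a k) (b k)),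
    (∀ k, (p k).IsPath) ∧ (∀ k, a k ∈ X₁) ∧ (∀ k, b k ∈ X₄) ∧
    (∀ k, ∀ v ∈ (p k).support, v ∈ X₁ ∨ v ∈ X₂ ∨ v ∈ X₃ ∨ v ∈ X₄) ∧
    ∀ k k' : Fin s, k ≠ k' → ∀ v, v ∈ (p k).support → v ∉ (p k').support

-- ### auxiliary definitions and lemmas

/-- The set of vertices outside `S` joined completely to `S`. -/
noncomputable def JF {V : Type} [Fintype V] (G : SimpleGraph V) (S : Finset V) : Finset V :=
  @Finset.filter _ (fun x => x ∉ S ∧ ∀ s ∈ S, G.Adj x s) (Classical.decPred _) Finset.univ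

lemma mem_JF {V : Type} [Fintype V] {G : SimpleGraph V} {S : Finset V} {x : V} :
    x ∈ JF G S ↔ x ∉ S ∧ ∀ s ∈ S, G.Adj x s := by
  unfold JF
  rw [@Finset.mem_filter _ _ (Classical.decPred _)]
  simp

lemma JF_mono {V : Type} [Fintype V] {G : SimpleGraph V} {S T : Finset V} (h : T ⊆ S) :
    JF G S ⊆ JF G T := by
  intro x hx
  rw [mem_JF] at hx ⊢
  exact ⟨fun hxT => hx.1 (h hxT), fun s hs => hx.2 s (h hs)⟩

lemma ktt {V : Type} [Fintype V] {t : ℕ} {G : SimpleGraph V} (hfree : KttFree G t)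
    (S : Finset V) (hS : t ≤ S.card) : (JF G S).card < t := by
  by_contra hcon
  push_neg at hcon
  obtain ⟨A, hA, hAcard⟩ := Finset.exists_subset_card_eq hcon
  obtain ⟨B, hB, hBcard⟩ := Finset.exists_subset_card_eq hS
  exact hfree ⟨A, B, hAcard, hBcard,
    fun x hx hxB => (mem_JF.1 (hA hx)).1 (hB hxB),
    fun x hx y hy => (mem_JF.1 (hA hx)).2 y (hB hy)⟩

lemma inj_le {V : Type} {n : ℕ} (sup : Fin n → Set V)
    (hdisj : ∀ k k', k ≠ k' → ∀ x, x ∈ sup k → x ∉ sup k')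
    (F : Finset (Fin n)) (f : Fin n → V) (T : Finset V)
    (hmaps : ∀ k ∈ F, f k ∈ T) (hsup : ∀ k ∈ F, f k ∈ sup k) : F.card ≤ T.card := by
  apply Finset.card_le_card_of_injOn f hmaps
  intro k hk k' hk' he
  by_contra hne
  have h1 : f k ∈ sup k := hsup k (Finset.mem_coe.1 hk)
  have h2 : f k' ∈ sup k' := hsup k' (Finset.mem_coe.1 hk')
  rw [← he] at h2
  exact hdisj k k' hne (f k) h1 h2

lemma three_red {V : Type} (G : SimpleGraph V) (Q' : Finset (Finset V)) (C E Y Z : Finset V)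
    (hEQ : E ∈ Q') (hYQ : Y ∈ Q') (hZQ : Z ∈ Q') (hEY : E ≠ Y) (hEZ : E ≠ Z) (hYZ : Y ≠ Z)
    (hrE : RedAdj G C E) (hrY : RedAdj G C Y) (hrZ : RedAdj G C Z) :
    3 ≤ redDegree G Q' C := by
  classical
  have hsub : ↑({E, Y, Z} : Finset (Finset V)) ⊆ {W : Finset V | W ∈ Q' ∧ RedAdj G C W} := by
    intro W hW
    simp only [Finset.coe_insert, Set.mem_insert_iff, Finset.coe_singleton,
      Set.mem_singleton_iff] at hW
    rcases hW with rfl | rfl | rfl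
    exacts [⟨hEQ, hrE⟩, ⟨hYQ, hrY⟩, ⟨hZQ, hrZ⟩]
  have hfin : {W : Finset V | W ∈ Q' ∧ RedAdj G C W}.Finite :=
    Q'.finite_toSet.subset (fun W hW => hW.1)
  have hcard : ({E, Y, Z} : Finset (Finset V)).card = 3 := by
    rw [Finset.card_insert_of_notMem (by simp [hEY, hEZ]),
      Finset.card_insert_of_notMem (by simp [hYZ]), Finset.card_singleton]
  have h := Set.ncard_le_ncard hsub hfin
  rw [Set.ncard_coe_finset, hcard] at h
  unfold redDegree
  exact h

lemma gen_walk {V : Type} {G : SimpleGraph V} (S : Set V) :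
    ∀ {A B : V} (p : G.Walk A B), A ∈ S → B ∉ S →
    ∃ x y : V, x ∈ S ∧ y ∉ S ∧ G.Adj x y ∧
      (∃ q : G.Walk A x, (∀ z ∈ q.support, z ∈ S) ∧ (∀ z ∈ q.support, z ∈ p.support)) ∧
      y ∈ p.support := by
  intro A B p
  induction p with
  | nil => intro hA hB; exact absurd hA hB
  | @cons A c B h p' ih =>
    intro hA hB
    by_cases hc : c ∈ S
    · obtain ⟨x, y, hx, hy, hxy, ⟨q, hq1, hq2⟩, hyp⟩ := ih hc hB
      refine ⟨x, y, hx, hy, hxy, ⟨SimpleGraph.Walk.cons h q, ?_, ?_⟩, ?_⟩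
      · intro z hz
        rw [SimpleGraph.Walk.support_cons] at hz
        rcases List.mem_cons.1 hz with rfl | hz'
        · exact hA
        · exact hq1 z hz'
      · intro z hz
        rw [SimpleGraph.Walk.support_cons] at hz
        rw [SimpleGraph.Walk.support_cons]
        rcases List.mem_cons.1 hz with rfl | hz'
        · exact List.mem_cons_self
        · exact List.mem_cons_of_mem _ (hq2 z hz')
      · rw [SimpleGraph.Walk.support_cons]
        exact List.mem_cons_of_mem _ hyp
    · refine ⟨A, c, hA, hc, h, ⟨SimpleGraph.Walk.nil, ?_, ?_⟩, ?_⟩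
      · intro z hz
        rw [SimpleGraph.Walk.support_nil] at hz
        rcases List.mem_singleton.1 hz with rfl
        exact hA
      · intro z hz
        rw [SimpleGraph.Walk.support_nil] at hz
        rcases List.mem_singleton.1 hz with rfl
        rw [SimpleGraph.Walk.support_cons]
        exact List.mem_cons_self
      · rw [SimpleGraph.Walk.support_cons]
        exact List.mem_cons_of_mem _ p'.start_mem_support

lemma core_count {V : Type} {t : ℕ}
    (u v us vs : Fin (4*t) → V) (sup : Fin (4*t) → Set V)
    (husup : ∀ k, u k ∈ sup k) (hussup : ∀ k, us k ∈ sup k)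
    (hvsup : ∀ k, v k ∈ sup k) (hvssup : ∀ k, vs k ∈ sup k)
    (hdisj : ∀ k k', k ≠ k' → ∀ x, x ∈ sup k → x ∉ sup k')
    (B C T₂ T₃ : Finset V) (hT₂ : T₂.card < t) (hT₃ : T₃.card < t)
    (hstat : ∀ k, (u k ∈ B ∧ us k ∈ B ∧ v k ∈ C ∧ vs k ∈ C) ∨
      (u k ∈ T₃ ∨ us k ∈ T₃) ∨ (v k ∈ T₂ ∨ vs k ∈ T₂)) :
    ∃ F : Finset (Fin (4*t)),
      (∀ k ∈ F, u k ∈ B ∧ us k ∈ B ∧ v k ∈ C ∧ vs k ∈ C) ∧ 2*t+2 ≤ F.card := by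
  classical
  set A := Finset.univ.filter (fun k => u k ∈ B ∧ us k ∈ B ∧ v k ∈ C ∧ vs k ∈ C) with hA
  set D₃ := Finset.univ.filter (fun k : Fin (4*t) => u k ∈ T₃ ∨ us k ∈ T₃) with hD₃
  set D₂ := Finset.univ.filter (fun k : Fin (4*t) => v k ∈ T₂ ∨ vs k ∈ T₂) with hD₂
  refine ⟨A, fun k hk => (Finset.mem_filter.1 hk).2, ?_⟩
  have hcover : (Finset.univ : Finset (Fin (4*t))) ⊆ A ∪ D₃ ∪ D₂ := by
    intro k _
    rcases hstat k with h | h | h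
    · exact Finset.mem_union_left _ (Finset.mem_union_left _
        (Finset.mem_filter.2 ⟨Finset.mem_univ _, h⟩))
    · exact Finset.mem_union_left _ (Finset.mem_union_right _
        (Finset.mem_filter.2 ⟨Finset.mem_univ _, h⟩))
    · exact Finset.mem_union_right _ (Finset.mem_filter.2 ⟨Finset.mem_univ _, h⟩)
  have h1 : 4*t ≤ (A ∪ D₃ ∪ D₂).card := by
    have h := Finset.card_le_card hcover
    rwa [Finset.card_univ, Fintype.card_fin] at h
  have h2 : (A ∪ D₃ ∪ D₂).card ≤ A.card + D₃.card + D₂.card := by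
    calc (A ∪ D₃ ∪ D₂).card ≤ (A ∪ D₃).card + D₂.card := Finset.card_union_le _ _
    _ ≤ A.card + D₃.card + D₂.card := by
        have := Finset.card_union_le A D₃; omega
  have h3 : D₃.card ≤ T₃.card := by
    apply inj_le sup hdisj D₃ (fun k => if u k ∈ T₃ then u k else us k) T₃
    · intro k hk
      have hk' := (Finset.mem_filter.1 hk).2
      by_cases h : u k ∈ T₃
      · simpa [h]
      · simp only [if_neg h]
        exact hk'.resolve_left h
    · intro k _
      by_cases h : u k ∈ T₃
      · simpa [h] using husup k
      · simp only [if_neg h]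
        exact hussup k
  have h4 : D₂.card ≤ T₂.card := by
    apply inj_le sup hdisj D₂ (fun k => if v k ∈ T₂ then v k else vs k) T₂
    · intro k hk
      have hk' := (Finset.mem_filter.1 hk).2
      by_cases h : v k ∈ T₂
      · simpa [h]
      · simp only [if_neg h]
        exact hk'.resolve_left h
    · intro k _
      by_cases h : v k ∈ T₂
      · simpa [h] using hvsup k
      · simp only [if_neg h]
        exact hvssup k
  omega

lemma not_red_complete {V : Type} [Fintype V] (G : SimpleGraph V)
    (X₂ X₃ : Finset V) (hX23 : ∀ x, x ∈ X₂ → x ∈ X₃ → False)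
    (B C W : Finset V) (hB2 : ∀ x ∈ B, x ∈ X₂) (hC3 : ∀ x ∈ C, x ∈ X₃)
    (hWB : ∀ x ∈ W, x ∈ B) (hnred : ¬ RedAdj G C W)
    (xx yy : V) (hxx : xx ∈ W) (hyy : yy ∈ C) (hadj : G.Adj xx yy) :
    ∀ x' ∈ W, x' ∈ JF G C := by
  intro x' hx'
  have hne : C ≠ W := by
    rintro rfl
    exact hX23 xx (hB2 _ (hWB _ hxx)) (hC3 _ hxx)
  have hcomp : ∀ xc ∈ C, ∀ yw ∈ W, G.Adj xc yw := by
    by_contra hc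
    exact hnred ⟨⟨hne, yy, hyy, xx, hxx, hadj.symm⟩, hc⟩
  rw [mem_JF]
  exact ⟨fun hx'C => hX23 x' (hB2 _ (hWB _ hx')) (hC3 _ hx'C),
    fun s hs => (hcomp s hs x' hx').symm⟩

lemma stepB_core {V : Type} [Fintype V] {t : ℕ} (G : SimpleGraph V)
    (hK : ∀ S : Finset V, t ≤ S.card → (JF G S).card < t)
    (u v us vs : Fin (4*t) → V) (sup : Fin (4*t) → Set V)
    (husup : ∀ k, u k ∈ sup k) (hussup : ∀ k, us k ∈ sup k)
    (hvsup : ∀ k, v k ∈ sup k) (hvssup : ∀ k, vs k ∈ sup k)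
    (hdisj : ∀ k k', k ≠ k' → ∀ x, x ∈ sup k → x ∉ sup k')
    (huv : ∀ k, G.Adj (u k) (v k)) (husvs : ∀ k, G.Adj (us k) (vs k))
    (X₂ X₃ : Finset V) (hX23 : ∀ x, x ∈ X₂ → x ∈ X₃ → False)
    (Q' : Finset (Finset V))
    (B C : Finset V) (hB2 : ∀ x ∈ B, x ∈ X₂) (hC3 : ∀ x ∈ C, x ∈ X₃)
    (hJB : (JF G B).card < t) (hJC : (JF G C).card < t)
    (hstat : ∀ k, (u k ∈ B ∧ us k ∈ B ∧ v k ∈ C ∧ vs k ∈ C) ∨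
      (u k ∈ JF G C ∨ us k ∈ JF G C) ∨ (v k ∈ JF G B ∨ vs k ∈ JF G B))
    (W₁ W₂ : Finset V) (hW₁Q' : W₁ ∈ Q')
    (hnr₂ : ¬ RedAdj G C W₂)
    (hmemB : ∀ x, x ∈ B ↔ x ∈ W₁ ∨ x ∈ W₂) :
    ∃ B', B' ∈ Q' ∧ (∀ x ∈ B', x ∈ X₂) ∧ (JF G B').card < t ∧
      ∀ k, (u k ∈ B' ∧ us k ∈ B' ∧ v k ∈ C ∧ vs k ∈ C) ∨
        (u k ∈ JF G C ∨ us k ∈ JF G C) ∨ (v k ∈ JF G B' ∨ vs k ∈ JF G B') := by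
  classical
  have hW₁B : ∀ x ∈ W₁, x ∈ B := fun x hx => (hmemB x).2 (Or.inl hx)
  have hW₂B : ∀ x ∈ W₂, x ∈ B := fun x hx => (hmemB x).2 (Or.inr hx)
  have hstat' : ∀ k, (u k ∈ W₁ ∧ us k ∈ W₁ ∧ v k ∈ C ∧ vs k ∈ C) ∨
      (u k ∈ JF G C ∨ us k ∈ JF G C) ∨ (v k ∈ JF G B ∨ vs k ∈ JF G B) := by
    intro k
    rcases hstat k with ⟨hk1, hk2, hk3, hk4⟩ | h | h
    · by_cases hu1 : u k ∈ W₁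
      · by_cases hus1 : us k ∈ W₁
        · exact Or.inl ⟨hu1, hus1, hk3, hk4⟩
        · have hus2 : us k ∈ W₂ := ((hmemB _).1 hk2).resolve_left hus1
          exact Or.inr (Or.inl (Or.inr
            (not_red_complete G X₂ X₃ hX23 B C W₂ hB2 hC3 hW₂B hnr₂
              (us k) (vs k) hus2 hk4 (husvs k) _ hus2)))
      · have hu2 : u k ∈ W₂ := ((hmemB _).1 hk1).resolve_left hu1
        exact Or.inr (Or.inl (Or.inl
          (not_red_complete G X₂ X₃ hX23 B C W₂ hB2 hC3 hW₂B hnr₂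
            (u k) (v k) hu2 hk3 (huv k) _ hu2)))
    · exact Or.inr (Or.inl h)
    · exact Or.inr (Or.inr h)
  obtain ⟨F, hFal, hFcard⟩ := core_count u v us vs sup husup hussup hvsup hvssup hdisj
    W₁ C (JF G B) (JF G C) hJB hJC hstat'
  have hW₁card : t ≤ W₁.card := by
    have h := inj_le sup hdisj F u W₁ (fun k hk => (hFal k hk).1) (fun k _ => husup k)
    omega
  have hJW₁ : (JF G W₁).card < t := hK _ hW₁card
  have hmono : JF G B ⊆ JF G W₁ := JF_mono (fun x hx => hW₁B x hx)
  refine ⟨W₁, hW₁Q', fun x hx => hB2 _ (hW₁B _ hx), hJW₁, fun k => ?_⟩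
  rcases hstat' k with h | h | h
  · exact Or.inl h
  · exact Or.inr (Or.inl h)
  · exact Or.inr (Or.inr (h.imp (fun hh => hmono hh) (fun hh => hmono hh)))

lemma stepB {V : Type} [Fintype V] {t : ℕ} (G : SimpleGraph V)
    (hK : ∀ S : Finset V, t ≤ S.card → (JF G S).card < t)
    (u v us vs : Fin (4*t) → V) (sup : Fin (4*t) → Set V)
    (husup : ∀ k, u k ∈ sup k) (hussup : ∀ k, us k ∈ sup k)
    (hvsup : ∀ k, v k ∈ sup k) (hvssup : ∀ k, vs k ∈ sup k)
    (hdisj : ∀ k k', k ≠ k' → ∀ x, x ∈ sup k → x ∉ sup k')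
    (huv : ∀ k, G.Adj (u k) (v k)) (husvs : ∀ k, G.Adj (us k) (vs k))
    (X₂ X₃ : Finset V) (hX23 : ∀ x, x ∈ X₂ → x ∈ X₃ → False)
    (hexit : ∀ (Cf : Finset V), (∀ x ∈ Cf, x ∈ X₃) → ∀ k, vs k ∈ Cf →
      ∃ w, w ∉ Cf ∧ w ∈ sup k ∧ (∃ c ∈ Cf, G.Adj c w) ∧ w ∉ X₂)
    (Q' : Finset (Finset V)) (hpart' : IsPartition Q')
    (hwidth' : ∀ X ∈ Q', redDegree G Q' X ≤ 2)
    (B C : Finset V) (hB2 : ∀ x ∈ B, x ∈ X₂) (hC3 : ∀ x ∈ C, x ∈ X₃)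
    (hCQ' : C ∈ Q') (hJB : (JF G B).card < t) (hJC : (JF G C).card < t)
    (hstat : ∀ k, (u k ∈ B ∧ us k ∈ B ∧ v k ∈ C ∧ vs k ∈ C) ∨
      (u k ∈ JF G C ∨ us k ∈ JF G C) ∨ (v k ∈ JF G B ∨ vs k ∈ JF G B))
    (Y Z : Finset V) (hYQ' : Y ∈ Q') (hZQ' : Z ∈ Q')
    (hYZB : ∀ x, x ∈ B ↔ x ∈ Y ∨ x ∈ Z) (hYZd : ∀ x ∈ Y, x ∉ Z)
    (hYne : Y.Nonempty) :
    ∃ B', B' ∈ Q' ∧ (∀ x ∈ B', x ∈ X₂) ∧ (JF G B').card < t ∧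
      ∀ k, (u k ∈ B' ∧ us k ∈ B' ∧ v k ∈ C ∧ vs k ∈ C) ∨
        (u k ∈ JF G C ∨ us k ∈ JF G C) ∨ (v k ∈ JF G B' ∨ vs k ∈ JF G B') := by
  classical
  obtain ⟨F, hFal, hFcard⟩ := core_count u v us vs sup husup hussup hvsup hvssup hdisj
    B C (JF G B) (JF G C) hJB hJC hstat
  -- choose an exit vertex for each alive path
  have hwdef : ∀ k, vs k ∈ C → ∃ w, w ∉ C ∧ w ∈ sup k ∧ (∃ c ∈ C, G.Adj c w) ∧ w ∉ X₂ :=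
    hexit C hC3
  set wfun : Fin (4*t) → V :=
    fun k => if h : vs k ∈ C then (hwdef k h).choose else u k with hwfun
  have hwspec : ∀ (k : Fin (4*t)) (h : vs k ∈ C),
      wfun k ∉ C ∧ wfun k ∈ sup k ∧ (∃ c ∈ C, G.Adj c (wfun k)) ∧ wfun k ∉ X₂ := by
    intro k h
    rw [hwfun]
    simp only [dif_pos h]
    exact (hwdef k h).choose_spec
  -- some alive path exits `C` through a part that is not completely joined to `C`
  have hex : ∃ k ∈ F, wfun k ∉ JF G C := by
    by_contra hcon
    push_neg at hcon
    have hle : F.card ≤ (JF G C).card :=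
      inj_le sup hdisj F wfun (JF G C) hcon
        (fun k hk => (hwspec k (hFal k hk).2.2.2).2.1)
    omega
  obtain ⟨k₁, hk₁F, hk₁⟩ := hex
  obtain ⟨hw1, hw2, ⟨c₁, hc₁, hadj₁⟩, hw4⟩ := hwspec k₁ (hFal k₁ hk₁F).2.2.2
  obtain ⟨E, ⟨hEQ', hwE⟩, -⟩ := hpart'.2 (wfun k₁)
  have hredCE : RedAdj G C E := by
    constructor
    · exact ⟨fun he => hw1 (by rw [he]; exact hwE), c₁, hc₁, wfun k₁, hwE, hadj₁⟩
    · intro hall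
      apply hk₁
      rw [mem_JF]
      exact ⟨hw1, fun s hs => (hall s hs _ hwE).symm⟩
  have hEY : E ≠ Y := by
    rintro rfl
    exact hw4 (hB2 _ ((hYZB _).2 (Or.inl hwE)))
  have hEZ : E ≠ Z := by
    rintro rfl
    exact hw4 (hB2 _ ((hYZB _).2 (Or.inr hwE)))
  have hYneZ : Y ≠ Z := by
    rintro rfl
    obtain ⟨y, hy⟩ := hYne
    exact hYZd y hy hy
  have hnotboth : ¬ (RedAdj G C Y ∧ RedAdj G C Z) := by
    rintro ⟨hrY, hrZ⟩
    have h3 : 3 ≤ redDegree G Q' C :=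
      three_red G Q' C E Y Z hEQ' hYQ' hZQ' hEY hEZ hYneZ hredCE hrY hrZ
    have h2' := hwidth' C hCQ'
    omega
  have hsome : RedAdj G C Y ∨ RedAdj G C Z := by
    by_contra hcon
    push_neg at hcon
    obtain ⟨hnY, hnZ⟩ := hcon
    have hjf : ∀ k ∈ F, u k ∈ JF G C := by
      intro k hk
      obtain ⟨hk1, hk2, hk3, hk4⟩ := hFal k hk
      rcases (hYZB _).1 hk1 with hY' | hZ'
      · exact not_red_complete G X₂ X₃ hX23 B C Y hB2 hC3
          (fun x hx => (hYZB x).2 (Or.inl hx)) hnY (u k) (v k) hY' hk3 (huv k) _ hY'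
      · exact not_red_complete G X₂ X₃ hX23 B C Z hB2 hC3
          (fun x hx => (hYZB x).2 (Or.inr hx)) hnZ (u k) (v k) hZ' hk3 (huv k) _ hZ'
    have hle : F.card ≤ (JF G C).card :=
      inj_le sup hdisj F u _ hjf (fun k _ => husup k)
    omega
  rcases hsome with hrY | hrZ
  · have hnZ : ¬ RedAdj G C Z := fun h => hnotboth ⟨hrY, h⟩
    exact stepB_core G hK u v us vs sup husup hussup hvsup hvssup hdisj huv husvs
      X₂ X₃ hX23 Q' B C hB2 hC3 hJB hJC hstat Y Z hYQ' hnZ hYZB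
  · have hnY : ¬ RedAdj G C Y := fun h => hnotboth ⟨h, hrZ⟩
    exact stepB_core G hK u v us vs sup husup hussup hvsup hvssup hdisj huv husvs
      X₂ X₃ hX23 Q' B C hB2 hC3 hJB hJC hstat Z Y hZQ' hnY
      (fun x => (hYZB x).trans or_comm)

/-- Step II. If `G` has no `K_{t,t}` subgraph and at some step `m` of an
uncontraction sequence there are parts `X₁, X₂, X₃, X₄` inducing a red path in this order,
with no edge between `X₁` and `X₄`, such that `G[X₁ ∪ X₂ ∪ X₃ ∪ X₄]` contains at least
`4 * t` pairwise vertex-disjoint paths from `X₁` to `X₄`, then the width of the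
uncontraction sequence is greater than `2`. -/
theorem step_two (t : ℕ) (ht : 1 ≤ t) {V : Type} [Fintype V] (G : SimpleGraph V)
    (hfree : KttFree G t)
    (P : ℕ → Finset (Finset V)) (hseq : IsUncontractionSeq P)
    (m : ℕ) (hm : m < Fintype.card V) (X₁ X₂ X₃ X₄ : Finset V)
    (h1 : X₁ ∈ P m) (h2 : X₂ ∈ P m) (h3 : X₃ ∈ P m) (h4 : X₄ ∈ P m)
    (hred : RedPath4 G X₁ X₂ X₃ X₄) (hno : NoEdgeBetween G X₁ X₄)
    (hpaths : DisjointPathsX1X4 G X₁ X₂ X₃ X₄ (4 * t)) :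
    ¬ UncontractionWidthLE G P 2 := by
  intro hW
  classical
  obtain ⟨hparts, hP0, hsing, hsplits⟩ := hseq
  obtain ⟨h12, h13, h14, h23, h24, h34, hr12, hr23, hr34, hne13, hne14, hne24⟩ := hred
  -- disjointness of the four parts
  have hPdisj : ∀ W W' : Finset V, W ∈ P m → W' ∈ P m → W ≠ W' →
      ∀ x, x ∈ W → x ∈ W' → False := by
    intro W W' hWm hW'm hne x hxW hxW'
    obtain ⟨U, -, hUuniq⟩ := (hparts m hm).2 x
    exact hne ((hUuniq W ⟨hWm, hxW⟩).trans (hUuniq W' ⟨hW'm, hxW'⟩).symm)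
  have d12 : ∀ x, x ∈ X₁ → x ∈ X₂ → False := hPdisj X₁ X₂ h1 h2 h12
  have d13 : ∀ x, x ∈ X₁ → x ∈ X₃ → False := hPdisj X₁ X₃ h1 h3 h13
  have d14 : ∀ x, x ∈ X₁ → x ∈ X₄ → False := hPdisj X₁ X₄ h1 h4 h14
  have d23 : ∀ x, x ∈ X₂ → x ∈ X₃ → False := hPdisj X₂ X₃ h2 h3 h23
  have d24 : ∀ x, x ∈ X₂ → x ∈ X₄ → False := hPdisj X₂ X₄ h2 h4 h24
  have d34 : ∀ x, x ∈ X₃ → x ∈ X₄ → False := hPdisj X₃ X₄ h3 h4 h34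
  obtain ⟨a, b, p, hpath, ha1, hb4, hsupmem, hdisjp⟩ := hpaths
  -- extract crossings and connector walks from each path
  have hextract : ∀ k, ∃ (uu vv uus vvs : V) (q : G.Walk (a k) uu) (r : G.Walk vvs (b k)),
      uu ∈ X₂ ∧ vv ∈ X₃ ∧ uus ∈ X₂ ∧ vvs ∈ X₃ ∧ G.Adj uu vv ∧ G.Adj uus vvs ∧
      vv ∈ (p k).support ∧ uus ∈ (p k).support ∧
      (∀ z ∈ q.support, (z ∈ X₁ ∨ z ∈ X₂) ∧ z ∈ (p k).support) ∧
      (∀ z ∈ r.support, (z ∈ X₃ ∨ z ∈ X₄) ∧ z ∈ (p k).support) := by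
    intro k
    have hstart : a k ∈ ({x | x ∈ X₁ ∨ x ∈ X₂} : Set V) := Or.inl (ha1 k)
    have hend : (b k) ∉ ({x | x ∈ X₁ ∨ x ∈ X₂} : Set V) := by
      intro hcon
      rcases hcon with h | h
      · exact d14 _ h (hb4 k)
      · exact d24 _ h (hb4 k)
    obtain ⟨x₀, y₀, hx₀, hy₀, hxy₀, ⟨q₀, hq₀1, hq₀2⟩, hy₀p⟩ := gen_walk _ (p k) hstart hend
    have hy₀' : y₀ ∈ X₃ ∨ y₀ ∈ X₄ := by
      rcases hsupmem k y₀ hy₀p with h | h | h | h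
      · exact absurd (Or.inl h) hy₀
      · exact absurd (Or.inr h) hy₀
      · exact Or.inl h
      · exact Or.inr h
    have hx₀2 : x₀ ∈ X₂ := by
      rcases hx₀ with h | h
      · exfalso
        rcases hy₀' with h3 | h4
        · exact hne13 _ h _ h3 hxy₀
        · exact hne14 _ h _ h4 hxy₀
      · exact h
    have hy₀3 : y₀ ∈ X₃ := by
      rcases hy₀' with h3 | h4
      · exact h3
      · exact absurd hxy₀ (hne24 _ hx₀2 _ h4)
    have hstart' : b k ∈ ({x | x ∈ X₃ ∨ x ∈ X₄} : Set V) := Or.inr (hb4 k)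
    have hend' : a k ∉ ({x | x ∈ X₃ ∨ x ∈ X₄} : Set V) := by
      intro hcon
      rcases hcon with h | h
      · exact d13 _ (ha1 k) h
      · exact d14 _ (ha1 k) h
    obtain ⟨x₁, y₁, hx₁, hy₁, hxy₁, ⟨q₁, hq₁1, hq₁2⟩, hy₁p⟩ :=
      gen_walk _ (p k).reverse hstart' hend'
    have hy₁mem : y₁ ∈ (p k).support := by
      rwa [SimpleGraph.Walk.support_reverse, List.mem_reverse] at hy₁p
    have hy₁' : y₁ ∈ X₁ ∨ y₁ ∈ X₂ := by
      rcases hsupmem k y₁ hy₁mem with h | h | h | h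
      · exact Or.inl h
      · exact Or.inr h
      · exact absurd (Or.inl h) hy₁
      · exact absurd (Or.inr h) hy₁
    have hy₁2 : y₁ ∈ X₂ := by
      rcases hy₁' with h | h
      · exfalso
        rcases hx₁ with h3 | h4
        · exact hne13 _ h _ h3 hxy₁.symm
        · exact hne14 _ h _ h4 hxy₁.symm
      · exact h
    have hx₁3 : x₁ ∈ X₃ := by
      rcases hx₁ with h3 | h4
      · exact h3
      · exact absurd hxy₁.symm (hne24 _ hy₁2 _ h4)
    refine ⟨x₀, y₀, y₁, x₁, q₀, q₁.reverse, hx₀2, hy₀3, hy₁2, hx₁3, hxy₀, hxy₁.symm,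
      hy₀p, hy₁mem, ?_, ?_⟩
    · intro z hz
      exact ⟨hq₀1 z hz, hq₀2 z hz⟩
    · intro z hz
      rw [SimpleGraph.Walk.support_reverse, List.mem_reverse] at hz
      refine ⟨hq₁1 z hz, ?_⟩
      have h := hq₁2 z hz
      rwa [SimpleGraph.Walk.support_reverse, List.mem_reverse] at h
  choose uF vF usF vsF qF rF hX2u hX3v hX2us hX3vs hadjuv hadjusvs hvmem husmem hqprop hrprop
    using hextract
  set sup : Fin (4*t) → Set V := fun k => {x | x ∈ (p k).support} with hsup
  have husup : ∀ k, uF k ∈ sup k := fun k => (hqprop k _ (qF k).end_mem_support).2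
  have hussup : ∀ k, usF k ∈ sup k := fun k => husmem k
  have hvsup : ∀ k, vF k ∈ sup k := fun k => hvmem k
  have hvssup : ∀ k, vsF k ∈ sup k := fun k => (hrprop k _ (rF k).start_mem_support).2
  have hdisjsup : ∀ k k', k ≠ k' → ∀ x, x ∈ sup k → x ∉ sup k' :=
    fun k k' hne x hx => hdisjp k k' hne x hx
  have hK : ∀ S : Finset V, t ≤ S.card → (JF G S).card < t := fun S h => ktt hfree S h
  -- exit and entry tools
  have hexit : ∀ (Cf : Finset V), (∀ x ∈ Cf, x ∈ X₃) → ∀ k, vsF k ∈ Cf →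
      ∃ w, w ∉ Cf ∧ w ∈ sup k ∧ (∃ c ∈ Cf, G.Adj c w) ∧ w ∉ X₂ := by
    intro Cf hCf k hvs
    have hstart : vsF k ∈ (↑Cf : Set V) := hvs
    have hend : b k ∉ (↑Cf : Set V) := fun hcon => d34 _ (hCf _ hcon) (hb4 k)
    obtain ⟨x', y', hx', hy', hxy', ⟨q', hq'1, hq'2⟩, hy'r⟩ :=
      gen_walk (↑Cf : Set V) (rF k) hstart hend
    have hy'p : y' ∈ sup k := (hrprop k y' hy'r).2
    have hy'34 : y' ∈ X₃ ∨ y' ∈ X₄ := (hrprop k y' hy'r).1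
    refine ⟨y', hy', hy'p, ⟨x', hx', hxy'⟩, ?_⟩
    intro hy2
    rcases hy'34 with h | h
    · exact d23 _ hy2 h
    · exact d24 _ hy2 h
  have hentry : ∀ (Bf : Finset V), (∀ x ∈ Bf, x ∈ X₂) → ∀ k, uF k ∈ Bf →
      ∃ w, w ∉ Bf ∧ w ∈ sup k ∧ (∃ c ∈ Bf, G.Adj c w) ∧ w ∉ X₃ := by
    intro Bf hBf k hu
    have hstart : a k ∈ ({x | x ∉ Bf} : Set V) := fun hcon => d12 _ (ha1 k) (hBf _ hcon)
    have hend : uF k ∉ ({x | x ∉ Bf} : Set V) := fun hcon => hcon hu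
    obtain ⟨x', y', hx', hy', hxy', ⟨q', hq'1, hq'2⟩, -⟩ := gen_walk _ (qF k) hstart hend
    have hx'q : x' ∈ (qF k).support := hq'2 _ q'.end_mem_support
    have hx'p : x' ∈ sup k := (hqprop k x' hx'q).2
    have hx'12 : x' ∈ X₁ ∨ x' ∈ X₂ := (hqprop k x' hx'q).1
    have hy'B : y' ∈ Bf := not_not.1 hy'
    refine ⟨x', hx', hx'p, ⟨y', hy'B, hxy'.symm⟩, ?_⟩
    intro h3
    rcases hx'12 with h | h
    · exact d13 _ h h3
    · exact d23 _ h h3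
  -- the invariant
  let Inv : ℕ → Prop := fun i => ∃ Bc Cc : Finset V, Bc ∈ P i ∧ Cc ∈ P i ∧
    (∀ x ∈ Bc, x ∈ X₂) ∧ (∀ x ∈ Cc, x ∈ X₃) ∧
    (JF G Bc).card < t ∧ (JF G Cc).card < t ∧
    ∀ k, (uF k ∈ Bc ∧ usF k ∈ Bc ∧ vF k ∈ Cc ∧ vsF k ∈ Cc) ∨
      (uF k ∈ JF G Cc ∨ usF k ∈ JF G Cc) ∨ (vF k ∈ JF G Bc ∨ vsF k ∈ JF G Bc)
  have hX2card : t ≤ X₂.card := by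
    have h := inj_le sup hdisjsup Finset.univ uF X₂ (fun k _ => hX2u k) (fun k _ => husup k)
    rw [Finset.card_univ, Fintype.card_fin] at h
    omega
  have hX3card : t ≤ X₃.card := by
    have h := inj_le sup hdisjsup Finset.univ vF X₃ (fun k _ => hX3v k) (fun k _ => hvsup k)
    rw [Finset.card_univ, Fintype.card_fin] at h
    omega
  have hbase : Inv m := ⟨X₂, X₃, h2, h3, fun x h => h, fun x h => h,
    hK _ hX2card, hK _ hX3card, fun k => Or.inl ⟨hX2u k, hX2us k, hX3v k, hX3vs k⟩⟩
  have key : ∀ j, m ≤ j → j < Fintype.card V → Inv j := by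
    intro j hj
    induction j, hj using Nat.le_induction with
    | base => intro _; exact hbase
    | succ j hmj ih =>
      intro hj1
      have hjlt : j < Fintype.card V := by omega
      obtain ⟨Bc, Cc, hBP, hCP, hB2, hC3, hJB, hJC, hstat⟩ := ih hjlt
      obtain ⟨S, Y, Z, hSP, hYne, hZne, hYZd, hiff, hmem⟩ := hsplits j hj1
      have hpart' := hparts (j+1) hj1
      have hwidth' : ∀ X ∈ P (j+1), redDegree G (P (j+1)) X ≤ 2 :=
        fun X hX => hW (j+1) hj1 X hX
      have hBCne : Bc ≠ Cc := by
        intro he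
        obtain ⟨x, hx⟩ := (hparts j hjlt).1 Bc hBP
        exact d23 x (hB2 _ hx) (hC3 _ (he ▸ hx))
      by_cases hSB : S = Bc
      · subst hSB
        have hCQ' : Cc ∈ P (j+1) := (hmem Cc).2 (Or.inr (Or.inr ⟨hCP, hBCne.symm⟩))
        obtain ⟨B', hB'Q', hB'2, hJB', hstat'⟩ := stepB G hK uF vF usF vsF sup
          husup hussup hvsup hvssup hdisjsup hadjuv hadjusvs X₂ X₃ d23 hexit
          (P (j+1)) hpart' hwidth' S Cc hB2 hC3 hCQ' hJB hJC hstat Y Z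
          ((hmem Y).2 (Or.inl rfl)) ((hmem Z).2 (Or.inr (Or.inl rfl))) hiff hYZd hYne
        exact ⟨B', Cc, hB'Q', hCQ', hB'2, hC3, hJB', hJC, hstat'⟩
      · by_cases hSC : S = Cc
        · subst hSC
          have hBQ' : Bc ∈ P (j+1) := (hmem Bc).2 (Or.inr (Or.inr ⟨hBP, hBCne⟩))
          have hstatsw : ∀ k, (vsF k ∈ S ∧ vF k ∈ S ∧ usF k ∈ Bc ∧ uF k ∈ Bc) ∨
              (vsF k ∈ JF G Bc ∨ vF k ∈ JF G Bc) ∨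
              (usF k ∈ JF G S ∨ uF k ∈ JF G S) := by
            intro k
            rcases hstat k with ⟨g1, g2, g3, g4⟩ | h | h
            · exact Or.inl ⟨g4, g3, g2, g1⟩
            · exact Or.inr (Or.inr h.symm)
            · exact Or.inr (Or.inl h.symm)
          obtain ⟨C', hC'Q', hC'3, hJC', hstat'⟩ := stepB G hK vsF usF vF uF sup
            hvssup hvsup hussup husup hdisjsup
            (fun k => (hadjusvs k).symm) (fun k => (hadjuv k).symm)
            X₃ X₂ (fun x ha hb => d23 x hb ha) hentry
            (P (j+1)) hpart' hwidth' S Bc hC3 hB2 hBQ' hJC hJB hstatsw Y Z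
            ((hmem Y).2 (Or.inl rfl)) ((hmem Z).2 (Or.inr (Or.inl rfl))) hiff hYZd hYne
          refine ⟨Bc, C', hBQ', hC'Q', hB2, hC'3, hJB, hJC', fun k => ?_⟩
          rcases hstat' k with ⟨g1, g2, g3, g4⟩ | h | h
          · exact Or.inl ⟨g4, g3, g2, g1⟩
          · exact Or.inr (Or.inr h.symm)
          · exact Or.inr (Or.inl h.symm)
        · have hBQ' : Bc ∈ P (j+1) :=
            (hmem Bc).2 (Or.inr (Or.inr ⟨hBP, fun he => hSB he.symm⟩))
          have hCQ' : Cc ∈ P (j+1) :=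
            (hmem Cc).2 (Or.inr (Or.inr ⟨hCP, fun he => hSC he.symm⟩))
          exact ⟨Bc, Cc, hBQ', hCQ', hB2, hC3, hJB, hJC, hstat⟩
  -- final contradiction at the singleton stage
  have hfin : Inv (Fintype.card V - 1) := key _ (by omega) (by omega)
  obtain ⟨Bc, Cc, hBP, hCP, hB2, hC3, hJB, hJC, hstat⟩ := hfin
  obtain ⟨x, hxB⟩ := hsing Bc hBP
  obtain ⟨F, hFal, hFcard⟩ := core_count uF vF usF vsF sup husup hussup hvsup hvssup hdisjsup
    Bc Cc (JF G Bc) (JF G Cc) hJB hJC hstat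
  have hle : F.card ≤ Bc.card :=
    inj_le sup hdisjsup F uF Bc (fun k hk => (hFal k hk).1) (fun k _ => husup k)
  rw [hxB, Finset.card_singleton] at hle
  omega
end

section
/- For every positive integer N, any subdivision of the (2N+2)×(2N+2) wall contains an N×N cubic mesh as a subgraph. -/
/-- `G` contains an `N × N` cubic mesh as a (not necessarily induced) subgraph:
there are `N` pairwise vertex-disjoint paths (rows) and `N` pairwise vertex-disjoint paths
(columns), the ends of rows avoid all columns and vice versa, the union of all these paths
has maximum degree at most `3`, and every row intersects every column in precisely one
common subpath of nonzero length. -/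
def HasCubicMesh {V : Type} (G : SimpleGraph V) (N : ℕ) : Prop :=
  ∃ (ra rb ca cb : Fin N → V)
    (rows : ∀ i : Fin N, G.Walk (ra i) (rb i))
    (cols : ∀ j : Fin N, G.Walk (ca j) (cb j)),
    (∀ i, (rows i).IsPath) ∧ (∀ j, (cols j).IsPath) ∧
    (∀ i i' : Fin N, i ≠ i' → ∀ v, v ∈ (rows i).support → v ∉ (rows i').support) ∧
    (∀ j j' : Fin N, j ≠ j' → ∀ v, v ∈ (cols j).support → v ∉ (cols j').support) ∧
    (∀ i j, ra i ∉ (cols j).support ∧ rb i ∉ (cols j).support) ∧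
    (∀ i j, ca j ∉ (rows i).support ∧ cb j ∉ (rows i).support) ∧
    (∀ v : V,
      {u : V | (∃ i, s(v, u) ∈ (rows i).edges) ∨ ∃ j, s(v, u) ∈ (cols j).edges}.ncard ≤ 3) ∧
    ∀ i j, ∃ (x y : V) (q : G.Walk x y), q.IsPath ∧ 0 < q.length ∧
      (∀ e ∈ q.edges, e ∈ (rows i).edges) ∧ (∀ e ∈ q.edges, e ∈ (cols j).edges) ∧
      ∀ v : V, (v ∈ (rows i).support ∧ v ∈ (cols j).support) ↔ v ∈ q.support

/-- The `N × N` wall: vertex `(i, j)` is the `j`-th vertex of the `i`-th horizontal path;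
vertical edges `(i, j) - (i+1, j)` are present when `i` and `j` have the same parity. -/
def wallGraph (N : ℕ) : SimpleGraph (Fin N × Fin N) :=
  SimpleGraph.fromRel fun p q =>
    (p.1 = q.1 ∧ (p.2 : ℕ) + 1 = (q.2 : ℕ)) ∨
    (p.2 = q.2 ∧ (p.1 : ℕ) + 1 = (q.1 : ℕ) ∧ (p.1 : ℕ) % 2 = (p.2 : ℕ) % 2)

/-- `S` is a subdivision of `H`: branch vertices are given by an injection `f`, every edge
of `H` is replaced by a path of length at least one between the corresponding branch
vertices, these paths are internally disjoint from each other and from the branch vertices,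
and `S` has no other edges. -/
def IsSubdivision {U W : Type} (H : SimpleGraph U) (S : SimpleGraph W) : Prop :=
  ∃ f : U → W, Function.Injective f ∧
    ∃ P : ∀ ⦃u v : U⦄, H.Adj u v → S.Walk (f u) (f v),
      (∀ (u v : U) (h : H.Adj u v), (P h).IsPath ∧ 0 < (P h).length) ∧
      (∀ (u v : U) (h : H.Adj u v), P h.symm = (P h).reverse) ∧
      (∀ (u v : U) (h : H.Adj u v), ∀ w ∈ (P h).support,
        w ≠ f u → w ≠ f v → ∀ x : U, w ≠ f x) ∧
      (∀ (u v : U) (h : H.Adj u v) (u' v' : U) (h' : H.Adj u' v'),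
        s(u, v) ≠ s(u', v') → ∀ w : W, w ∈ (P h).support → w ∈ (P h').support →
          (w = f u ∨ w = f v) ∧ (w = f u' ∨ w = f v')) ∧
      ∀ a b : W, S.Adj a b ↔ ∃ (u v : U) (h : H.Adj u v), s(a, b) ∈ (P h).edges


open SimpleGraph Walk

section WalkLemmas
variable {V : Type} {G : SimpleGraph V}

lemma not_nil_of_mem_edges {a b : V} {p : G.Walk a b} {e} (he : e ∈ p.edges) : ¬ p.Nil := by
  cases p with
  | nil => simp at he
  | cons h q => simp

lemma eq_getVert_one_of_start_edge {a b u : V} {p : G.Walk a b} (hp : p.IsPath)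
    (he : s(a, u) ∈ p.edges) : u = p.getVert 1 := by
  cases p with
  | nil => simp at he
  | cons h q =>
    rw [Walk.edges_cons, List.mem_cons] at he
    rcases he with he | he
    · rcases Sym2.eq_iff.mp he with ⟨-, rfl⟩ | ⟨h1, rfl⟩
      · rw [Walk.getVert_cons_succ, Walk.getVert_zero]
      · exact absurd h1 h.ne
    · exact absurd (q.fst_mem_support_of_mem_edges he)
        ((Walk.cons_isPath_iff _ _).mp hp).2

lemma nbrs_finite {a b : V} (p : G.Walk a b) (v : V) :
    {u | s(v, u) ∈ p.edges}.Finite :=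
  Set.Finite.subset p.support.finite_toSet
    (fun _ hu => p.snd_mem_support_of_mem_edges hu)

lemma ncard_path_nbrs {a b : V} {p : G.Walk a b} (hp : p.IsPath) (v : V) :
    {u | s(v, u) ∈ p.edges}.ncard ≤ 2 := by
  induction p with
  | nil => simp
  | @cons a c b h q ih =>
    have hq : q.IsPath := ((Walk.cons_isPath_iff _ _).mp hp).1
    by_cases hva : v = a
    · subst hva
      have hsub : {u | s(v, u) ∈ (Walk.cons h q).edges} ⊆ {c} := by
        intro u hu
        rcases List.mem_cons.mp hu with he | he
        · rcases Sym2.eq_iff.mp he with ⟨-, rfl⟩ | ⟨h1, -⟩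
          · rfl
          · exact absurd h1 h.ne
        · exact absurd (q.fst_mem_support_of_mem_edges he)
            ((Walk.cons_isPath_iff _ _).mp hp).2
      calc _ ≤ ({c} : Set V).ncard := Set.ncard_le_ncard hsub (Set.finite_singleton c)
        _ ≤ 2 := by simp
    · by_cases hvc : v = c
      · subst hvc
        have hsub : {u | s(v, u) ∈ (Walk.cons h q).edges} ⊆ {a, q.getVert 1} := by
          intro u hu
          rcases List.mem_cons.mp hu with he | he
          · rcases Sym2.eq_iff.mp he with ⟨h1, -⟩ | ⟨-, rfl⟩
            · exact absurd h1.symm h.ne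
            · exact Or.inl rfl
          · exact Or.inr (eq_getVert_one_of_start_edge hq he)
        calc _ ≤ ({a, q.getVert 1} : Set V).ncard :=
              Set.ncard_le_ncard hsub (Set.toFinite _)
          _ ≤ 2 := by
              refine le_trans (Set.ncard_insert_le _ _) ?_
              simp
      · have hsub : {u | s(v, u) ∈ (Walk.cons h q).edges} ⊆ {u | s(v, u) ∈ q.edges} := by
          intro u hu
          rcases List.mem_cons.mp hu with he | he
          · rcases Sym2.eq_iff.mp he with ⟨h1, -⟩ | ⟨h1, -⟩
            · exact absurd h1 hva
            · exact absurd h1 hvc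
          · exact he
        exact le_trans (Set.ncard_le_ncard hsub (nbrs_finite q v)) (ih hq)

lemma isPath_append' {a b c : V} {p : G.Walk a b} {q : G.Walk b c}
    (hp : p.IsPath) (hq : q.IsPath) (hmeet : ∀ x, x ∈ p.support → x ∈ q.support → x = b) :
    (p.append q).IsPath := by
  rw [Walk.isPath_def, Walk.support_append]
  refine List.Nodup.append (Walk.isPath_def _ |>.mp hp) ((Walk.isPath_def _ |>.mp hq).tail) ?_
  intro x hx hx'
  have hxb : x = b := hmeet x hx (List.mem_of_mem_tail hx')
  subst hxb
  have := (Walk.isPath_def _ |>.mp hq)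
  rw [q.support_eq_cons] at this
  exact (List.nodup_cons.mp this).1 hx'

end WalkLemmas

section Lift
variable {U W : Type} {H : SimpleGraph U} {S : SimpleGraph W} {f : U → W}

def liftWalk (P : ∀ ⦃u v : U⦄, H.Adj u v → S.Walk (f u) (f v)) :
    ∀ {u v : U}, H.Walk u v → S.Walk (f u) (f v)
  | _, _, .nil => .nil
  | _, _, .cons h p => (P h).append (liftWalk P p)

variable {P : ∀ ⦃u v : U⦄, H.Adj u v → S.Walk (f u) (f v)}
variable (hrev : ∀ (u v : U) (h : H.Adj u v), P h.symm = (P h).reverse)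

include hrev in
lemma mem_edges_P_congr {a b x y : U} (h : H.Adj a b) (h' : H.Adj x y)
    (he : s(a, b) = s(x, y)) {e} : e ∈ (P h').edges ↔ e ∈ (P h).edges := by
  rcases Sym2.eq_iff.mp he with ⟨rfl, rfl⟩ | ⟨rfl, rfl⟩
  · rfl
  · have hh : P h' = (P h).reverse := hrev _ _ h
    rw [hh, Walk.edges_reverse, List.mem_reverse]

include hrev in
lemma mem_support_P_congr {a b x y : U} (h : H.Adj a b) (h' : H.Adj x y)
    (he : s(a, b) = s(x, y)) {z} : z ∈ (P h').support ↔ z ∈ (P h).support := by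
  rcases Sym2.eq_iff.mp he with ⟨rfl, rfl⟩ | ⟨rfl, rfl⟩
  · rfl
  · have hh : P h' = (P h).reverse := hrev _ _ h
    rw [hh, Walk.support_reverse, List.mem_reverse]

include hrev in
lemma mem_edges_liftWalk {u v : U} (w : H.Walk u v) (e) :
    e ∈ (liftWalk P w).edges ↔
      ∃ (a b : U) (h : H.Adj a b), s(a, b) ∈ w.edges ∧ e ∈ (P h).edges := by
  induction w with
  | nil => simp [liftWalk]
  | @cons u m v h p ih =>
    rw [liftWalk, Walk.edges_append, List.mem_append, ih]
    constructor
    · rintro (he | ⟨a, b, h', hw, he⟩)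
      · exact ⟨u, m, h, by simp, he⟩
      · exact ⟨a, b, h', by simp [hw], he⟩
    · rintro ⟨a, b, h', hw, he⟩
      rcases List.mem_cons.mp hw with heq | hw
      · exact Or.inl ((mem_edges_P_congr hrev h h' heq.symm).mp he)
      · exact Or.inr ⟨a, b, h', hw, he⟩

include hrev in
lemma mem_support_liftWalk {u v : U} {w : H.Walk u v} (hw : ¬w.Nil) (x : W) :
    x ∈ (liftWalk P w).support ↔
      ∃ (a b : U) (h : H.Adj a b), s(a, b) ∈ w.edges ∧ x ∈ (P h).support := by
  induction w with
  | nil => exact absurd Walk.Nil.nil hw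
  | @cons u m v h p ih =>
    rw [liftWalk, Walk.mem_support_append_iff]
    cases p with
    | nil =>
      simp only [liftWalk, Walk.support_nil, List.mem_singleton, Walk.edges_cons,
        Walk.edges_nil, List.mem_cons, List.not_mem_nil, or_false]
      constructor
      · rintro (hx | rfl)
        · exact ⟨u, m, h, rfl, hx⟩
        · exact ⟨u, m, h, rfl, (P h).end_mem_support⟩
      · rintro ⟨a, b, h', heq, hx⟩
        exact Or.inl ((mem_support_P_congr hrev h h' heq.symm).mp hx)
    | cons h2 q =>
      rw [ih Walk.not_nil_cons]
      constructor
      · rintro (hx | ⟨a, b, h', hw', hx⟩)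
        · exact ⟨u, m, h, by rw [Walk.edges_cons]; exact List.mem_cons_self, hx⟩
        · exact ⟨a, b, h', by rw [Walk.edges_cons]; exact List.mem_cons_of_mem _ hw', hx⟩
      · rintro ⟨a, b, h', hw', hx⟩
        rcases List.mem_cons.mp hw' with heq | hw'
        · exact Or.inl ((mem_support_P_congr hrev h h' heq.symm).mp hx)
        · exact Or.inr ⟨a, b, h', hw', hx⟩

variable (hf : Function.Injective f)
  (hpath : ∀ (u v : U) (h : H.Adj u v), (P h).IsPath ∧ 0 < (P h).length)
  (hbranch : ∀ (u v : U) (h : H.Adj u v), ∀ w ∈ (P h).support,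
        w ≠ f u → w ≠ f v → ∀ x : U, w ≠ f x)
  (hdisj : ∀ (u v : U) (h : H.Adj u v) (u' v' : U) (h' : H.Adj u' v'),
        s(u, v) ≠ s(u', v') → ∀ w : W, w ∈ (P h).support → w ∈ (P h').support →
          (w = f u ∨ w = f v) ∧ (w = f u' ∨ w = f v'))

include hrev hf hpath hdisj in
lemma isPath_liftWalk {u v : U} {w : H.Walk u v} (hw : w.IsPath) :
    (liftWalk P w).IsPath := by
  induction w with
  | nil => exact Walk.IsPath.nil
  | @cons u m v h p ih =>
    rw [Walk.cons_isPath_iff] at hw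
    rw [liftWalk]
    refine isPath_append' (hpath _ _ h).1 (ih hw.1) ?_
    intro x hx hx'
    cases p with
    | nil => simpa [liftWalk] using hx'
    | cons h2 q =>
      rw [mem_support_liftWalk hrev Walk.not_nil_cons] at hx'
      obtain ⟨a, b, h', hw', hx'⟩ := hx'
      have hne : s(u, m) ≠ s(a, b) := by
        intro heq
        rcases Sym2.eq_iff.mp heq with ⟨rfl, rfl⟩ | ⟨rfl, rfl⟩
        · exact hw.2 ((Walk.cons h2 q).fst_mem_support_of_mem_edges hw')
        · exact hw.2 ((Walk.cons h2 q).snd_mem_support_of_mem_edges hw')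
      obtain ⟨hx1, hx2⟩ := hdisj u m h a b h' hne x hx hx'
      rcases hx1 with rfl | rfl
      · exfalso
        rcases hx2 with hfa | hfb
        · exact hw.2 (hf hfa ▸ (Walk.cons h2 q).fst_mem_support_of_mem_edges hw')
        · exact hw.2 (hf hfb ▸ (Walk.cons h2 q).snd_mem_support_of_mem_edges hw')
      · rfl

include hrev hf hbranch in
lemma branch_mem_of_mem_liftWalk {x : U} {a b : U} {w : H.Walk a b}
    (hw : ¬w.Nil) (hx : f x ∈ (liftWalk P w).support) : x ∈ w.support := by
  rw [mem_support_liftWalk hrev hw] at hx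
  obtain ⟨a', b', h', he', hx⟩ := hx
  have : f x = f a' ∨ f x = f b' := by
    by_contra hcon
    push_neg at hcon
    exact hbranch _ _ h' _ hx hcon.1 hcon.2 x rfl
  rcases this with h1 | h1
  · exact (hf h1) ▸ w.fst_mem_support_of_mem_edges he'
  · exact (hf h1) ▸ w.snd_mem_support_of_mem_edges he'

include hrev hf hdisj in
lemma liftWalk_support_disjoint {x1 y1 x2 y2 : U} {w1 : H.Walk x1 y1} {w2 : H.Walk x2 y2}
    (h1 : ¬w1.Nil) (h2 : ¬w2.Nil)
    (hdis : ∀ z, z ∈ w1.support → z ∈ w2.support → False)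
    {v : W} (hv1 : v ∈ (liftWalk P w1).support) (hv2 : v ∈ (liftWalk P w2).support) :
    False := by
  rw [mem_support_liftWalk hrev h1] at hv1
  rw [mem_support_liftWalk hrev h2] at hv2
  obtain ⟨a, b, h, he, hv1⟩ := hv1
  obtain ⟨a', b', h', he', hv2⟩ := hv2
  have hne : s(a, b) ≠ s(a', b') := by
    intro heq
    rcases Sym2.eq_iff.mp heq with ⟨rfl, rfl⟩ | ⟨rfl, rfl⟩
    · exact hdis a (w1.fst_mem_support_of_mem_edges he) (w2.fst_mem_support_of_mem_edges he')
    · exact hdis a (w1.fst_mem_support_of_mem_edges he) (w2.snd_mem_support_of_mem_edges he')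
  obtain ⟨hz1, hz2⟩ := hdisj a b h a' b' h' hne v hv1 hv2
  rcases hz1 with rfl | rfl <;> rcases hz2 with h3 | h3
  · exact hdis a (w1.fst_mem_support_of_mem_edges he) (hf h3 ▸ w2.fst_mem_support_of_mem_edges he')
  · exact hdis a (w1.fst_mem_support_of_mem_edges he) (hf h3 ▸ w2.snd_mem_support_of_mem_edges he')
  · exact hdis b (w1.snd_mem_support_of_mem_edges he) (hf h3 ▸ w2.fst_mem_support_of_mem_edges he')
  · exact hdis b (w1.snd_mem_support_of_mem_edges he) (hf h3 ▸ w2.snd_mem_support_of_mem_edges he')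

end Lift

section Wall
variable {M : ℕ}

def wv (M : ℕ) (r c : ℕ) (hr : r < M) (hc : c < M) : Fin M × Fin M := (⟨r, hr⟩, ⟨c, hc⟩)

lemma wall_adj_right {r c : ℕ} (hr : r < M) (hc : c + 1 < M) :
    (wallGraph M).Adj (wv M r c hr (by omega)) (wv M r (c + 1) hr hc) := by
  rw [wallGraph, SimpleGraph.fromRel_adj]
  exact ⟨by simp [wv, Prod.ext_iff, Fin.ext_iff], Or.inl (Or.inl ⟨rfl, rfl⟩)⟩

lemma wall_adj_down {r c : ℕ} (hr : r + 1 < M) (hc : c < M) (hp : r % 2 = c % 2) :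
    (wallGraph M).Adj (wv M r c (by omega) hc) (wv M (r + 1) c hr hc) := by
  rw [wallGraph, SimpleGraph.fromRel_adj]
  exact ⟨by simp [wv, Prod.ext_iff, Fin.ext_iff], Or.inl (Or.inr ⟨rfl, rfl, hp⟩)⟩

/-- horizontal edge in row `r` with both columns within `[c1, c2]`. -/
def HE (r c1 c2 : ℕ) (e : Sym2 (Fin M × Fin M)) : Prop :=
  ∃ p q : Fin M × Fin M, e = s(p, q) ∧ (p.1 : ℕ) = r ∧ (q.1 : ℕ) = r ∧
    (q.2 : ℕ) = (p.2 : ℕ) + 1 ∧ c1 ≤ (p.2 : ℕ) ∧ (q.2 : ℕ) ≤ c2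

/-- vertical edge at column `c` from row `r` to `r+1`. -/
def VE (c r : ℕ) (e : Sym2 (Fin M × Fin M)) : Prop :=
  ∃ p q : Fin M × Fin M, e = s(p, q) ∧ (p.2 : ℕ) = c ∧ (q.2 : ℕ) = c ∧
    (q.1 : ℕ) = (p.1 : ℕ) + 1 ∧ (p.1 : ℕ) = r

lemma HE_single_iff {r c : ℕ} (hr : r < M) (hc : c + 1 < M) (e : Sym2 (Fin M × Fin M)) :
    HE r c (c + 1) e ↔ e = s(wv M r c hr (by omega), wv M r (c + 1) hr hc) := by
  constructor
  · rintro ⟨p, q, rfl, h1, h2, h3, h4, h5⟩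
    have hp : p = wv M r c hr (Nat.lt_of_succ_lt hc) := by
      simp [wv, Prod.ext_iff, Fin.ext_iff]; omega
    have hq : q = wv M r (c + 1) hr hc := by
      simp [wv, Prod.ext_iff, Fin.ext_iff]; omega
    exact congrArg₂ (fun a b => s(a, b)) hp hq
  · rintro rfl
    exact ⟨_, _, rfl, rfl, rfl, rfl, le_refl _, le_refl _⟩

lemma VE_iff {r c : ℕ} (hr : r + 1 < M) (hc : c < M) (e : Sym2 (Fin M × Fin M)) :
    VE c r e ↔ e = s(wv M r c (by omega) hc, wv M (r + 1) c hr hc) := by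
  constructor
  · rintro ⟨p, q, rfl, h1, h2, h3, h4⟩
    have hp : p = wv M r c (Nat.lt_of_succ_lt hr) hc := by
      simp [wv, Prod.ext_iff, Fin.ext_iff]; omega
    have hq : q = wv M (r + 1) c hr hc := by
      simp [wv, Prod.ext_iff, Fin.ext_iff]; omega
    exact congrArg₂ (fun a b => s(a, b)) hp hq
  · rintro rfl
    exact ⟨_, _, rfl, rfl, rfl, rfl, rfl⟩

def hwalk : (len : ℕ) → (r c : ℕ) → (hr : r < M) → (h : c + len < M) →
    (wallGraph M).Walk (wv M r c hr (by omega)) (wv M r (c + len) hr h)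
  | 0, r, c, hr, h => Walk.nil
  | len + 1, r, c, hr, h =>
    (Walk.cons (wall_adj_right hr (by omega)) (hwalk len r (c + 1) hr (by omega))).copy
      rfl (by simp [wv, Prod.ext_iff, Fin.ext_iff]; omega)

lemma mem_support_hwalk {len r c : ℕ} {hr : r < M} {h : c + len < M}
    (v : Fin M × Fin M) :
    v ∈ (hwalk len r c hr h).support ↔
      (v.1 : ℕ) = r ∧ c ≤ (v.2 : ℕ) ∧ (v.2 : ℕ) ≤ c + len := by
  induction len generalizing c with
  | zero =>
    obtain ⟨⟨r', hr'⟩, ⟨c', hc'⟩⟩ := v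
    simp [hwalk, wv, Prod.ext_iff, Fin.ext_iff]
    omega
  | succ len ih =>
    obtain ⟨⟨r', hr'⟩, ⟨c', hc'⟩⟩ := v
    rw [hwalk]
    simp only [Walk.support_copy, Walk.support_cons, List.mem_cons, ih]
    simp [wv, Prod.ext_iff, Fin.ext_iff]
    omega

lemma mem_edges_hwalk {len r c : ℕ} {hr : r < M} {h : c + len < M}
    (e : Sym2 (Fin M × Fin M)) :
    e ∈ (hwalk len r c hr h).edges ↔
      ∃ d, c ≤ d ∧ d + 1 ≤ c + len ∧ HE r d (d + 1) e := by
  induction len generalizing c with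
  | zero =>
    simp [hwalk]
    omega
  | succ len ih =>
    rw [hwalk]
    simp only [Walk.edges_copy, Walk.edges_cons, List.mem_cons, ih]
    constructor
    · rintro (rfl | ⟨d, h1, h2, h3⟩)
      · exact ⟨c, le_refl _, by omega, ⟨_, _, rfl, rfl, rfl, rfl, le_refl _, le_refl _⟩⟩
      · exact ⟨d, by omega, by omega, h3⟩
    · rintro ⟨d, h1, h2, h3⟩
      rcases Nat.eq_or_lt_of_le h1 with rfl | hlt
      · exact Or.inl ((HE_single_iff hr (by omega) e).mp h3)
      · exact Or.inr ⟨d, by omega, by omega, h3⟩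

lemma isPath_hwalk {len r c : ℕ} {hr : r < M} {h : c + len < M} :
    (hwalk len r c hr h).IsPath := by
  induction len generalizing c with
  | zero => exact Walk.IsPath.nil
  | succ len ih =>
    rw [hwalk, Walk.isPath_copy]
    rw [Walk.cons_isPath_iff]
    refine ⟨ih, ?_⟩
    rw [mem_support_hwalk]
    simp [wv]

lemma hwalk_not_nil {len r c : ℕ} {hr : r < M} {h : c + len < M} (hl : 0 < len) :
    ¬ (hwalk len r c hr h).Nil := by
  apply Walk.not_nil_of_ne
  simp [wv, Prod.ext_iff, Fin.ext_iff]
  omega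

end Wall

section Col
variable {M : ℕ}

def cunit (r c : ℕ) (hr : r + 2 < M) (hc : c + 1 < M) (hp : r % 2 = (c + 1) % 2) :
    (wallGraph M).Walk (wv M r (c + 1) (by omega) hc) (wv M (r + 2) (c + 1) hr hc) :=
  .cons (wall_adj_down (by omega) hc hp)
    (.cons (wall_adj_right (r := r + 1) (by omega) hc).symm
      (.cons (wall_adj_down (r := r + 1) (by omega) (by omega) (by omega))
        (.cons (wall_adj_right hr hc) .nil)))

lemma mem_support_cunit {r c : ℕ} {hr : r + 2 < M} {hc : c + 1 < M}
    {hp : r % 2 = (c + 1) % 2} (v : Fin M × Fin M) :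
    v ∈ (cunit r c hr hc hp).support ↔
      ((v.2 : ℕ) = c + 1 ∧ ((v.1 : ℕ) = r ∨ (v.1 : ℕ) = r + 1 ∨ (v.1 : ℕ) = r + 2)) ∨
      ((v.2 : ℕ) = c ∧ ((v.1 : ℕ) = r + 1 ∨ (v.1 : ℕ) = r + 2)) := by
  obtain ⟨⟨r', hr'⟩, ⟨c', hc'⟩⟩ := v
  simp only [cunit, Walk.support_cons, Walk.support_nil]
  simp [wv, Prod.ext_iff, Fin.ext_iff]
  omega

lemma mem_edges_cunit {r c : ℕ} {hr : r + 2 < M} {hc : c + 1 < M}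
    {hp : r % 2 = (c + 1) % 2} (e : Sym2 (Fin M × Fin M)) :
    e ∈ (cunit r c hr hc hp).edges ↔
      VE (c + 1) r e ∨ HE (r + 1) c (c + 1) e ∨ VE c (r + 1) e ∨ HE (r + 2) c (c + 1) e := by
  rw [VE_iff (by omega) hc, HE_single_iff (r := r + 1) (by omega) hc,
    VE_iff (r := r + 1) (by omega) (by omega), HE_single_iff (r := r + 2) (by omega) hc]
  simp only [cunit, Walk.edges_cons, Walk.edges_nil, List.mem_cons, List.not_mem_nil, or_false]
  constructor
  · rintro (rfl | rfl | rfl | rfl)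
    · exact Or.inl rfl
    · exact Or.inr (Or.inl (Sym2.eq_swap))
    · exact Or.inr (Or.inr (Or.inl rfl))
    · exact Or.inr (Or.inr (Or.inr rfl))
  · rintro (rfl | h | rfl | rfl)
    · exact Or.inl rfl
    · exact Or.inr (Or.inl (h.trans Sym2.eq_swap))
    · exact Or.inr (Or.inr (Or.inl rfl))
    · exact Or.inr (Or.inr (Or.inr rfl))

lemma isPath_cunit {r c : ℕ} {hr : r + 2 < M} {hc : c + 1 < M}
    {hp : r % 2 = (c + 1) % 2} : (cunit r c hr hc hp).IsPath := by
  simp only [cunit, Walk.cons_isPath_iff, Walk.support_cons, Walk.support_nil]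
  simp [wv, Prod.ext_iff, Fin.ext_iff]

def cwalkAux (c : ℕ) (hc : c + 1 < M) (hco : c % 2 = 1) :
    (k : ℕ) → (hk : 2 * k < M) →
      (wallGraph M).Walk (wv M 0 (c + 1) (by omega) hc) (wv M (2 * k) (c + 1) hk hc)
  | 0, _ => Walk.nil
  | k + 1, hk =>
    (cwalkAux c hc hco k (by omega)).append
      (cunit (2 * k) c (by omega) hc (by omega))

lemma mem_support_cwalkAux {c : ℕ} {hc : c + 1 < M} {hco : c % 2 = 1} {k : ℕ}
    {hk : 2 * k < M} (v : Fin M × Fin M) :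
    v ∈ (cwalkAux c hc hco k hk).support ↔
      ((v.2 : ℕ) = c + 1 ∧ (v.1 : ℕ) ≤ 2 * k) ∨
      ((v.2 : ℕ) = c ∧ 1 ≤ (v.1 : ℕ) ∧ (v.1 : ℕ) ≤ 2 * k) := by
  induction k with
  | zero =>
    obtain ⟨⟨r', hr'⟩, ⟨c', hc'⟩⟩ := v
    simp [cwalkAux, wv, Prod.ext_iff, Fin.ext_iff]
    omega
  | succ k ih =>
    rw [cwalkAux, Walk.mem_support_append_iff, ih, mem_support_cunit]
    obtain ⟨⟨r', hr'⟩, ⟨c', hc'⟩⟩ := v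
    simp only [Fin.val_mk]
    omega

lemma mem_edges_cwalkAux {c : ℕ} {hc : c + 1 < M} {hco : c % 2 = 1} {k : ℕ}
    {hk : 2 * k < M} (e : Sym2 (Fin M × Fin M)) :
    e ∈ (cwalkAux c hc hco k hk).edges ↔
      (∃ r, r < 2 * k ∧ r % 2 = 0 ∧ VE (c + 1) r e) ∨
      (∃ r, r < 2 * k ∧ r % 2 = 1 ∧ VE c r e) ∨
      (∃ r, 1 ≤ r ∧ r ≤ 2 * k ∧ HE r c (c + 1) e) := by
  induction k with
  | zero =>
    simp [cwalkAux]
  | succ k ih =>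
    rw [cwalkAux, Walk.edges_append, List.mem_append, ih, mem_edges_cunit]
    constructor
    · rintro ((⟨r, h1, h2, h3⟩ | ⟨r, h1, h2, h3⟩ | ⟨r, h1, h2, h3⟩) | (h | h | h | h))
      · exact Or.inl ⟨r, by omega, h2, h3⟩
      · exact Or.inr (Or.inl ⟨r, by omega, h2, h3⟩)
      · exact Or.inr (Or.inr ⟨r, by omega, by omega, h3⟩)
      · exact Or.inl ⟨2 * k, by omega, by omega, h⟩
      · exact Or.inr (Or.inr ⟨2 * k + 1, by omega, by omega, h⟩)
      · exact Or.inr (Or.inl ⟨2 * k + 1, by omega, by omega, h⟩)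
      · exact Or.inr (Or.inr ⟨2 * k + 2, by omega, by omega, h⟩)
    · rintro (⟨r, h1, h2, h3⟩ | ⟨r, h1, h2, h3⟩ | ⟨r, h1, h2, h3⟩)
      · rcases Nat.lt_or_ge r (2 * k) with hlt | hge
        · exact Or.inl (Or.inl ⟨r, hlt, h2, h3⟩)
        · have : r = 2 * k := by omega
          subst this
          exact Or.inr (Or.inl h3)
      · rcases Nat.lt_or_ge r (2 * k) with hlt | hge
        · exact Or.inl (Or.inr (Or.inl ⟨r, hlt, h2, h3⟩))
        · have : r = 2 * k + 1 := by omega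
          subst this
          exact Or.inr (Or.inr (Or.inr (Or.inl h3)))
      · rcases le_or_gt r (2 * k) with hle | hgt
        · exact Or.inl (Or.inr (Or.inr ⟨r, h1, hle, h3⟩))
        · rcases Nat.eq_or_lt_of_le (show r ≤ 2 * k + 2 by omega) with heq | hlt
          · subst heq
            exact Or.inr (Or.inr (Or.inr (Or.inr h3)))
          · have : r = 2 * k + 1 := by omega
            subst this
            exact Or.inr (Or.inr (Or.inl h3))

end Col

section Col2
variable {M : ℕ}

lemma isPath_cwalkAux {c : ℕ} {hc : c + 1 < M} {hco : c % 2 = 1} {k : ℕ}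
    {hk : 2 * k < M} : (cwalkAux c hc hco k hk).IsPath := by
  induction k with
  | zero => exact Walk.IsPath.nil
  | succ k ih =>
    rw [cwalkAux]
    refine isPath_append' ih isPath_cunit ?_
    intro x hx hx'
    rw [mem_support_cwalkAux] at hx
    rw [mem_support_cunit] at hx'
    have hx2 : x = wv M (2 * k) (c + 1) (by omega) hc := by
      obtain ⟨⟨r', hr'⟩, ⟨c', hc'⟩⟩ := x
      simp only [Fin.val_mk] at hx hx'
      simp [wv, Prod.ext_iff, Fin.ext_iff]
      omega
    exact hx2

def colW (c : ℕ) (hc : c + 1 < M) (hco : c % 2 = 1) (k : ℕ) (hk : 2 * k + 1 < M) :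
    (wallGraph M).Walk (wv M 0 (c + 1) (by omega) hc) (wv M (2 * k + 1) (c + 1) hk hc) :=
  (cwalkAux c hc hco k (by omega)).append
    (.cons (wall_adj_down hk hc (by omega)) .nil)

lemma mem_support_colW {c : ℕ} {hc : c + 1 < M} {hco : c % 2 = 1} {k : ℕ}
    {hk : 2 * k + 1 < M} (v : Fin M × Fin M) :
    v ∈ (colW c hc hco k hk).support ↔
      ((v.2 : ℕ) = c + 1 ∧ (v.1 : ℕ) ≤ 2 * k + 1) ∨
      ((v.2 : ℕ) = c ∧ 1 ≤ (v.1 : ℕ) ∧ (v.1 : ℕ) ≤ 2 * k) := by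
  rw [colW, Walk.mem_support_append_iff, mem_support_cwalkAux]
  obtain ⟨⟨r', hr'⟩, ⟨c', hc'⟩⟩ := v
  simp only [Walk.support_cons, Walk.support_nil]
  simp [wv, Prod.ext_iff, Fin.ext_iff]
  omega

lemma mem_edges_colW {c : ℕ} {hc : c + 1 < M} {hco : c % 2 = 1} {k : ℕ}
    {hk : 2 * k + 1 < M} (e : Sym2 (Fin M × Fin M)) :
    e ∈ (colW c hc hco k hk).edges ↔
      (∃ r, r ≤ 2 * k ∧ r % 2 = 0 ∧ VE (c + 1) r e) ∨
      (∃ r, r < 2 * k ∧ r % 2 = 1 ∧ VE c r e) ∨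
      (∃ r, 1 ≤ r ∧ r ≤ 2 * k ∧ HE r c (c + 1) e) := by
  rw [colW, Walk.edges_append, List.mem_append, mem_edges_cwalkAux]
  simp only [Walk.edges_cons, Walk.edges_nil, List.mem_cons, List.not_mem_nil, or_false]
  constructor
  · rintro ((⟨r, h1, h2, h3⟩ | h | h) | rfl)
    · exact Or.inl ⟨r, by omega, h2, h3⟩
    · exact Or.inr (Or.inl h)
    · exact Or.inr (Or.inr h)
    · exact Or.inl ⟨2 * k, le_refl _, by omega, (VE_iff hk hc _).mpr rfl⟩
  · rintro (⟨r, h1, h2, h3⟩ | h | h)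
    · rcases Nat.eq_or_lt_of_le h1 with rfl | hlt
      · exact Or.inr ((VE_iff hk hc _).mp h3)
      · exact Or.inl (Or.inl ⟨r, hlt, h2, h3⟩)
    · exact Or.inl (Or.inr (Or.inl h))
    · exact Or.inl (Or.inr (Or.inr h))

lemma isPath_colW {c : ℕ} {hc : c + 1 < M} {hco : c % 2 = 1} {k : ℕ}
    {hk : 2 * k + 1 < M} : (colW c hc hco k hk).IsPath := by
  rw [colW]
  refine isPath_append' isPath_cwalkAux ?_ ?_
  · rw [Walk.cons_isPath_iff]
    refine ⟨Walk.IsPath.nil, ?_⟩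
    simp [wv, Prod.ext_iff, Fin.ext_iff]
  · intro x hx hx'
    rw [mem_support_cwalkAux] at hx
    simp only [Walk.support_cons, Walk.support_nil, List.mem_cons, List.mem_singleton,
      List.not_mem_nil, or_false] at hx'
    rcases hx' with rfl | rfl
    · rfl
    · exfalso
      simp only [wv, Fin.val_mk] at hx
      omega

lemma colW_not_nil {c : ℕ} {hc : c + 1 < M} {hco : c % 2 = 1} {k : ℕ}
    {hk : 2 * k + 1 < M} : ¬ (colW c hc hco k hk).Nil := by
  apply Walk.not_nil_of_ne
  simp [wv, Prod.ext_iff, Fin.ext_iff]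

end Col2

lemma wall_degree {M : ℕ} (x : Fin M × Fin M) :
    {y | (wallGraph M).Adj x y}.ncard ≤ 3 := by
  classical
  have hFinj : Function.Injective (fun p : Fin M × Fin M => ((p.1 : ℕ), (p.2 : ℕ))) := by
    intro a b h
    simp only [Prod.mk.injEq] at h
    exact Prod.ext (Fin.ext h.1) (Fin.ext h.2)
  rw [← Set.ncard_image_of_injective _ hFinj]
  have hsub : (fun p : Fin M × Fin M => ((p.1 : ℕ), (p.2 : ℕ))) '' {y | (wallGraph M).Adj x y} ⊆
      {((x.1 : ℕ), (x.2 : ℕ) - 1), ((x.1 : ℕ), (x.2 : ℕ) + 1),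
        (if (x.1 : ℕ) % 2 = (x.2 : ℕ) % 2 then ((x.1 : ℕ) + 1, (x.2 : ℕ))
          else ((x.1 : ℕ) - 1, (x.2 : ℕ)))} := by
    rintro _ ⟨y, hy, rfl⟩
    simp only [Set.mem_setOf_eq, wallGraph, SimpleGraph.fromRel_adj] at hy
    obtain ⟨-, hrel⟩ := hy
    simp only [Set.mem_insert_iff, Set.mem_singleton_iff, Prod.mk.injEq]
    obtain ⟨⟨a, ha⟩, ⟨b, hb⟩⟩ := x
    obtain ⟨⟨a', ha'⟩, ⟨b', hb'⟩⟩ := y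
    simp only [Fin.val_mk, Prod.ext_iff, Fin.ext_iff, Fin.mk.injEq] at hrel ⊢
    split_ifs with hpar <;> omega
  refine le_trans (Set.ncard_le_ncard hsub ?_) ?_
  · exact ((Set.finite_singleton _).insert _).insert _
  · refine le_trans (Set.ncard_insert_le _ _) ?_
    have h2 := Set.ncard_insert_le ((x.1 : ℕ), (x.2 : ℕ) + 1)
      ({(if (x.1 : ℕ) % 2 = (x.2 : ℕ) % 2 then ((x.1 : ℕ) + 1, (x.2 : ℕ))
          else ((x.1 : ℕ) - 1, (x.2 : ℕ)))} : Set (ℕ × ℕ))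
    simp only [Set.ncard_singleton] at h2
    omega

/-- Any subdivision of the `(2N+2) × (2N+2)` wall contains an `N × N` cubic
mesh as a subgraph. -/
theorem wall_subdivision_has_cubic_mesh (N : ℕ) (hN : 1 ≤ N) {W : Type}
    (S : SimpleGraph W) (hS : IsSubdivision (wallGraph (2 * N + 2)) S) :
    HasCubicMesh S N := by
  classical
  obtain ⟨f, hf, P, hPpath, hPrev, hPbranch, hPdisj, -⟩ := hS
  have hr1 : ∀ i : Fin N, 2 * (i : ℕ) + 1 < 2 * N + 2 := fun i => by have := i.isLt; omega
  have hc2 : ∀ j : Fin N, 2 * (j : ℕ) + 1 + 1 < 2 * N + 2 := fun j => by have := j.isLt; omega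
  have h0 : (0 : ℕ) < 2 * N + 2 := by omega
  have hw1 : 0 + (2 * N + 1) < 2 * N + 2 := by omega
  have hlast : 2 * N + 1 < 2 * N + 2 := by omega
  have hodd : ∀ j : Fin N, (2 * (j : ℕ) + 1) % 2 = 1 := fun j => by omega
  refine ⟨fun i => f (wv (2*N+2) (2*↑i+1) 0 (hr1 i) h0),
    fun i => f (wv (2*N+2) (2*↑i+1) (0+(2*N+1)) (hr1 i) hw1),
    fun j => f (wv (2*N+2) 0 (2*↑j+1+1) h0 (hc2 j)),
    fun j => f (wv (2*N+2) (2*N+1) (2*↑j+1+1) hlast (hc2 j)),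
    fun i => liftWalk P (hwalk (2*N+1) (2*↑i+1) 0 (hr1 i) hw1),
    fun j => liftWalk P (colW (2*↑j+1) (hc2 j) (hodd j) N hlast),
    ?_, ?_, ?_, ?_, ?_, ?_, ?_, ?_⟩
  · exact fun i => isPath_liftWalk hPrev hf hPpath hPdisj isPath_hwalk
  · exact fun j => isPath_liftWalk hPrev hf hPpath hPdisj isPath_colW
  · intro i i' hne v hv hv'
    refine liftWalk_support_disjoint hPrev hf hPdisj (hwalk_not_nil (by omega))
      (hwalk_not_nil (by omega)) ?_ hv hv'
    intro z hz hz'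
    rw [mem_support_hwalk] at hz hz'
    exact hne (Fin.ext (by omega))
  · intro j j' hne v hv hv'
    refine liftWalk_support_disjoint hPrev hf hPdisj colW_not_nil colW_not_nil ?_ hv hv'
    intro z hz hz'
    rw [mem_support_colW] at hz hz'
    exact hne (Fin.ext (by omega))
  · intro i j
    constructor
    · intro h
      have hx := branch_mem_of_mem_liftWalk hPrev hf hPbranch colW_not_nil h
      rw [mem_support_colW] at hx
      simp only [wv, Fin.val_mk] at hx
      omega
    · intro h
      have hx := branch_mem_of_mem_liftWalk hPrev hf hPbranch colW_not_nil h
      rw [mem_support_colW] at hx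
      simp only [wv, Fin.val_mk] at hx
      have := j.isLt
      omega
  · intro i j
    constructor
    · intro h
      have hx := branch_mem_of_mem_liftWalk hPrev hf hPbranch (hwalk_not_nil (by omega)) h
      rw [mem_support_hwalk] at hx
      simp only [wv, Fin.val_mk] at hx
      omega
    · intro h
      have hx := branch_mem_of_mem_liftWalk hPrev hf hPbranch (hwalk_not_nil (by omega)) h
      rw [mem_support_hwalk] at hx
      simp only [wv, Fin.val_mk] at hx
      have := i.isLt
      omega
  · -- degree condition
    intro v
    show {u : W | (∃ i : Fin N, s(v, u) ∈
          (liftWalk P (hwalk (2*N+1) (2*↑i+1) 0 (hr1 i) hw1)).edges) ∨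
        (∃ j : Fin N, s(v, u) ∈
          (liftWalk P (colW (2*↑j+1) (hc2 j) (hodd j) N hlast)).edges)}.ncard ≤ 3
    have hT : ∀ u : W,
        ((∃ i : Fin N, s(v,u) ∈ (liftWalk P (hwalk (2*N+1) (2*↑i+1) 0 (hr1 i) hw1)).edges) ∨
          (∃ j : Fin N, s(v,u) ∈ (liftWalk P (colW (2*↑j+1) (hc2 j) (hodd j) N hlast)).edges)) →
        ∃ (a b : Fin (2*N+2) × Fin (2*N+2)) (h : (wallGraph (2*N+2)).Adj a b),
          s(v,u) ∈ (P h).edges := by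
      rintro u (⟨i, hu⟩ | ⟨j, hu⟩) <;>
        [rw [mem_edges_liftWalk hPrev] at hu; rw [mem_edges_liftWalk hPrev] at hu] <;>
        · obtain ⟨a, b, h, -, he⟩ := hu
          exact ⟨a, b, h, he⟩
    by_cases hv : ∃ x, v = f x
    · obtain ⟨x, rfl⟩ := hv
      set g : Fin (2*N+2) × Fin (2*N+2) → W :=
        fun y => if hy : (wallGraph (2*N+2)).Adj x y then (P hy).getVert 1 else f x with hg
      have hsub : {u : W | (∃ i : Fin N, s(f x, u) ∈
            (liftWalk P (hwalk (2*N+1) (2*↑i+1) 0 (hr1 i) hw1)).edges) ∨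
          (∃ j : Fin N, s(f x, u) ∈
            (liftWalk P (colW (2*↑j+1) (hc2 j) (hodd j) N hlast)).edges)} ⊆
          g '' {y | (wallGraph (2*N+2)).Adj x y} := by
        intro u hu
        obtain ⟨a, b, h, he⟩ := hT u hu
        have hmem : f x ∈ (P h).support := Walk.fst_mem_support_of_mem_edges _ he
        have hxab : x = a ∨ x = b := by
          by_contra hc
          push_neg at hc
          exact (hPbranch a b h (f x) hmem (fun hh => hc.1 (hf hh))
            (fun hh => hc.2 (hf hh)) x) rfl
        rcases hxab with rfl | rfl
        · refine ⟨b, h, ?_⟩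
          simp only [hg, dif_pos h]
          exact (eq_getVert_one_of_start_edge (hPpath _ _ h).1 he).symm
        · refine ⟨a, h.symm, ?_⟩
          have he' : s(f x, u) ∈ (P h.symm).edges := by
            rw [hPrev _ _ h, Walk.edges_reverse, List.mem_reverse]
            exact he
          simp only [hg, dif_pos h.symm]
          exact (eq_getVert_one_of_start_edge (hPpath _ _ h.symm).1 he').symm
      refine le_trans (Set.ncard_le_ncard hsub ((Set.toFinite _).image g)) ?_
      exact le_trans (Set.ncard_image_le (Set.toFinite _)) (wall_degree x)
    · push_neg at hv
      by_cases hne : ∃ u : W, (∃ i : Fin N, s(v, u) ∈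
            (liftWalk P (hwalk (2*N+1) (2*↑i+1) 0 (hr1 i) hw1)).edges) ∨
          (∃ j : Fin N, s(v, u) ∈
            (liftWalk P (colW (2*↑j+1) (hc2 j) (hodd j) N hlast)).edges)
      swap
      · have hempty : {u : W | (∃ i : Fin N, s(v, u) ∈
              (liftWalk P (hwalk (2*N+1) (2*↑i+1) 0 (hr1 i) hw1)).edges) ∨
            (∃ j : Fin N, s(v, u) ∈
              (liftWalk P (colW (2*↑j+1) (hc2 j) (hodd j) N hlast)).edges)} = ∅ := by
          ext u
          simp only [Set.mem_setOf_eq, Set.mem_empty_iff_false, iff_false]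
          exact fun hu => hne ⟨u, hu⟩
        rw [hempty]
        simp
      · obtain ⟨u0, hu0⟩ := hne
        obtain ⟨a, b, h, he⟩ := hT u0 hu0
        have hsub : {u : W | (∃ i : Fin N, s(v, u) ∈
              (liftWalk P (hwalk (2*N+1) (2*↑i+1) 0 (hr1 i) hw1)).edges) ∨
            (∃ j : Fin N, s(v, u) ∈
              (liftWalk P (colW (2*↑j+1) (hc2 j) (hodd j) N hlast)).edges)} ⊆
            {u : W | s(v, u) ∈ (P h).edges} := by
          intro u hu
          obtain ⟨a', b', h', he'⟩ := hT u hu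
          by_cases hss : s(a, b) = s(a', b')
          · exact (mem_edges_P_congr hPrev h h' hss).mp he'
          · exfalso
            obtain ⟨hz, -⟩ := hPdisj a b h a' b' h' hss v
              (Walk.fst_mem_support_of_mem_edges _ he)
              (Walk.fst_mem_support_of_mem_edges _ he')
            rcases hz with hz | hz
            · exact hv a hz
            · exact hv b hz
        exact le_trans (Set.ncard_le_ncard hsub (nbrs_finite _ v))
          (le_trans (ncard_path_nbrs (hPpath _ _ h).1 v) (by omega))
  · -- crossing condition
    intro i j
    have hij : (i : ℕ) < N := i.isLt
    have hjj : (j : ℕ) < N := j.isLt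
    set x1 : Fin (2*N+2) × Fin (2*N+2) :=
      wv (2*N+2) (2*↑i+1) (2*↑j+1) (hr1 i) (by omega) with hx1def
    set x2 : Fin (2*N+2) × Fin (2*N+2) :=
      wv (2*N+2) (2*↑i+1) (2*↑j+1+1) (hr1 i) (hc2 j) with hx2def
    have hadj : (wallGraph (2*N+2)).Adj x1 x2 := wall_adj_right (hr1 i) (hc2 j)
    have hq_row : s(x1, x2) ∈ (hwalk (M := 2*N+2) (2*N+1) (2*↑i+1) 0 (hr1 i) hw1).edges := by
      rw [mem_edges_hwalk]
      exact ⟨2*↑j+1, by omega, by omega, x1, x2, rfl, by simp [hx1def, wv],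
        by simp [hx2def, wv], by simp [hx1def, hx2def, wv], by simp [hx1def, wv],
        by simp [hx2def, wv]⟩
    have hq_col : s(x1, x2) ∈ (colW (M := 2*N+2) (2*↑j+1) (hc2 j) (hodd j) N hlast).edges := by
      rw [mem_edges_colW]
      exact Or.inr (Or.inr ⟨2*↑i+1, by omega, by omega, x1, x2, rfl, by simp [hx1def, wv],
        by simp [hx2def, wv], by simp [hx1def, hx2def, wv], by simp [hx1def, wv],
        by simp [hx2def, wv]⟩)
    have hcross : ∀ e, e ∈ (hwalk (M := 2*N+2) (2*N+1) (2*↑i+1) 0 (hr1 i) hw1).edges →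
        e ∈ (colW (M := 2*N+2) (2*↑j+1) (hc2 j) (hodd j) N hlast).edges → e = s(x1, x2) := by
      intro e he1 he2
      rw [mem_edges_hwalk] at he1
      rw [mem_edges_colW] at he2
      obtain ⟨d, hd1, hd2, p1, q1, rfl, a1, a2, a3, a4, a5⟩ := he1
      rcases he2 with ⟨r, hr', hre, p2, q2, heq, b1, b2, b3, b4⟩ |
        ⟨r, hr', hre, p2, q2, heq, b1, b2, b3, b4⟩ |
        ⟨r, hr0, hr', p2, q2, heq, b1, b2, b3, b4, b5⟩
      · exfalso
        rcases Sym2.eq_iff.mp heq with ⟨h5, h6⟩ | ⟨h5, h6⟩ <;> (subst h5; subst h6; omega)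
      · exfalso
        rcases Sym2.eq_iff.mp heq with ⟨h5, h6⟩ | ⟨h5, h6⟩ <;> (subst h5; subst h6; omega)
      · rcases Sym2.eq_iff.mp heq with ⟨h5, h6⟩ | ⟨h5, h6⟩
        · subst h5; subst h6
          have hp : p1 = x1 := by
            rw [hx1def]
            refine Prod.ext (Fin.ext ?_) (Fin.ext ?_) <;> simp only [wv, Fin.val_mk] <;> omega
          have hq : q1 = x2 := by
            rw [hx2def]
            refine Prod.ext (Fin.ext ?_) (Fin.ext ?_) <;> simp only [wv, Fin.val_mk] <;> omega
          exact congrArg₂ (fun a b => s(a, b)) hp hq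
        · subst h5; subst h6
          exfalso
          omega
    refine ⟨f x1, f x2, P hadj, (hPpath _ _ hadj).1, (hPpath _ _ hadj).2, ?_, ?_, ?_⟩
    · intro e he
      rw [mem_edges_liftWalk hPrev]
      exact ⟨x1, x2, hadj, hq_row, he⟩
    · intro e he
      rw [mem_edges_liftWalk hPrev]
      exact ⟨x1, x2, hadj, hq_col, he⟩
    · intro v
      constructor
      · rintro ⟨hv1, hv2⟩
        rw [mem_support_liftWalk hPrev (hwalk_not_nil (by omega))] at hv1
        rw [mem_support_liftWalk hPrev colW_not_nil] at hv2
        obtain ⟨a, b, hab, heR, hvP⟩ := hv1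
        obtain ⟨a', b', hab', heC, hvP'⟩ := hv2
        by_cases hss : s(a, b) = s(a', b')
        · have heC' : s(a, b) ∈ (colW (M := 2*N+2) (2*↑j+1) (hc2 j) (hodd j) N hlast).edges :=
            hss ▸ heC
          have hcr := hcross _ heR heC'
          exact (mem_support_P_congr hPrev hadj hab hcr.symm).mp hvP
        · have hkey : ∀ z, v = f z →
              z ∈ (hwalk (M := 2*N+2) (2*N+1) (2*↑i+1) 0 (hr1 i) hw1).support →
              z ∈ (colW (M := 2*N+2) (2*↑j+1) (hc2 j) (hodd j) N hlast).support →
              v ∈ (P hadj).support := by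
            intro z hzv hzr hzc
            rw [mem_support_hwalk] at hzr
            rw [mem_support_colW] at hzc
            have hz12 : z = x1 ∨ z = x2 := by
              rcases hzc with ⟨h4, h5⟩ | ⟨h4, h5, h6⟩
              · right
                rw [hx2def]
                refine Prod.ext (Fin.ext ?_) (Fin.ext ?_) <;>
                  simp only [wv, Fin.val_mk] <;> omega
              · left
                rw [hx1def]
                refine Prod.ext (Fin.ext ?_) (Fin.ext ?_) <;>
                  simp only [wv, Fin.val_mk] <;> omega
            rcases hz12 with rfl | rfl
            · rw [hzv]; exact (P hadj).start_mem_support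
            · rw [hzv]; exact (P hadj).end_mem_support
          obtain ⟨hz1, hz2⟩ := hPdisj a b hab a' b' hab' hss v hvP hvP'
          rcases hz1 with rfl | rfl
          · rcases hz2 with h9 | h9
            · exact hkey a rfl (Walk.fst_mem_support_of_mem_edges _ heR)
                (by rw [hf h9]; exact Walk.fst_mem_support_of_mem_edges _ heC)
            · exact hkey a rfl (Walk.fst_mem_support_of_mem_edges _ heR)
                (by rw [hf h9]; exact Walk.snd_mem_support_of_mem_edges _ heC)
          · rcases hz2 with h9 | h9
            · exact hkey b rfl (Walk.snd_mem_support_of_mem_edges _ heR)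
                (by rw [hf h9]; exact Walk.fst_mem_support_of_mem_edges _ heC)
            · exact hkey b rfl (Walk.snd_mem_support_of_mem_edges _ heR)
                (by rw [hf h9]; exact Walk.snd_mem_support_of_mem_edges _ heC)
      · intro hvq
        refine ⟨?_, ?_⟩
        · rw [mem_support_liftWalk hPrev (hwalk_not_nil (by omega))]
          exact ⟨x1, x2, hadj, hq_row, hvq⟩
        · rw [mem_support_liftWalk hPrev colW_not_nil]
          exact ⟨x1, x2, hadj, hq_col, hvq⟩
end

section
/- For every positive integer N, the graph G_N contains no K_{2,2} subgraph. -/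
/-- The graph `G_N`: the disjoint union of `N` paths, each on `N` vertices
(vertex `inl (i, j)` is the `j`-th vertex of the path `P_i`), together with `N` new
vertices `inr k`, where `inr k` is adjacent to the `k`-th vertex of each path. -/
def GN (N : ℕ) : SimpleGraph (Fin N × Fin N ⊕ Fin N) :=
  SimpleGraph.fromRel fun a b =>
    match a, b with
    | Sum.inl p, Sum.inl q => p.1 = q.1 ∧ (p.2 : ℕ) + 1 = (q.2 : ℕ)
    | Sum.inl p, Sum.inr k => p.2 = k
    | _, _ => False

lemma GN_key (N : ℕ) (a b c d : Fin N × Fin N ⊕ Fin N)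
    (hab : a ≠ b) (hcd : c ≠ d)
    (h1 : (GN N).Adj a c) (h2 : (GN N).Adj a d)
    (h3 : (GN N).Adj b c) (h4 : (GN N).Adj b d) : False := by
  rcases a with ⟨i1, j1⟩ | k1 <;> rcases b with ⟨i2, j2⟩ | k2 <;>
    rcases c with ⟨i3, j3⟩ | k3 <;> rcases d with ⟨i4, j4⟩ | k4 <;>
  simp only [GN, SimpleGraph.fromRel_adj, ne_eq, Sum.inl.injEq, Sum.inr.injEq,
    Prod.mk.injEq, Prod.ext_iff, Fin.ext_iff, reduceCtorEq, not_false_eq_true, true_and,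
    and_true, false_and, and_false, not_and, or_false, false_or] at * <;>
  omega

/-- `G_N` contains no `K_{2,2}` subgraph. -/
theorem GN_K22_free (N : ℕ) (hN : 1 ≤ N) : KttFree (GN N) 2 := by
  rintro ⟨A, B, hA, hB, -, hadj⟩
  rw [Finset.card_eq_two] at hA hB
  obtain ⟨a, b, hab, rfl⟩ := hA
  obtain ⟨c, d, hcd, rfl⟩ := hB
  exact GN_key N a b c d hab hcd
    (hadj a (by simp) c (by simp)) (hadj a (by simp) d (by simp))
    (hadj b (by simp) c (by simp)) (hadj b (by simp) d (by simp))
end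

section
/- For every positive integer N, the graph G_N has twin-width at most 3. -/
namespace TWP
set_option linter.unusedVariables false
set_option maxHeartbeats 1000000


attribute [local instance] Classical.propDecidable

abbrev VN (N : ℕ) := Fin N × Fin N ⊕ Fin N

def pos (N : ℕ) : VN N → ℕ
  | .inl p => (p.2 : ℕ) * (N+1) + (p.1 : ℕ)
  | .inr k => (k : ℕ) * (N+1) + N

lemma pos_inl (N : ℕ) (r t : Fin N) : pos N (.inl (r, t)) = (t:ℕ)*(N+1)+(r:ℕ) := rfl
lemma pos_inr (N : ℕ) (t : Fin N) : pos N (.inr t) = (t:ℕ)*(N+1)+N := rfl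

lemma mul_succ_le {t t' N : ℕ} (h : t < t') : t*(N+1)+(N+1) ≤ t'*(N+1) := by
  have := Nat.mul_le_mul_right (N+1) (Nat.succ_le_of_lt h)
  simpa [Nat.succ_mul] using this

/-- master comparison: columns compare first -/
lemma pin_le {N t t' o o' : ℕ} (ho : o ≤ N) (ho' : o' ≤ N)
    (h : t*(N+1)+o ≤ t'*(N+1)+o') : t ≤ t' := by
  by_contra hc
  have := mul_succ_le (N := N) (Nat.lt_of_not_le hc)
  omega

lemma pin_eq {N t t' o o' : ℕ} (ho : o ≤ N) (ho' : o' ≤ N)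
    (h : t*(N+1)+o = t'*(N+1)+o') : t = t' ∧ o = o' := by
  have h1 : t ≤ t' := pin_le ho ho' h.le
  have h2 : t' ≤ t := pin_le ho' ho h.ge
  have : t = t' := le_antisymm h1 h2
  subst this
  omega

lemma pos_lt (N : ℕ) (x : VN N) : pos N x < N*(N+1) := by
  have key : ∀ t o : ℕ, t < N → o ≤ N → t*(N+1)+o < N*(N+1) := by
    intro t o ht ho
    have h2 := mul_succ_le (N := N) ht
    omega
  cases x with
  | inl p => exact key p.2 p.1 p.2.isLt (le_of_lt p.1.isLt)
  | inr k => exact key k N k.isLt le_rfl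

lemma pos_inj {N : ℕ} {x y : VN N} (h : pos N x = pos N y) : x = y := by
  cases x with
  | inl p =>
    cases y with
    | inl q =>
      obtain ⟨h1, h2⟩ := pin_eq (le_of_lt p.1.isLt) (le_of_lt q.1.isLt) h
      have : p = q := by
        cases p; cases q
        simp only [Prod.mk.injEq]
        exact ⟨Fin.ext h2, Fin.ext h1⟩
      rw [this]
    | inr k =>
      obtain ⟨h1, h2⟩ := pin_eq (le_of_lt p.1.isLt) le_rfl h
      exact absurd h2 (Nat.ne_of_lt p.1.isLt)
  | inr k =>
    cases y with
    | inl q =>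
      obtain ⟨h1, h2⟩ := pin_eq le_rfl (le_of_lt q.1.isLt) h
      exact absurd h2.symm (Nat.ne_of_lt q.1.isLt)
    | inr k' =>
      obtain ⟨h1, h2⟩ := pin_eq le_rfl le_rfl h
      rw [Fin.ext h1]

lemma pos_surj {N : ℕ} (p : ℕ) (hp : p < N*(N+1)) : ∃ x : VN N, pos N x = p := by
  have hN1 : 0 < N+1 := Nat.succ_pos N
  have hd : p / (N+1) < N := by
    rw [Nat.div_lt_iff_lt_mul hN1]; exact hp
  have hm : p % (N+1) < N+1 := Nat.mod_lt _ hN1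
  have hdm := Nat.div_add_mod p (N+1)
  have hcm : (p/(N+1))*(N+1) = (N+1)*(p/(N+1)) := Nat.mul_comm _ _
  by_cases h : p % (N+1) = N
  · exact ⟨.inr ⟨p / (N+1), hd⟩, by simp [pos_inr]; omega⟩
  · have : p % (N+1) < N := by omega
    exact ⟨.inl (⟨p % (N+1), this⟩, ⟨p / (N+1), hd⟩), by simp [pos_inl]; omega⟩


variable {N m c : ℕ}

def CutCond (N m c : ℕ) : Prop :=
  1 ≤ c ∧ c < N*(N+1) ∧
    ((c % (N+1) = 0 ∧ N - c/(N+1) ≤ m) ∨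
     (c % (N+1) = N ∧ 2*N-1-(c/(N+1)) ≤ m) ∨
     (1 ≤ c % (N+1) ∧ c % (N+1) < N ∧ 2*N + (N-1-(c%(N+1)))*N + (N-1-(c/(N+1))) ≤ m))

lemma tmod (t o : ℕ) (ho : o ≤ N) : (t*(N+1)+o) % (N+1) = o := by
  rw [Nat.mul_comm, Nat.mul_add_mod]
  exact Nat.mod_eq_of_lt (by omega)

lemma tdiv (t o : ℕ) (ho : o ≤ N) : (t*(N+1)+o) / (N+1) = t := by
  rw [Nat.mul_comm, Nat.mul_add_div (by omega)]
  simp [Nat.div_eq_of_lt (show o < N+1 by omega)]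

lemma tlt (t o : ℕ) (ht : t < N) (ho : o ≤ N) : t*(N+1)+o < N*(N+1) := by
  have h2 : (t+1)*(N+1) ≤ N*(N+1) := Nat.mul_le_mul_right _ (by omega)
  have : (t+1)*(N+1) = t*(N+1)+(N+1) := by ring
  omega

lemma cutCond_iff (t o : ℕ) (ht : t < N) (ho : o ≤ N) :
    CutCond N m (t*(N+1)+o) ↔
      ((o = 0 ∧ 1 ≤ t ∧ N - t ≤ m) ∨ (o = N ∧ 2*N-1-t ≤ m) ∨
       (1 ≤ o ∧ o < N ∧ 2*N + (N-1-o)*N + (N-1-t) ≤ m)) := by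
  unfold CutCond
  rw [tmod t o ho, tdiv t o ho]
  have h1 := tlt t o ht ho
  have h2 : t = 0 → t*(N+1) = 0 := by intro h; simp [h]
  have h3 : 1 ≤ t → 1 ≤ t*(N+1) := by
    intro h; calc 1 ≤ 1*(N+1) := by omega
    _ ≤ t*(N+1) := Nat.mul_le_mul_right _ h
  constructor
  · rintro ⟨hc1, hc2, h⟩
    rcases h with h | h | h
    · left; refine ⟨h.1, ?_, h.2⟩
      by_contra hc
      have : t = 0 := by omega
      have := h2 this
      omega
    · right; left; exact h
    · right; right; exact h
  · rintro (h | h | h)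
    · exact ⟨by have := h3 h.2.1; omega, h1, Or.inl ⟨h.1, h.2.2⟩⟩
    · exact ⟨by omega, h1, Or.inr (Or.inl h)⟩
    · exact ⟨by omega, h1, Or.inr (Or.inr h)⟩

/-- decompose any cut -/
lemma cutCond_elim (h : CutCond N m c) :
    ∃ t o, t < N ∧ o ≤ N ∧ c = t*(N+1)+o ∧
      ((o = 0 ∧ 1 ≤ t ∧ N - t ≤ m) ∨ (o = N ∧ 2*N-1-t ≤ m) ∨
       (1 ≤ o ∧ o < N ∧ 2*N + (N-1-o)*N + (N-1-t) ≤ m)) := by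
  have h1 := h.1
  have h2 := h.2.1
  have hN1 : 0 < N+1 := Nat.succ_pos N
  refine ⟨c/(N+1), c%(N+1), ?_, ?_, ?_, ?_⟩
  · rw [Nat.div_lt_iff_lt_mul hN1]; exact h2
  · have := Nat.mod_lt c hN1; omega
  · have := Nat.div_add_mod c (N+1)
    have hcm : (c/(N+1))*(N+1) = (N+1)*(c/(N+1)) := Nat.mul_comm _ _
    omega
  · have hh : c = (c/(N+1))*(N+1) + c%(N+1) := by
      have := Nat.div_add_mod c (N+1)
      have hcm : (c/(N+1))*(N+1) = (N+1)*(c/(N+1)) := Nat.mul_comm _ _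
      omega
    have ht : c/(N+1) < N := by rw [Nat.div_lt_iff_lt_mul hN1]; exact h2
    have ho : c%(N+1) ≤ N := by have := Nat.mod_lt c hN1; omega
    rw [← (cutCond_iff (m := m) _ _ ht ho), ← hh]
    exact ⟨h1, h2, h.2.2⟩

lemma cutCond_mono {m m' : ℕ} (h : CutCond N m c) (hm : m ≤ m') : CutCond N m' c := by
  obtain ⟨t, o, ht, ho, rfl, hcl⟩ := cutCond_elim h
  rw [cutCond_iff t o ht ho]
  rcases hcl with h | h | h
  · exact Or.inl ⟨h.1, h.2.1, le_trans h.2.2 hm⟩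
  · exact Or.inr (Or.inl ⟨h.1, le_trans h.2 hm⟩)
  · exact Or.inr (Or.inr ⟨h.1, h.2.1, le_trans h.2.2 hm⟩)

/-- same offset, bigger column: also cut -/
lemma cutCond_mono_col {t t' o : ℕ} (ht' : t' < N) (htt : t ≤ t') (ho : o ≤ N)
    (h : CutCond N m (t*(N+1)+o)) : CutCond N m (t'*(N+1)+o) := by
  have ht : t < N := lt_of_le_of_lt htt ht'
  rw [cutCond_iff t o ht ho] at h
  rw [cutCond_iff t' o ht' ho]
  rcases h with h | h | h
  · exact Or.inl ⟨h.1, by omega, by omega⟩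
  · exact Or.inr (Or.inl ⟨h.1, by omega⟩)
  · refine Or.inr (Or.inr ⟨h.1, h.2.1, by omega⟩)

/-- an interior cut anywhere implies every u-cut -/
lemma uSep_of_interior {t o t' : ℕ} (ht : t < N) (ho1 : 1 ≤ o) (ho2 : o < N) (ht' : t' < N)
    (h : CutCond N m (t*(N+1)+o)) : CutCond N m (t'*(N+1)+N) := by
  rw [cutCond_iff t o ht (by omega)] at h
  rw [cutCond_iff t' N ht' le_rfl]
  rcases h with h | h | h
  · omega
  · omega
  · refine Or.inr (Or.inl ⟨rfl, ?_⟩)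
    have := h.2.2
    omega

/-- any u-cut implies every column cut -/
lemma colSep_of_uSep {t t' : ℕ} (ht : t < N) (ht'1 : 1 ≤ t') (ht' : t' < N)
    (h : CutCond N m (t*(N+1)+N)) : CutCond N m (t'*(N+1)) := by
  rw [cutCond_iff t N ht le_rfl] at h
  have : t'*(N+1) = t'*(N+1)+0 := by omega
  rw [this, cutCond_iff t' 0 ht' (by omega)]
  rcases h with h | h | h
  · omega
  · exact Or.inl ⟨rfl, ht'1, by omega⟩
  · exact absurd h.2.1 (lt_irrefl N)

/-- interior cut implies all later (higher-offset) interior cuts, any column -/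
lemma interior_step {t o t' o' : ℕ} (ht : t < N) (ho1 : 1 ≤ o) (ht' : t' < N)
    (hoo : o < o') (ho' : o' < N)
    (h : CutCond N m (t*(N+1)+o)) : CutCond N m (t'*(N+1)+o') := by
  rw [cutCond_iff t o ht (by omega)] at h
  rw [cutCond_iff t' o' ht' (by omega)]
  refine Or.inr (Or.inr ⟨by omega, ho', ?_⟩)
  rcases h with h | h | h
  · omega
  · omega
  · have key : (N-1-o')*N + N ≤ (N-1-o)*N := by
      have : (N-1-o'+1)*N ≤ (N-1-o)*N := Nat.mul_le_mul_right _ (by omega)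
      have e : (N-1-o'+1)*N = (N-1-o')*N + N := by ring
      omega
    have := h.2.2
    omega

def rel (N m : ℕ) (x y : VN N) : Prop :=
  ∀ c, CutCond N m c → (c ≤ pos N x ↔ c ≤ pos N y)

lemma rel_refl (N m : ℕ) (x : VN N) : rel N m x x := fun _ _ => Iff.rfl
lemma rel_symm {N m : ℕ} {x y : VN N} (h : rel N m x y) : rel N m y x :=
  fun c hc => (h c hc).symm
lemma rel_trans {N m : ℕ} {x y z : VN N} (h : rel N m x y) (h' : rel N m y z) :
    rel N m x z := fun c hc => (h c hc).trans (h' c hc)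

noncomputable def partOf (N m : ℕ) (x : VN N) : Finset (VN N) :=
  Finset.univ.filter (fun y => rel N m x y)

lemma mem_partOf {N m : ℕ} {x y : VN N} : y ∈ partOf N m x ↔ rel N m x y := by
  simp [partOf]

lemma partOf_eq {N m : ℕ} {x y : VN N} (h : rel N m x y) : partOf N m x = partOf N m y := by
  ext z
  simp only [mem_partOf]
  exact ⟨fun hz => rel_trans (rel_symm h) hz, fun hz => rel_trans h hz⟩

noncomputable def PartsSeq (N m : ℕ) : Finset (Finset (VN N)) :=
  Finset.univ.image (partOf N m)

lemma partOf_mem (N m : ℕ) (x : VN N) : partOf N m x ∈ PartsSeq N m :=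
  Finset.mem_image_of_mem _ (Finset.mem_univ x)

lemma mem_PartsSeq {N m : ℕ} {X : Finset (VN N)} :
    X ∈ PartsSeq N m ↔ ∃ x, X = partOf N m x := by
  simp [PartsSeq, eq_comm]

lemma eq_partOf_of_mem {N m : ℕ} {X : Finset (VN N)} {y : VN N}
    (hX : X ∈ PartsSeq N m) (hy : y ∈ X) : X = partOf N m y := by
  obtain ⟨x, rfl⟩ := mem_PartsSeq.mp hX
  exact partOf_eq (mem_partOf.mp hy)

lemma isPartition_PartsSeq (N m : ℕ) : IsPartition (PartsSeq N m) := by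
  constructor
  · intro X hX
    obtain ⟨x, rfl⟩ := mem_PartsSeq.mp hX
    exact ⟨x, mem_partOf.mpr (rel_refl N m x)⟩
  · intro v
    refine ⟨partOf N m v, ⟨partOf_mem N m v, mem_partOf.mpr (rel_refl N m v)⟩, ?_⟩
    rintro Y ⟨hY, hv⟩
    exact eq_partOf_of_mem hY hv

/-- describing a block by bounding cuts -/
lemma mem_block_iff {N m : ℕ} {x : VN N} {a b : ℕ}
    (hxa : a ≤ pos N x) (hxb : pos N x < b)
    (ha : a = 0 ∨ CutCond N m a) (hb : b = N*(N+1) ∨ CutCond N m b)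
    (hmid : ∀ c, CutCond N m c → c ≤ a ∨ b ≤ c) (y : VN N) :
    rel N m x y ↔ (a ≤ pos N y ∧ pos N y < b) := by
  constructor
  · intro h
    constructor
    · rcases ha with rfl | ha
      · omega
      · exact (h a ha).mp hxa
    · rcases hb with rfl | hb
      · exact pos_lt N y
      · by_contra hc
        have := (h b hb).mpr (by omega)
        omega
  · intro ⟨hy1, hy2⟩ c hc
    rcases hmid c hc with h | h
    · constructor <;> intro _ <;> omega
    · constructor <;> intro hh <;> omega

lemma rel_of_no_cut_between {N m : ℕ} {x y : VN N}
    (h : ∀ c, CutCond N m c → ¬ (min (pos N x) (pos N y) < c ∧ c ≤ max (pos N x) (pos N y))) :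
    rel N m x y := by
  intro c hc
  have := h c hc
  constructor <;> intro hh <;> by_contra hcon <;>
    [exact this ⟨by omega, by omega⟩; exact this ⟨by omega, by omega⟩]

lemma GN_adj_inl_inl {N : ℕ} {r t r' t' : Fin N} :
    (GN N).Adj (.inl (r, t)) (.inl (r', t')) ↔
      (r = r' ∧ ((t:ℕ)+1 = (t':ℕ) ∨ (t':ℕ)+1 = (t:ℕ))) := by
  simp only [GN, SimpleGraph.fromRel_adj]
  constructor
  · rintro ⟨hne, h | h⟩
    · exact ⟨h.1, Or.inl h.2⟩
    · exact ⟨h.1.symm, Or.inr h.2⟩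
  · rintro ⟨rfl, h | h⟩
    · exact ⟨by simp [Prod.ext_iff]; intro h'; omega, Or.inl ⟨rfl, h⟩⟩
    · exact ⟨by simp [Prod.ext_iff]; intro h'; omega, Or.inr ⟨rfl, h⟩⟩

lemma GN_adj_inl_inr {N : ℕ} {r t : Fin N} {k : Fin N} :
    (GN N).Adj (.inl (r, t)) (.inr k) ↔ t = k := by
  simp only [GN, SimpleGraph.fromRel_adj]
  constructor
  · rintro ⟨hne, h | h⟩
    · exact h
    · exact h.elim
  · rintro rfl
    exact ⟨by simp, Or.inl rfl⟩

lemma GN_adj_inr_inr {N : ℕ} {k k' : Fin N} :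
    ¬ (GN N).Adj (.inr k) (.inr k') := by
  simp [GN, SimpleGraph.fromRel_adj]

lemma GN_adj_inr_inl {N : ℕ} {r t : Fin N} {k : Fin N} :
    (GN N).Adj (.inr k) (.inl (r, t)) ↔ t = k :=
  (GN N).adj_comm _ _ |>.trans GN_adj_inl_inr

/-- bounding red degree via three candidate vertices -/
lemma redDeg_le_three {N m : ℕ} (X : Finset (VN N)) (q1 q2 q3 : VN N)
    (h : ∀ Y ∈ PartsSeq N m, RedAdj (GN N) X Y → q1 ∈ Y ∨ q2 ∈ Y ∨ q3 ∈ Y) :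
    redDegree (GN N) (PartsSeq N m) X ≤ 3 := by
  have hsub : {Y : Finset (VN N) | Y ∈ PartsSeq N m ∧ RedAdj (GN N) X Y} ⊆
      {partOf N m q1, partOf N m q2, partOf N m q3} := by
    rintro Y ⟨hY, hred⟩
    rcases h Y hY hred with hq | hq | hq
    · exact Or.inl (eq_partOf_of_mem hY hq)
    · exact Or.inr (Or.inl (eq_partOf_of_mem hY hq))
    · exact Or.inr (Or.inr (eq_partOf_of_mem hY hq))
  calc redDegree (GN N) (PartsSeq N m) X
      ≤ ({partOf N m q1, partOf N m q2, partOf N m q3} : Set (Finset (VN N))).ncard :=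
        Set.ncard_le_ncard hsub (Set.toFinite _)
    _ ≤ 3 := by
        apply le_trans (Set.ncard_insert_le _ _)
        have := Set.ncard_insert_le (partOf N m q2) ({partOf N m q3} : Set (Finset (VN N)))
        simp [Set.ncard_singleton] at this ⊢
        omega

lemma pos_decode {N : ℕ} (y : VN N) :
    ∃ (t : Fin N) (o : ℕ), o ≤ N ∧ pos N y = (t:ℕ)*(N+1)+o ∧
      ((∃ ho : o < N, y = .inl (⟨o, ho⟩, t)) ∨ (o = N ∧ y = .inr t)) := by
  cases y with
  | inl p =>
    exact ⟨p.2, p.1, le_of_lt p.1.isLt, rfl, Or.inl ⟨p.1.isLt, by simp⟩⟩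
  | inr k => exact ⟨k, N, le_rfl, rfl, Or.inr ⟨rfl, rfl⟩⟩

lemma pin_range {N t tc oc o' : ℕ} (hoc : oc ≤ N) (ho' : o' ≤ N)
    (h1 : t*(N+1) < tc*(N+1)+oc) (h2 : tc*(N+1)+oc ≤ t*(N+1)+o') :
    tc = t ∧ 1 ≤ oc ∧ oc ≤ o' := by
  have ha : t ≤ tc := pin_le (o := 0) (Nat.zero_le N) hoc (by omega)
  have hb : tc ≤ t := pin_le hoc ho' h2
  have : tc = t := le_antisymm hb ha
  subst this
  omega

/-- once the u-cut of column `t` is present, `u_t` is in a singleton part -/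
lemma u_block {N m t : ℕ} (ht : t < N) (hu : CutCond N m (t*(N+1)+N)) (z : VN N) :
    rel N m (.inr ⟨t, ht⟩) z ↔ z = .inr ⟨t, ht⟩ := by
  have hb : t*(N+1)+N+1 = N*(N+1) ∨ CutCond N m (t*(N+1)+N+1) := by
    by_cases hts : t+1 = N
    · left
      have : (t+1)*(N+1) = t*(N+1)+N+1 := by ring
      rw [← this, hts]
    · right
      have h2 := colSep_of_uSep ht (show 1 ≤ t+1 by omega) (by omega) hu
      have : (t+1)*(N+1) = t*(N+1)+N+1 := by ring
      rwa [this] at h2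
  have hmb := mem_block_iff (N := N) (m := m) (x := .inr ⟨t, ht⟩)
    (a := t*(N+1)+N) (b := t*(N+1)+N+1)
    (by simp [pos_inr]) (by simp [pos_inr]) (Or.inr hu) hb
    (fun c hc => by omega) z
  rw [hmb]
  constructor
  · intro h
    have : pos N z = t*(N+1)+N := by omega
    exact pos_inj (by rw [this]; simp [pos_inr])
  · rintro rfl
    simp [pos_inr]

lemma pin_range' {N t tc oc o' : ℕ} (hoc : oc ≤ N) (ho' : o' ≤ N)
    (h1 : t*(N+1) ≤ tc*(N+1)+oc) (h2 : tc*(N+1)+oc < t*(N+1)+o') :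
    tc = t ∧ oc < o' := by
  have ha : t ≤ tc := pin_le (o := 0) (Nat.zero_le N) hoc (by omega)
  have hb : tc ≤ t := pin_le hoc ho' (by omega)
  have : tc = t := le_antisymm hb ha
  subst this
  omega

/-- Shape A: part = rows `[0,i)` of column `t`. -/
lemma shapeA {N m t i : ℕ} (ht : t < N) (hi1 : 1 ≤ i) (hiN : i ≤ N)
    (hcut : CutCond N m (t*(N+1)+i))
    (hno : ∀ o, 1 ≤ o → o < i → ¬ CutCond N m (t*(N+1)+o))
    (hleft : t = 0 ∨ CutCond N m (t*(N+1)))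
    (r₀ : Fin N) (hr₀ : (r₀:ℕ) < i) :
    redDegree (GN N) (PartsSeq N m) (partOf N m (.inl (r₀, ⟨t, ht⟩))) ≤ 3 := by
  have hN0 : 0 < N := by omega
  set x₀ : VN N := (.inl (r₀, ⟨t, ht⟩) : VN N) with hx₀
  have hposx : pos N x₀ = t*(N+1)+(r₀:ℕ) := rfl
  have memX : ∀ y, y ∈ partOf N m x₀ ↔ (t*(N+1) ≤ pos N y ∧ pos N y < t*(N+1)+i) := by
    intro y
    rw [mem_partOf]
    refine mem_block_iff (by omega) (by omega) ?_ (Or.inr hcut) ?_ y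
    · rcases hleft with h | h
      · left; simp [h]
      · exact Or.inr h
    · intro c hc
      by_contra hcon
      push_neg at hcon
      obtain ⟨tc, oc, htc, hoc, rfl, _⟩ := cutCond_elim hc
      obtain ⟨rfl, h1, h2⟩ := pin_range hoc hiN hcon.1 (by omega)
      exact hno oc h1 (by omega) hc
  have memX' : ∀ y, y ∈ partOf N m x₀ ↔ ∃ r : Fin N, (r:ℕ) < i ∧ y = .inl (r, ⟨t, ht⟩) := by
    intro y
    rw [memX]
    constructor
    · intro ⟨h1, h2⟩
      obtain ⟨tc, o, ho, hpos, hy⟩ := pos_decode y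
      rw [hpos] at h1 h2
      obtain ⟨htc, hoi⟩ := pin_range' ho hiN h1 h2
      rcases hy with ⟨hoN, rfl⟩ | ⟨rfl, rfl⟩
      · exact ⟨⟨o, hoN⟩, hoi, by rw [show tc = (⟨t, ht⟩ : Fin N) from Fin.ext htc]⟩
      · omega
    · rintro ⟨r, hri, rfl⟩
      have : pos N (.inl (r, ⟨t, ht⟩) : VN N) = t*(N+1)+(r:ℕ) := rfl
      omega
  -- candidates
  refine redDeg_le_three _
    (.inl (⟨0, hN0⟩, ⟨t-1, by omega⟩))
    (.inl (⟨0, hN0⟩, ⟨min (t+1) (N-1), by omega⟩))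
    (.inl (⟨i-1, by omega⟩, ⟨min (t+1) (N-1), by omega⟩)) ?_
  rintro Y hY ⟨⟨hXY, x', hx', y, hy, hadj⟩, hnb⟩
  obtain ⟨r', hr'i, rfl⟩ := (memX' x').mp hx'
  have hYy : Y = partOf N m y := eq_partOf_of_mem hY hy
  cases y with
  | inl q =>
    obtain ⟨r'', t''⟩ := q
    rw [GN_adj_inl_inl] at hadj
    obtain ⟨rfl, hcol⟩ := hadj
    simp only [Fin.val_mk] at hcol  -- (t : ℕ) coercion
    rcases hcol with hcol | hcol
    · -- right column t'' = t+1
      have ht'' : (t'':ℕ) = t+1 := by omega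
      have htN : t+1 < N := by have := t''.isLt; omega
      by_cases hri : (r':ℕ) = i-1
      · -- y is the third candidate
        right; right
        rw [hYy, mem_partOf]
        have : (Sum.inl (⟨i-1, by omega⟩, ⟨min (t+1) (N-1), by omega⟩) : VN N)
            = .inl (r', t'') := by
          congr 1
          exact Prod.ext (Fin.ext (by simp [hri])) (Fin.ext (by simp [ht'']; omega))
        rw [this]
        exact rel_refl _ _ _
      · -- y relates to the second candidate
        right; left
        rw [hYy, mem_partOf]
        apply rel_symm
        apply rel_of_no_cut_between
        intro c hc hcon
        have hpq : pos N (Sum.inl (⟨0, hN0⟩, ⟨min (t+1) (N-1), by omega⟩) : VN N)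
            = (t+1)*(N+1) := by
          simp [pos_inl]; omega
        have hpy : pos N (Sum.inl (r', t'') : VN N) = (t+1)*(N+1)+(r':ℕ) := by
          simp [pos_inl, ht'']
        rw [hpq, hpy] at hcon
        obtain ⟨tc, oc, htc, hoc, rfl, _⟩ := cutCond_elim hc
        have hb1 : (t+1)*(N+1) < tc*(N+1)+oc := by omega
        have hb2 : tc*(N+1)+oc ≤ (t+1)*(N+1)+(r':ℕ) := by omega
        obtain ⟨rfl, hoc1, hoc2⟩ := pin_range hoc (le_of_lt r'.isLt) hb1 hb2
        -- cut (t+1, oc) with 1 ≤ oc ≤ r' ≤ i-2 gives cut (t, oc+1), contradiction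
        exact hno (oc+1) (by omega) (by omega)
          (interior_step htc hoc1 ht (by omega) (by omega) hc)
    · -- left column t'' = t-1
      have ht1 : 1 ≤ t := by omega
      have ht'' : (t'':ℕ) = t-1 := by omega
      left
      rw [hYy, mem_partOf]
      apply rel_symm
      apply rel_of_no_cut_between
      intro c hc hcon
      have hpq : pos N (Sum.inl (⟨0, hN0⟩, ⟨t-1, by omega⟩) : VN N) = (t-1)*(N+1) := by
        simp [pos_inl]
      have hpy : pos N (Sum.inl (r', t'') : VN N) = (t-1)*(N+1)+(r':ℕ) := by
        simp [pos_inl, ht'']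
      rw [hpq, hpy] at hcon
      obtain ⟨tc, oc, htc, hoc, rfl, _⟩ := cutCond_elim hc
      have hb1 : (t-1)*(N+1) < tc*(N+1)+oc := by omega
      have hb2 : tc*(N+1)+oc ≤ (t-1)*(N+1)+(r':ℕ) := by omega
      obtain ⟨rfl, hoc1, hoc2⟩ := pin_range hoc (le_of_lt r'.isLt) hb1 hb2
      -- cut (t-1, oc) with 1 ≤ oc ≤ r' < i gives cut (t, oc), contradiction
      exact hno oc hoc1 (by omega) (cutCond_mono_col ht (by omega) (by omega) hc)
  | inr k =>
    exfalso
    rw [GN_adj_inl_inr] at hadj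
    have hk : k = (⟨t, ht⟩ : Fin N) := hadj.symm
    subst hk
    have hu : CutCond N m (t*(N+1)+N) := by
      by_cases hiN' : i = N
      · rwa [hiN'] at hcut
      · exact uSep_of_interior ht hi1 (by omega) ht hcut
    apply hnb
    intro xx hxx yy hyy
    rw [hYy] at hyy
    have hyY : yy = .inr ⟨t, ht⟩ := (u_block ht hu yy).mp (mem_partOf.mp hyy)
    obtain ⟨rr, hrr, rfl⟩ := (memX' xx).mp hxx
    rw [hyY, GN_adj_inl_inr]

/-- Shape D: part = full column `t` including `u_t`. -/
lemma shapeD {N m t : ℕ} (ht : t < N)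
    (hno : ∀ o, 1 ≤ o → o ≤ N → ¬ CutCond N m (t*(N+1)+o))
    (hleft : t = 0 ∨ CutCond N m (t*(N+1)))
    (hright : t+1 = N ∨ CutCond N m ((t+1)*(N+1)))
    (x₀ : VN N) (hxa : t*(N+1) ≤ pos N x₀) (hxb : pos N x₀ < (t+1)*(N+1)) :
    redDegree (GN N) (PartsSeq N m) (partOf N m x₀) ≤ 3 := by
  have hN0 : 0 < N := by omega
  have harith : (t+1)*(N+1) = t*(N+1)+(N+1) := by ring
  have memX : ∀ y, y ∈ partOf N m x₀ ↔ (t*(N+1) ≤ pos N y ∧ pos N y < (t+1)*(N+1)) := by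
    intro y
    rw [mem_partOf]
    refine mem_block_iff hxa hxb ?_ ?_ ?_ y
    · rcases hleft with h | h
      · left; simp [h]
      · exact Or.inr h
    · rcases hright with h | h
      · left; rw [← h]
      · exact Or.inr h
    · intro c hc
      by_contra hcon
      push_neg at hcon
      obtain ⟨tc, oc, htc, hoc, rfl, _⟩ := cutCond_elim hc
      have hb1 : t*(N+1) < tc*(N+1)+oc := hcon.1
      have hb2 : tc*(N+1)+oc ≤ t*(N+1)+N := by omega
      obtain ⟨rfl, h1, h2⟩ := pin_range hoc le_rfl hb1 hb2
      exact hno oc h1 h2 hc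
  refine redDeg_le_three _
    (.inl (⟨0, hN0⟩, ⟨t-1, by omega⟩))
    (.inl (⟨0, hN0⟩, ⟨min (t+1) (N-1), by omega⟩))
    (.inl (⟨0, hN0⟩, ⟨min (t+1) (N-1), by omega⟩)) ?_
  rintro Y hY ⟨⟨hXY, x', hx', y, hy, hadj⟩, hnb⟩
  have hYy : Y = partOf N m y := eq_partOf_of_mem hY hy
  have hynX : ¬ (t*(N+1) ≤ pos N y ∧ pos N y < (t+1)*(N+1)) := by
    intro hmem
    exact hXY (((eq_partOf_of_mem (partOf_mem N m x₀) ((memX y).mpr hmem))).trans hYy.symm)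
  have hx'X := (memX x').mp hx'
  cases x' with
  | inl p =>
    obtain ⟨r', t'⟩ := p
    have ht' : (t':ℕ) = t := by
      have hpx : pos N (Sum.inl (r', t') : VN N) = (t':ℕ)*(N+1)+(r':ℕ) := rfl
      rw [hpx] at hx'X
      have h1 : t ≤ (t':ℕ) := pin_le (N := N) (o := 0) (Nat.zero_le N) (le_of_lt r'.isLt) (by omega)
      have h2 : (t':ℕ) ≤ t := pin_le (N := N) (le_of_lt r'.isLt) le_rfl (by omega)
      omega
    cases y with
    | inl q =>
      obtain ⟨r'', t''⟩ := q
      rw [GN_adj_inl_inl] at hadj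
      obtain ⟨rfl, hcol⟩ := hadj
      rw [ht'] at hcol
      have hpy : pos N (Sum.inl (r', t'') : VN N) = (t'':ℕ)*(N+1)+(r':ℕ) := rfl
      rcases hcol with hcol | hcol
      · -- right column
        have htN : t+1 < N := by have := t''.isLt; omega
        right; left
        rw [hYy, mem_partOf]
        apply rel_symm
        apply rel_of_no_cut_between
        intro c hc hcon
        have hpq : pos N (Sum.inl (⟨0, hN0⟩, ⟨min (t+1) (N-1), by omega⟩) : VN N)
            = (t+1)*(N+1) := by simp [pos_inl]; omega
        rw [hpq, hpy, ← hcol] at hcon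
        obtain ⟨tc, oc, htc, hoc, rfl, _⟩ := cutCond_elim hc
        have hb1 : (t+1)*(N+1) < tc*(N+1)+oc := by omega
        have hb2 : tc*(N+1)+oc ≤ (t+1)*(N+1)+(r':ℕ) := by omega
        obtain ⟨rfl, hoc1, hoc2⟩ := pin_range hoc (le_of_lt r'.isLt) hb1 hb2
        by_cases hoN : oc+1 < N
        · exact hno (oc+1) (by omega) (by omega)
            (interior_step htc hoc1 ht (by omega) hoN hc)
        · -- oc = N-1 : interior cut in column t+1 forces the u-cut in column t
          exact hno N (by omega) le_rfl (uSep_of_interior htc hoc1 (by omega) ht hc)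
      · -- left column
        have ht1 : 1 ≤ t := by have := hynX; by_contra h; push_neg at h; omega
        left
        rw [hYy, mem_partOf]
        apply rel_symm
        apply rel_of_no_cut_between
        intro c hc hcon
        have hpq : pos N (Sum.inl (⟨0, hN0⟩, ⟨t-1, by omega⟩) : VN N) = (t-1)*(N+1) := by
          simp [pos_inl]
        have ht'' : (t'':ℕ) = t-1 := by omega
        rw [hpq, hpy, ht''] at hcon
        obtain ⟨tc, oc, htc, hoc, rfl, _⟩ := cutCond_elim hc
        have hb1 : (t-1)*(N+1) < tc*(N+1)+oc := by omega
        have hb2 : tc*(N+1)+oc ≤ (t-1)*(N+1)+(r':ℕ) := by omega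
        obtain ⟨rfl, hoc1, hoc2⟩ := pin_range hoc (le_of_lt r'.isLt) hb1 hb2
        exact hno oc hoc1 (by omega) (cutCond_mono_col ht (by omega) (by omega) hc)
    | inr k =>
      exfalso
      rw [GN_adj_inl_inr] at hadj
      apply hynX
      have hpy : pos N (Sum.inr k : VN N) = (k:ℕ)*(N+1)+N := rfl
      have hk : (k:ℕ) = t := by rw [← hadj, ht']
      rw [hpy, hk]
      omega
  | inr k =>
    exfalso
    have hk : (k:ℕ) = t := by
      have hpx : pos N (Sum.inr k : VN N) = (k:ℕ)*(N+1)+N := rfl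
      rw [hpx] at hx'X
      have h1 : t ≤ (k:ℕ) := pin_le (N := N) (o := 0) (Nat.zero_le N) le_rfl (by omega)
      have h2 : (k:ℕ) ≤ t := pin_le (N := N) le_rfl le_rfl (by omega)
      omega
    cases y with
    | inl q =>
      obtain ⟨r'', t''⟩ := q
      rw [GN_adj_inr_inl] at hadj
      apply hynX
      have hpy : pos N (Sum.inl (r'', t'') : VN N) = (t'':ℕ)*(N+1)+(r'':ℕ) := rfl
      have ht'' : (t'':ℕ) = t := by rw [hadj]; exact hk
      rw [hpy, ht'']
      have := r''.isLt
      omega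
    | inr k' => exact GN_adj_inr_inr hadj

/-- Shape E: part = all columns `< k` (prefix block). -/
lemma shapeE {N m k : ℕ} (hk1 : 1 ≤ k) (hkN : k ≤ N)
    (hno : ∀ c, 1 ≤ c → c < k*(N+1) → ¬ CutCond N m c)
    (hb : k = N ∨ CutCond N m (k*(N+1)))
    (x₀ : VN N) (hx : pos N x₀ < k*(N+1)) :
    redDegree (GN N) (PartsSeq N m) (partOf N m x₀) ≤ 3 := by
  have hN0 : 0 < N := by omega
  have memX : ∀ y, y ∈ partOf N m x₀ ↔ pos N y < k*(N+1) := by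
    intro y
    have := mem_block_iff (N := N) (m := m) (x := x₀) (a := 0) (b := k*(N+1))
      (Nat.zero_le _) hx (Or.inl rfl)
      (by rcases hb with h | h
          · left; rw [h]
          · exact Or.inr h)
      (by intro c hc
          by_contra hcon
          push_neg at hcon
          exact hno c hc.1 (by omega) hc) y
    rw [mem_partOf, this]
    omega
  refine redDeg_le_three _
    (.inl (⟨0, hN0⟩, ⟨min k (N-1), by omega⟩))
    (.inl (⟨0, hN0⟩, ⟨min k (N-1), by omega⟩))
    (.inl (⟨0, hN0⟩, ⟨min k (N-1), by omega⟩)) ?_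
  rintro Y hY ⟨⟨hXY, x', hx', y, hy, hadj⟩, hnb⟩
  have hYy : Y = partOf N m y := eq_partOf_of_mem hY hy
  have hynX : ¬ pos N y < k*(N+1) := by
    intro hmem
    exact hXY (((eq_partOf_of_mem (partOf_mem N m x₀) ((memX y).mpr hmem))).trans hYy.symm)
  have hx'X := (memX x').mp hx'
  left
  cases x' with
  | inl p =>
    obtain ⟨r', t'⟩ := p
    have hpx : pos N (Sum.inl (r', t') : VN N) = (t':ℕ)*(N+1)+(r':ℕ) := rfl
    rw [hpx] at hx'X
    have ht'k : (t':ℕ) < k := by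
      by_contra hcc
      push_neg at hcc
      have : k*(N+1) ≤ (t':ℕ)*(N+1) := Nat.mul_le_mul_right _ hcc
      omega
    cases y with
    | inl q =>
      obtain ⟨r'', t''⟩ := q
      rw [GN_adj_inl_inl] at hadj
      obtain ⟨rfl, hcol⟩ := hadj
      have hpy : pos N (Sum.inl (r', t'') : VN N) = (t'':ℕ)*(N+1)+(r':ℕ) := rfl
      rw [hpy] at hynX
      have ht''k : k ≤ (t'':ℕ) := by
        by_contra hcc
        push_neg at hcc
        have h2 : (t'':ℕ)+1 ≤ k := hcc
        have : ((t'':ℕ)+1)*(N+1) ≤ k*(N+1) := Nat.mul_le_mul_right _ h2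
        have h3 : ((t'':ℕ)+1)*(N+1) = (t'':ℕ)*(N+1)+(N+1) := by ring
        have := r'.isLt
        omega
      have ht''eq : (t'':ℕ) = k := by omega
      have hkN' : k < N := by have := t''.isLt; omega
      rw [hYy, mem_partOf]
      apply rel_symm
      apply rel_of_no_cut_between
      intro c hc hcon
      have hpq : pos N (Sum.inl (⟨0, hN0⟩, ⟨min k (N-1), by omega⟩) : VN N)
          = k*(N+1) := by simp [pos_inl]; omega
      rw [hpq, hpy, ht''eq] at hcon
      obtain ⟨tc, oc, htc, hoc, rfl, _⟩ := cutCond_elim hc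
      have hb1 : k*(N+1) < tc*(N+1)+oc := by omega
      have hb2 : tc*(N+1)+oc ≤ k*(N+1)+(r':ℕ) := by omega
      obtain ⟨hktc, hoc1, hoc2⟩ := pin_range hoc (le_of_lt r'.isLt) hb1 hb2
      have hu := uSep_of_interior htc hoc1 (by have := r'.isLt; omega) hN0 hc
      -- u-cut in column 0, i.e. at position N, is below k*(N+1)
      have : (0:ℕ)*(N+1)+N = N := by omega
      rw [this] at hu
      exact hno N (by omega) (by
        have : 1*(N+1) ≤ k*(N+1) := Nat.mul_le_mul_right _ hk1
        omega) hu
    | inr kk =>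
      exfalso
      rw [GN_adj_inl_inr] at hadj
      apply hynX
      have hpy : pos N (Sum.inr kk : VN N) = (kk:ℕ)*(N+1)+N := rfl
      rw [hpy, ← hadj]
      have : ((t':ℕ)+1)*(N+1) ≤ k*(N+1) := Nat.mul_le_mul_right _ ht'k
      have h3 : ((t':ℕ)+1)*(N+1) = (t':ℕ)*(N+1)+(N+1) := by ring
      omega
  | inr kk =>
    exfalso
    have hpx : pos N (Sum.inr kk : VN N) = (kk:ℕ)*(N+1)+N := rfl
    rw [hpx] at hx'X
    have ht'k : (kk:ℕ) < k := by
      by_contra hcc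
      push_neg at hcc
      have : k*(N+1) ≤ (kk:ℕ)*(N+1) := Nat.mul_le_mul_right _ hcc
      omega
    cases y with
    | inl q =>
      obtain ⟨r'', t''⟩ := q
      rw [GN_adj_inr_inl] at hadj
      apply hynX
      have hpy : pos N (Sum.inl (r'', t'') : VN N) = (t'':ℕ)*(N+1)+(r'':ℕ) := rfl
      rw [hpy, hadj]
      have : ((kk:ℕ)+1)*(N+1) ≤ k*(N+1) := Nat.mul_le_mul_right _ ht'k
      have h3 : ((kk:ℕ)+1)*(N+1) = (kk:ℕ)*(N+1)+(N+1) := by ring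
      have := r''.isLt
      omega
    | inr k' => exact GN_adj_inr_inr hadj

/-- Shape U: `u_t` is alone in its part. -/
lemma shapeU {N m t : ℕ} (ht : t < N) (hu : CutCond N m (t*(N+1)+N)) :
    redDegree (GN N) (PartsSeq N m) (partOf N m (.inr ⟨t, ht⟩)) ≤ 3 := by
  have hN0 : 0 < N := by omega
  refine redDeg_le_three _ (.inr ⟨t, ht⟩) (.inr ⟨t, ht⟩) (.inr ⟨t, ht⟩) ?_
  rintro Y hY ⟨⟨hXY, x', hx', y, hy, hadj⟩, hnb⟩
  exfalso
  have hx'u : x' = .inr ⟨t, ht⟩ := (u_block ht hu x').mp (mem_partOf.mp hx')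
  subst hx'u
  have hYy : Y = partOf N m y := eq_partOf_of_mem hY hy
  cases y with
  | inl q =>
    obtain ⟨r'', t''⟩ := q
    rw [GN_adj_inr_inl] at hadj
    have ht'' : (t'':ℕ) = t := by rw [hadj]
    apply hnb
    intro xx hxx yy hyy
    have hxxu : xx = .inr ⟨t, ht⟩ := (u_block ht hu xx).mp (mem_partOf.mp hxx)
    subst hxxu
    rw [hYy, mem_partOf] at hyy
    -- yy is in column t below the u-cut
    have hyb : pos N yy < t*(N+1)+N := by
      have hpy : pos N (Sum.inl (r'', t'') : VN N) = (t'':ℕ)*(N+1)+(r'':ℕ) := rfl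
      have := (hyy (t*(N+1)+N) hu)
      rw [hpy, ht''] at this
      have hrN := r''.isLt
      omega
    have hya : t*(N+1) ≤ pos N yy := by
      by_cases ht0 : t = 0
      · have hz : t*(N+1) = 0 := by rw [ht0]; ring
        omega
      · have hcol : CutCond N m (t*(N+1)) := by
          have := colSep_of_uSep ht (by omega) ht hu
          simpa using this
        have hpy : pos N (Sum.inl (r'', t'') : VN N) = (t'':ℕ)*(N+1)+(r'':ℕ) := rfl
        have := (hyy (t*(N+1)) hcol)
        rw [hpy, ht''] at this
        omega
    obtain ⟨tc, o, ho, hpos, hdec⟩ := pos_decode yy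
    rw [hpos] at hya hyb
    obtain ⟨htct, hoN⟩ := pin_range' ho le_rfl hya hyb
    rcases hdec with ⟨holt, rfl⟩ | ⟨rfl, rfl⟩
    · rw [GN_adj_inr_inl]
      exact Fin.ext htct
    · omega
  | inr k' => exact GN_adj_inr_inr hadj

/-- Shape R: a path vertex `(r,t)` with `r ≥ 1` alone in its part. -/
lemma shapeR {N m t r : ℕ} (ht : t < N) (hr1 : 1 ≤ r) (hrN : r < N)
    (hc1 : CutCond N m (t*(N+1)+r)) (hc2 : CutCond N m (t*(N+1)+(r+1))) :
    redDegree (GN N) (PartsSeq N m) (partOf N m (.inl (⟨r, hrN⟩, ⟨t, ht⟩))) ≤ 3 := by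
  have hN0 : 0 < N := by omega
  set x₀ : VN N := (.inl (⟨r, hrN⟩, ⟨t, ht⟩) : VN N) with hx₀
  have hpx : pos N x₀ = t*(N+1)+r := by simp [hx₀, pos_inl]
  have memX : ∀ y, y ∈ partOf N m x₀ ↔ y = x₀ := by
    intro y
    rw [mem_partOf]
    have := mem_block_iff (N := N) (m := m) (x := x₀) (a := t*(N+1)+r) (b := t*(N+1)+(r+1))
      (by omega) (by omega) (Or.inr hc1) (Or.inr hc2) (fun c hc => by omega) y
    rw [this]
    constructor
    · intro h
      have : pos N y = t*(N+1)+r := by omega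
      exact pos_inj (by rw [this, hpx])
    · rintro rfl
      omega
  have hu : CutCond N m (t*(N+1)+N) := by
    by_cases hr2 : r+1 = N
    · rwa [hr2] at hc2
    · exact uSep_of_interior ht (by omega) (by omega) ht hc2
  refine redDeg_le_three _
    (.inl (⟨r, hrN⟩, ⟨t-1, by omega⟩))
    (.inl (⟨r, hrN⟩, ⟨min (t+1) (N-1), by omega⟩))
    (.inl (⟨r, hrN⟩, ⟨min (t+1) (N-1), by omega⟩)) ?_
  rintro Y hY ⟨⟨hXY, x', hx', y, hy, hadj⟩, hnb⟩
  have hx'e : x' = x₀ := (memX x').mp hx'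
  subst hx'e
  have hYy : Y = partOf N m y := eq_partOf_of_mem hY hy
  cases y with
  | inl q =>
    obtain ⟨r'', t''⟩ := q
    rw [hx₀, GN_adj_inl_inl] at hadj
    obtain ⟨hr'', hcol⟩ := hadj
    simp only [Fin.val_mk] at hcol
    rcases hcol with hcol | hcol
    · right; left
      have : (Sum.inl (⟨r, hrN⟩, ⟨min (t+1) (N-1), by omega⟩) : VN N) = .inl (r'', t'') := by
        congr 1
        exact Prod.ext (by rw [← hr'']) (Fin.ext (by simp; have := t''.isLt; omega))
      rw [this]
      exact hy
    · left
      have : (Sum.inl (⟨r, hrN⟩, ⟨t-1, by omega⟩) : VN N) = .inl (r'', t'') := by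
        congr 1
        exact Prod.ext (by rw [← hr'']) (Fin.ext (by simp; omega))
      rw [this]
      exact hy
  | inr k =>
    exfalso
    rw [hx₀, GN_adj_inl_inr] at hadj
    have hk : k = (⟨t, ht⟩ : Fin N) := hadj.symm
    subst hk
    apply hnb
    intro xx hxx yy hyy
    have hxxe : xx = x₀ := (memX xx).mp hxx
    subst hxxe
    rw [hYy] at hyy
    have : yy = .inr ⟨t, ht⟩ := (u_block ht hu yy).mp (mem_partOf.mp hyy)
    rw [this, hx₀, GN_adj_inl_inr]

attribute [local instance] Classical.propDecidable

/-- A column with no offset cuts: its block is a full column or a prefix of columns. -/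
lemma shapeDE {N m t : ℕ} (ht : t < N)
    (hno2 : ∀ o, 1 ≤ o → o ≤ N → ¬ CutCond N m (t*(N+1)+o))
    (x : VN N) (hxa : t*(N+1) ≤ pos N x) (hxb : pos N x < (t+1)*(N+1)) :
    redDegree (GN N) (PartsSeq N m) (partOf N m x) ≤ 3 := by
  have hN0 : 0 < N := by omega
  by_cases hcol : 1 ≤ t ∧ CutCond N m (t*(N+1))
  · -- shape D
    refine shapeD ht hno2 (Or.inr hcol.2) ?_ x hxa hxb
    by_cases htN : t+1 = N
    · exact Or.inl htN
    · refine Or.inr ?_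
      have h0 : CutCond N m (t*(N+1)+0) := by
        rw [Nat.add_zero]; exact hcol.2
      have := cutCond_mono_col (t' := t+1) (by omega) (by omega) (Nat.zero_le N) h0
      rwa [Nat.add_zero] at this
  · -- shape E
    have hex : ∃ k', t+1 ≤ k' ∧ (k' = N ∨ CutCond N m (k'*(N+1))) :=
      ⟨N, by omega, Or.inl rfl⟩
    obtain ⟨hk1, hkb⟩ := Nat.find_spec hex
    have hkmin : ∀ k', k' < Nat.find hex → ¬ (t+1 ≤ k' ∧ (k' = N ∨ CutCond N m (k'*(N+1)))) :=
      fun k' h => Nat.find_min hex h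
    have hkN : Nat.find hex ≤ N := Nat.find_min' hex ⟨by omega, Or.inl rfl⟩
    set k := Nat.find hex with hkdef
    have hmono : (t+1)*(N+1) ≤ k*(N+1) := Nat.mul_le_mul_right _ hk1
    refine shapeE (by omega) hkN ?_ hkb x (by omega)
    intro c h1 h2 hc
    obtain ⟨tc, oc, htc, hoc, rfl, hclause⟩ := cutCond_elim hc
    have htck : tc < k := by
      by_contra hcc
      push_neg at hcc
      have : k*(N+1) ≤ tc*(N+1) := Nat.mul_le_mul_right _ hcc
      omega
    rcases hclause with ⟨hoc0, htc1, _⟩ | ⟨hocN, _⟩ | ⟨hoc1, hocN, _⟩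
    · -- a column cut
      subst hoc0
      by_cases htt : t+1 ≤ tc
      · exact hkmin tc htck ⟨htt, Or.inr (by rwa [Nat.add_zero] at hc)⟩
      · -- tc ≤ t, so column t would be separated too
        have htpos : 1 ≤ t := by omega
        have := cutCond_mono_col (t' := t) ht (by omega) (Nat.zero_le N) hc
        rw [Nat.add_zero] at this
        exact hcol ⟨htpos, this⟩
    · -- a u-cut
      rw [hocN] at hc
      by_cases htt : t+1 ≤ tc
      · have hcs := colSep_of_uSep (t' := tc) htc (by omega) (by omega) hc
        exact hkmin tc htck ⟨htt, Or.inr hcs⟩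
      · -- tc ≤ t: propagate the u-cut to column t
        have := cutCond_mono_col (t' := t) ht (by omega) le_rfl hc
        exact hno2 N (by omega) le_rfl this
    · -- an interior cut: forces the u-cut in column t
      exact hno2 N (by omega) le_rfl (uSep_of_interior htc hoc1 hocN ht hc)

/-- Main red-degree bound for every part of every partition in the sequence. -/
lemma red_bound {N : ℕ} (hN : 1 ≤ N) (m : ℕ) (x : VN N) :
    redDegree (GN N) (PartsSeq N m) (partOf N m x) ≤ 3 := by
  cases x with
  | inl p =>
    obtain ⟨r, tf⟩ := p
    have ht : (tf:ℕ) < N := tf.isLt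
    by_cases hcase1 : ∃ o, 1 ≤ o ∧ o ≤ (r:ℕ) ∧ CutCond N m ((tf:ℕ)*(N+1)+o)
    · -- singleton path vertex
      obtain ⟨o, ho1, hor, hoc⟩ := hcase1
      have hr1 : 1 ≤ (r:ℕ) := le_trans ho1 hor
      have hc1 : CutCond N m ((tf:ℕ)*(N+1)+(r:ℕ)) := by
        by_cases heq : o = (r:ℕ)
        · rwa [heq] at hoc
        · exact interior_step ht ho1 ht (by omega) r.isLt hoc
      have hc2 : CutCond N m ((tf:ℕ)*(N+1)+((r:ℕ)+1)) := by
        by_cases heq : (r:ℕ)+1 = N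
        · rw [heq]
          exact uSep_of_interior ht hr1 r.isLt ht hc1
        · exact interior_step ht hr1 ht (by omega) (by omega) hc1
      exact shapeR (m := m) ht hr1 r.isLt hc1 hc2
    · push_neg at hcase1
      by_cases hcase2 : ∃ o, (CutCond N m ((tf:ℕ)*(N+1)+o) ∧ 1 ≤ o ∧ o ≤ N)
      · -- shape A
        obtain ⟨hcut, hi1, hiN⟩ := Nat.find_spec hcase2
        have hno : ∀ o, 1 ≤ o → o < Nat.find hcase2 → ¬ CutCond N m ((tf:ℕ)*(N+1)+o) := by
          intro o h1 h2 hc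
          exact (Nat.find_min hcase2 h2) ⟨hc, h1, by omega⟩
        have hri : (r:ℕ) < Nat.find hcase2 := by
          by_contra hcc
          push_neg at hcc
          exact hcase1 _ hi1 hcc hcut
        have huS : CutCond N m ((tf:ℕ)*(N+1)+N) := by
          by_cases hiNe : Nat.find hcase2 = N
          · rwa [hiNe] at hcut
          · exact uSep_of_interior ht hi1 (by omega) ht hcut
        have hleft : (tf:ℕ) = 0 ∨ CutCond N m ((tf:ℕ)*(N+1)) := by
          by_cases ht0 : (tf:ℕ) = 0
          · exact Or.inl ht0
          · exact Or.inr (colSep_of_uSep ht (by omega) ht huS)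
        exact shapeA ht hi1 hiN hcut hno hleft r hri
      · push_neg at hcase2
        have hno2 : ∀ o, 1 ≤ o → o ≤ N → ¬ CutCond N m ((tf:ℕ)*(N+1)+o) := by
          intro o h1 h2 hc
          have := hcase2 o hc h1
          omega
        have harith : ((tf:ℕ)+1)*(N+1) = (tf:ℕ)*(N+1)+(N+1) := by ring
        refine shapeDE ht hno2 _ ?_ ?_
        · have : pos N (Sum.inl (r, tf) : VN N) = (tf:ℕ)*(N+1)+(r:ℕ) := rfl
          omega
        · have : pos N (Sum.inl (r, tf) : VN N) = (tf:ℕ)*(N+1)+(r:ℕ) := rfl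
          have := r.isLt
          omega
  | inr k =>
    have ht : (k:ℕ) < N := k.isLt
    by_cases hu : CutCond N m ((k:ℕ)*(N+1)+N)
    · exact shapeU ht hu
    · have hno2 : ∀ o, 1 ≤ o → o ≤ N → ¬ CutCond N m ((k:ℕ)*(N+1)+o) := by
        intro o h1 h2 hc
        by_cases ho : o = N
        · rw [ho] at hc; exact hu hc
        · exact hu (uSep_of_interior ht h1 (by omega) ht hc)
      have harith : ((k:ℕ)+1)*(N+1) = (k:ℕ)*(N+1)+(N+1) := by ring
      refine shapeDE ht hno2 _ ?_ ?_
      · have : pos N (Sum.inr k : VN N) = (k:ℕ)*(N+1)+N := rfl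
        omega
      · have : pos N (Sum.inr k : VN N) = (k:ℕ)*(N+1)+N := rfl
        omega

lemma divmod_unique {N q1 r1 q2 r2 : ℕ} (h1 : r1 < N) (h2 : r2 < N)
    (h : q1*N+r1 = q2*N+r2) : q1 = q2 ∧ r1 = r2 := by
  rcases lt_trichotomy q1 q2 with hq | hq | hq
  · have : (q1+1)*N ≤ q2*N := Nat.mul_le_mul_right _ hq
    have e : (q1+1)*N = q1*N+N := by ring
    omega
  · subst hq; omega
  · have : (q2+1)*N ≤ q1*N := Nat.mul_le_mul_right _ hq
    have e : (q2+1)*N = q2*N+N := by ring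
    omega

lemma exists_qr (x N : ℕ) (h : 0 < N) : ∃ q r, r < N ∧ x = q*N+r := by
  refine ⟨x/N, x%N, Nat.mod_lt _ h, ?_⟩
  conv_lhs => rw [← Nat.div_add_mod x N, Nat.mul_comm]

lemma exists_newCut {N m : ℕ} (hN : 1 ≤ N) (hm : m+1 < N*(N+1)) :
    ∃ c, 1 ≤ c ∧ c < N*(N+1) ∧ ¬ CutCond N m c ∧
      ∀ c', CutCond N (m+1) c' ↔ (CutCond N m c' ∨ c' = c) := by
  have hNN : N*(N+1) = N*N+N := by ring
  by_cases hb1 : m+1 ≤ N-1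
  · -- phase 1 : a column cut
    refine ⟨(N-1-m)*(N+1)+0, ?_, ?_, ?_, ?_⟩
    · have hge : 1*(N+1) ≤ (N-1-m)*(N+1) := Nat.mul_le_mul_right _ (by omega)
      omega
    · exact tlt _ _ (by omega) (by omega)
    · rw [cutCond_iff _ _ (by omega) (by omega)]
      push_neg
      refine ⟨fun _ _ => by omega, fun h => absurd h (by omega), fun h => absurd h (by omega)⟩
    · intro c'
      constructor
      · intro h'
        obtain ⟨tc, oc, htc, hoc, rfl, hcl⟩ := cutCond_elim h'
        rcases hcl with ⟨hoc0, htc1, hth⟩ | ⟨hocN, hth⟩ | ⟨hoc1, hocN, hth⟩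
        · by_cases hle : N - tc ≤ m
          · exact Or.inl (by rw [cutCond_iff _ _ htc hoc]; exact Or.inl ⟨hoc0, htc1, hle⟩)
          · right
            have htce : tc = N-1-m := by omega
            rw [hoc0, htce]
        · exfalso; omega
        · exfalso
          have : 0 ≤ (N-1-oc)*N := Nat.zero_le _
          omega
      · rintro (h | rfl)
        · exact cutCond_mono h (by omega)
        · rw [cutCond_iff _ _ (by omega) (by omega)]
          exact Or.inl ⟨rfl, by omega, by omega⟩
  · by_cases hb2 : m+1 ≤ 2*N-1
    · -- phase 2 : a u-cut
      refine ⟨(2*N-2-m)*(N+1)+N, ?_, ?_, ?_, ?_⟩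
      · omega
      · exact tlt _ _ (by omega) le_rfl
      · rw [cutCond_iff _ _ (by omega) le_rfl]
        push_neg
        refine ⟨fun h => absurd h (by omega), fun _ => by omega, fun _ h => absurd h (by omega)⟩
      · intro c'
        constructor
        · intro h'
          obtain ⟨tc, oc, htc, hoc, rfl, hcl⟩ := cutCond_elim h'
          rcases hcl with ⟨hoc0, htc1, hth⟩ | ⟨hocN, hth⟩ | ⟨hoc1, hocN, hth⟩
          · exact Or.inl (by rw [cutCond_iff _ _ htc hoc]; exact Or.inl ⟨hoc0, htc1, by omega⟩)
          · by_cases hle : 2*N-1-tc ≤ m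
            · exact Or.inl (by rw [cutCond_iff _ _ htc hoc]; exact Or.inr (Or.inl ⟨hocN, hle⟩))
            · right
              have htce : tc = 2*N-2-m := by omega
              rw [hocN, htce]
          · exfalso
            have : 0 ≤ (N-1-oc)*N := Nat.zero_le _
            omega
        · rintro (h | rfl)
          · exact cutCond_mono h (by omega)
          · rw [cutCond_iff _ _ (by omega) le_rfl]
            exact Or.inr (Or.inl ⟨rfl, by omega⟩)
    · -- phase 3 : an interior cut
      have h2N : 2*N ≤ m+1 := by omega
      have e1 : (N-1)*N = N*N - 1*N := Nat.sub_mul N 1 N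
      have e2 : 1*N ≤ N*N := Nat.mul_le_mul_right N hN
      have hsN : m+1-2*N < (N-1)*N := by omega
      obtain ⟨q, r, hr, hx⟩ := exists_qr (m+1-2*N) N (by omega)
      have hq : q < N-1 := by
        by_contra hcc
        push_neg at hcc
        have : (N-1)*N ≤ q*N := Nat.mul_le_mul_right _ hcc
        omega
      have heo : N-1-(N-1-q) = q := by omega
      have het : N-1-(N-1-r) = r := by omega
      refine ⟨(N-1-r)*(N+1)+(N-1-q), ?_, ?_, ?_, ?_⟩
      · omega
      · exact tlt _ _ (by omega) (by omega)
      · rw [cutCond_iff _ _ (by omega) (by omega), heo]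
        push_neg
        exact ⟨fun h => absurd h (by omega), fun h => absurd h (by omega), fun _ _ => by omega⟩
      · intro c'
        constructor
        · intro h'
          obtain ⟨tc, oc, htc, hoc, rfl, hcl⟩ := cutCond_elim h'
          rcases hcl with ⟨hoc0, htc1, hth⟩ | ⟨hocN, hth⟩ | ⟨hoc1, hocN, hth⟩
          · exact Or.inl (by rw [cutCond_iff _ _ htc hoc]; exact Or.inl ⟨hoc0, htc1, by omega⟩)
          · exact Or.inl (by rw [cutCond_iff _ _ htc hoc]; exact Or.inr (Or.inl ⟨hocN, by omega⟩))
          · by_cases hle : 2*N + (N-1-oc)*N + (N-1-tc) ≤ m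
            · exact Or.inl (by rw [cutCond_iff _ _ htc hoc]; exact Or.inr (Or.inr ⟨hoc1, hocN, hle⟩))
            · right
              have heq : (N-1-oc)*N + (N-1-tc) = q*N + r := by omega
              obtain ⟨hq1, hr1⟩ := divmod_unique (by omega) hr heq
              have hoce : oc = N-1-q := by omega
              have htce : tc = N-1-r := by omega
              rw [hoce, htce]
        · rintro (h | rfl)
          · exact cutCond_mono h (by omega)
          · rw [cutCond_iff _ _ (by omega) (by omega), heo]
            exact Or.inr (Or.inr ⟨by omega, by omega, by omega⟩)

lemma splits {N m : ℕ} (hN : 1 ≤ N) (hm : m+1 < N*(N+1)) :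
    SplitsFrom (PartsSeq N (m+1)) (PartsSeq N m) := by
  obtain ⟨c, hc1, hcn, hold, hiff⟩ := exists_newCut hN hm
  obtain ⟨a, ha⟩ := pos_surj (N := N) (c-1) (by omega)
  obtain ⟨b, hb⟩ := pos_surj c hcn
  have hnew : CutCond N (m+1) c := (hiff c).mpr (Or.inr rfl)
  have relStep : ∀ x y : VN N,
      rel N (m+1) x y ↔ (rel N m x y ∧ (c ≤ pos N x ↔ c ≤ pos N y)) := by
    intro x y
    constructor
    · intro h
      exact ⟨fun c' hc' => h c' ((hiff c').mpr (Or.inl hc')), h c hnew⟩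
    · rintro ⟨h1, h2⟩ c' hc'
      rcases (hiff c').mp hc' with h | rfl
      · exact h1 c' h
      · exact h2
  have hab : rel N m a b := by
    intro c' hc'
    have hne : c' ≠ c := fun he => hold (he ▸ hc')
    have := hc'.1
    rw [ha, hb]
    omega
  have hYZ : ∀ v, rel N m a v ↔ (rel N (m+1) a v ∨ rel N (m+1) b v) := by
    intro v
    constructor
    · intro h
      by_cases hcv : c ≤ pos N v
      · exact Or.inr ((relStep b v).mpr ⟨rel_trans (rel_symm hab) h, by rw [hb]; omega⟩)
      · exact Or.inl ((relStep a v).mpr ⟨h, by rw [ha]; omega⟩)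
    · rintro (h | h)
      · exact ((relStep a v).mp h).1
      · exact rel_trans hab ((relStep b v).mp h).1
  have hfix : ∀ v, ¬ rel N m a v → partOf N (m+1) v = partOf N m v := by
    intro v hav
    ext w
    rw [mem_partOf, mem_partOf]
    constructor
    · intro h
      exact ((relStep v w).mp h).1
    · intro hvw
      refine (relStep v w).mpr ⟨hvw, ?_⟩
      rw [rel] at hav
      push_neg at hav
      obtain ⟨c', hc', hne'⟩ := hav
      have h1 := hc'.1
      have hI := hvw c' hc'
      have hcne : c' ≠ c := fun he => hold (he ▸ hc')
      rw [ha] at hne'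
      by_contra hne
      omega
  refine ⟨partOf N m a, partOf N (m+1) a, partOf N (m+1) b,
    partOf_mem N m a, ⟨a, mem_partOf.mpr (rel_refl _ _ _)⟩,
    ⟨b, mem_partOf.mpr (rel_refl _ _ _)⟩, ?_, ?_, ?_⟩
  · intro v hv hv'
    rw [mem_partOf] at hv hv'
    have hab' : rel N (m+1) a b := rel_trans hv (rel_symm (rel_trans hv' (rel_refl _ _ _)))
    have := (relStep a b).mp hab'
    rw [ha, hb] at this
    omega
  · intro v
    rw [mem_partOf, mem_partOf, mem_partOf]
    exact hYZ v
  · intro W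
    constructor
    · intro hW
      obtain ⟨v, rfl⟩ := mem_PartsSeq.mp hW
      by_cases hav : rel N m a v
      · rcases (hYZ v).mp hav with h | h
        · exact Or.inl (partOf_eq h).symm
        · exact Or.inr (Or.inl (partOf_eq h).symm)
      · refine Or.inr (Or.inr ⟨?_, ?_⟩)
        · rw [hfix v hav]
          exact partOf_mem N m v
        · intro he
          have hv : v ∈ partOf N m a := by
            rw [← he]
            exact mem_partOf.mpr (rel_refl N (m+1) v)
          exact hav (mem_partOf.mp hv)
    · rintro (rfl | rfl | ⟨hWP, hWX⟩)
      · exact partOf_mem N (m+1) a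
      · exact partOf_mem N (m+1) b
      · obtain ⟨v, rfl⟩ := mem_PartsSeq.mp hWP
        have hav : ¬ rel N m a v := fun h => hWX (partOf_eq h).symm
        rw [← hfix v hav]
        exact partOf_mem N (m+1) v

lemma parts_zero {N : ℕ} (hN : 1 ≤ N) : PartsSeq N 0 = {Finset.univ} := by
  haveI : Nonempty (VN N) := ⟨Sum.inr ⟨0, by omega⟩⟩
  have h : ∀ x : VN N, partOf N 0 x = Finset.univ := by
    intro x
    ext y
    simp only [Finset.mem_univ, iff_true, mem_partOf]
    intro c hc
    exfalso
    obtain ⟨tc, oc, htc, hoc, rfl, hcl⟩ := cutCond_elim hc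
    rcases hcl with ⟨_, _, hth⟩ | ⟨_, hth⟩ | ⟨_, _, hth⟩
    · omega
    · omega
    · have : 0 ≤ (N-1-oc)*N := Nat.zero_le _
      omega
  rw [PartsSeq]
  rw [Finset.image_congr (g := fun _ => Finset.univ) (fun x _ => h x)]
  rw [Finset.image_const Finset.univ_nonempty]

lemma parts_last {N : ℕ} (hN : 1 ≤ N) :
    ∀ X ∈ PartsSeq N (N*(N+1)-1), ∃ v : VN N, X = {v} := by
  have hNN : N*(N+1) = N*N+N := by ring
  have hfull : ∀ c, 1 ≤ c → c < N*(N+1) → CutCond N (N*(N+1)-1) c := by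
    intro c h1 h2
    have hN2 : 1*N ≤ N*N := Nat.mul_le_mul_right N hN
    obtain ⟨t, o, ht, ho, rfl, hrep⟩ : ∃ t o, t < N ∧ o ≤ N ∧ c = t*(N+1)+o ∧ True := by
      refine ⟨c/(N+1), c%(N+1), ?_, ?_, ?_, trivial⟩
      · rw [Nat.div_lt_iff_lt_mul (by omega)]; exact h2
      · have := Nat.mod_lt c (show 0 < N+1 by omega); omega
      · have := Nat.div_add_mod c (N+1)
        have hcm : (c/(N+1))*(N+1) = (N+1)*(c/(N+1)) := Nat.mul_comm _ _
        omega
    rw [cutCond_iff _ _ ht ho]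
    by_cases ho0 : o = 0
    · have ht1 : 1 ≤ t := by
        by_contra hcc
        have : t = 0 := by omega
        subst this
        omega
      exact Or.inl ⟨ho0, ht1, by omega⟩
    · by_cases hoN : o = N
      · exact Or.inr (Or.inl ⟨hoN, by omega⟩)
      · refine Or.inr (Or.inr ⟨by omega, by omega, ?_⟩)
        have hN3 : 2 ≤ N := by omega
        have e1 : (N-2)*N = N*N - 2*N := Nat.sub_mul N 2 N
        have e2 : 2*N ≤ N*N := Nat.mul_le_mul_right N hN3
        have e3 : (N-1-o)*N ≤ (N-2)*N := Nat.mul_le_mul_right N (by omega)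
        omega
  intro X hX
  obtain ⟨x, rfl⟩ := mem_PartsSeq.mp hX
  refine ⟨x, ?_⟩
  ext y
  simp only [Finset.mem_singleton, mem_partOf]
  constructor
  · intro h
    by_contra hne
    have hpne : pos N x ≠ pos N y := fun he => hne (pos_inj he).symm
    have hxlt := pos_lt N x
    have hylt := pos_lt N y
    rcases Nat.lt_or_ge (pos N x) (pos N y) with hlt | hge
    · have hc := hfull (pos N x + 1) (by omega) (by omega)
      have := h _ hc
      omega
    · have hc := hfull (pos N y + 1) (by omega) (by omega)
      have := h _ hc
      omega
  · rintro rfl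
    exact rel_refl _ _ _

end TWP

/-- `G_N` has twin-width at most `3`. -/
theorem GN_twinwidth_le_three (N : ℕ) (hN : 1 ≤ N) : TwinWidthLE (GN N) 3 := by
  have hcard : Fintype.card (Fin N × Fin N ⊕ Fin N) = N*(N+1) := by
    simp [Fintype.card_sum, Fintype.card_prod]
    ring
  refine ⟨fun m => TWP.PartsSeq N m,
    ⟨fun i _ => TWP.isPartition_PartsSeq N i, TWP.parts_zero hN, ?_, ?_⟩, ?_⟩
  · simp only [hcard]
    exact TWP.parts_last hN
  · intro i hi
    rw [hcard] at hi
    exact TWP.splits hN hi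
  · intro i hi X hX
    obtain ⟨x, rfl⟩ := TWP.mem_PartsSeq.mp hX
    exact TWP.red_bound hN i x
end

section
/- For every positive integer N, the graph G_N has tree-width at least N. -/
/-- The tree-width of `G` is at most `k`: there is a tree-decomposition all of whose bags
have size at most `k + 1`. -/
def TreewidthLE {V : Type} (G : SimpleGraph V) (k : ℕ) : Prop :=
  ∃ (ι : Type) (T : SimpleGraph ι) (B : ι → Finset V),
    T.IsTree ∧
    (∀ v : V, ∃ i, v ∈ B i) ∧
    (∀ u v : V, G.Adj u v → ∃ i, u ∈ B i ∧ v ∈ B i) ∧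
    (∀ (v : V) (i j : ι) (p : T.Walk i j), p.IsPath → v ∈ B i → v ∈ B j →
      ∀ m ∈ p.support, v ∈ B m) ∧
    ∀ i, (B i).card ≤ k + 1

open SimpleGraph Sum


open SimpleGraph

section TreeHelly

variable {ι : Type} {T : SimpleGraph ι} (hT : T.IsTree)

/-- canonical path between two vertices of a tree -/
noncomputable def tpath (a b : ι) : T.Walk a b := (hT.existsUnique_path a b).choose

lemma tpath_isPath (a b : ι) : (tpath hT a b).IsPath := (hT.existsUnique_path a b).choose_spec.1

lemma tpath_unique {a b : ι} (p : T.Walk a b) (hp : p.IsPath) : p = tpath hT a b :=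
  (hT.existsUnique_path a b).choose_spec.2 p hp

lemma tpath_subset_walk {a b : ι} (w : T.Walk a b) : (tpath hT a b).support ⊆ w.support := by
  classical
  have h := tpath_unique hT w.bypass w.bypass_isPath
  rw [← h]
  exact w.support_bypass_subset

/-- a set closed under taking canonical paths -/
def TClosed (F : Set ι) : Prop :=
  ∀ a ∈ F, ∀ b ∈ F, ∀ m ∈ (tpath hT a b).support, m ∈ F

lemma first_hit {a b : ι} (p : T.Walk a b) (S : Set ι) :
    b ∈ S → ∃ m ∈ S, ∃ (p₁ : T.Walk a m) (p₂ : T.Walk m b),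
      p = p₁.append p₂ ∧ ∀ v ∈ p₁.support, v ∈ S → v = m := by
  induction p with
  | nil =>
    intro hb
    exact ⟨_, hb, SimpleGraph.Walk.nil, SimpleGraph.Walk.nil, rfl, by simp⟩
  | @cons u v w h q ih =>
    intro hb
    by_cases hu : u ∈ S
    · exact ⟨u, hu, SimpleGraph.Walk.nil, SimpleGraph.Walk.cons h q, rfl, by
        intro x hx hxS
        simpa using hx⟩
    · obtain ⟨m, hm, q₁, q₂, hq, hfirst⟩ := ih hb
      refine ⟨m, hm, SimpleGraph.Walk.cons h q₁, q₂, by rw [hq]; rfl, ?_⟩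
      intro x hx hxS
      rw [SimpleGraph.Walk.support_cons] at hx
      rcases List.mem_cons.mp hx with hx | hx
      · exact absurd (hx ▸ hxS) hu
      · exact hfirst x hx hxS

/-- median: a common vertex of the three canonical paths between a, b, c -/
lemma tmedian (a b c : ι) : ∃ m, m ∈ (tpath hT a b).support ∧
    m ∈ (tpath hT b c).support ∧ m ∈ (tpath hT a c).support := by
  classical
  set p := tpath hT a b with hpdef
  set t := tpath hT b c with htdef
  obtain ⟨m, hmS, p₁, p₂, hsplit, hfirst⟩ :=
    first_hit p {x | x ∈ t.support} (Walk.start_mem_support t)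
  have hmS' : m ∈ t.support := hmS
  have hmp : m ∈ p.support := by
    rw [hsplit]
    exact Walk.subset_support_append_left _ _ (Walk.end_mem_support p₁)
  set q := t.dropUntil m hmS' with hqdef
  have hp₁path : p₁.IsPath := by
    have hpp : p.IsPath := tpath_isPath hT a b
    rw [hsplit] at hpp
    exact hpp.of_append_left
  have hqpath : q.IsPath := (tpath_isPath hT b c).dropUntil hmS'
  have hw : (p₁.append q).IsPath := by
    rw [Walk.isPath_def, Walk.support_append, List.nodup_append]
    refine ⟨hp₁path.support_nodup, ?_, ?_⟩
    · exact (Walk.isPath_def _ |>.mp hqpath).tail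
    · intro x hx1 y hx2 hxy
      subst hxy
      have hxq : x ∈ q.support := List.mem_of_mem_tail hx2
      have hxt : x ∈ t.support := Walk.support_dropUntil_subset t hmS' hxq
      have hxm : x = m := hfirst x hx1 hxt
      subst hxm
      have hnd := hqpath.support_nodup
      rw [Walk.support_eq_cons] at hnd
      exact (List.nodup_cons.mp hnd).1 hx2
  have huniq : p₁.append q = tpath hT a c := tpath_unique hT _ hw
  refine ⟨m, hmp, Walk.support_dropUntil_subset t hmS' (Walk.start_mem_support q), ?_⟩
  rw [← huniq, Walk.mem_support_append_iff]
  exact Or.inl (Walk.end_mem_support p₁)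

lemma tclosed_inter {A B : Set ι} (hA : TClosed hT A) (hB : TClosed hT B) :
    TClosed hT (A ∩ B) := fun a ha b hb m hm =>
  ⟨hA a ha.1 b hb.1 m hm, hB a ha.2 b hb.2 m hm⟩

lemma helly3 {A B C : Set ι} (hA : TClosed hT A) (hB : TClosed hT B) (hC : TClosed hT C)
    (hAB : (A ∩ B).Nonempty) (hBC : (B ∩ C).Nonempty) (hAC : (A ∩ C).Nonempty) :
    (A ∩ B ∩ C).Nonempty := by
  obtain ⟨a, haB, haC⟩ := hBC
  obtain ⟨b, hbA, hbC⟩ := hAC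
  obtain ⟨c, hcA, hcB⟩ := hAB
  obtain ⟨m, hab, hbc, hac⟩ := tmedian hT a b c
  exact ⟨m, ⟨hA b hbA c hcA m hbc, hB a haB c hcB m hac⟩, hC a haC b hbC m hab⟩

lemma helly_aux : ∀ (L : List (Set ι)) (A : Set ι), TClosed hT A → A.Nonempty →
    (∀ F ∈ L, TClosed hT F) → (∀ F ∈ L, (A ∩ F).Nonempty) →
    (∀ F ∈ L, ∀ G ∈ L, (F ∩ G).Nonempty) →
    ∃ m ∈ A, ∀ F ∈ L, m ∈ F := by
  intro L
  induction L with
  | nil =>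
    intro A _ hAne _ _ _
    obtain ⟨m, hm⟩ := hAne
    exact ⟨m, hm, by simp⟩
  | cons B L' ih =>
    intro A hAcl hAne hcl hint hpair
    obtain ⟨m, hm, hmL⟩ := ih (A ∩ B) (tclosed_inter hT hAcl (hcl B (by simp)))
      (hint B (by simp))
      (fun F hF => hcl F (by simp [hF]))
      (fun F hF => by
        have h3 := helly3 hT hAcl (hcl B (by simp)) (hcl F (by simp [hF]))
          (hint B (by simp)) (hpair B (by simp) F (by simp [hF])) (hint F (by simp [hF]))
        exact h3.mono (fun x hx => ⟨⟨hx.1.1, hx.1.2⟩, hx.2⟩))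
      (fun F hF G hG => hpair F (by simp [hF]) G (by simp [hG]))
    exact ⟨m, hm.1, fun F hF => by
      rcases List.mem_cons.mp hF with h | h
      · exact h ▸ hm.2
      · exact hmL F h⟩

lemma helly_list (L : List (Set ι)) (hL : L ≠ [])
    (hcl : ∀ F ∈ L, TClosed hT F)
    (hint : ∀ F ∈ L, ∀ G ∈ L, (F ∩ G).Nonempty) :
    ∃ m, ∀ F ∈ L, m ∈ F := by
  match L with
  | [] => exact absurd rfl hL
  | A :: L' =>
    obtain ⟨m, hmA, hmL⟩ := helly_aux hT L' A (hcl A (by simp))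
      (by
        obtain ⟨x, hx, _⟩ := hint A (by simp) A (by simp)
        exact ⟨x, hx⟩)
      (fun F hF => hcl F (by simp [hF]))
      (fun F hF => hint A (by simp) F (by simp [hF]))
      (fun F hF G hG => hint F (by simp [hF]) G (by simp [hG]))
    exact ⟨m, fun F hF => by
      rcases List.mem_cons.mp hF with h | h
      · exact h ▸ hmA
      · exact hmL F h⟩

end TreeHelly


open SimpleGraph Sum

section GNLemmas


variable {N : ℕ}

lemma gn_adj_row (i : Fin N) {a b : Fin N} (h : (a:ℕ)+1 = (b:ℕ)) :
    (GN N).Adj (inl (i,a)) (inl (i,b)) := by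
  rw [GN, SimpleGraph.fromRel_adj]
  refine ⟨?_, Or.inl ⟨rfl, h⟩⟩
  intro hc
  have : a = b := by
    injection hc with h'
    exact congrArg Prod.snd h'
  omega

lemma gn_adj_star (i k : Fin N) : (GN N).Adj (inl (i,k)) (inr k) := by
  rw [GN, SimpleGraph.fromRel_adj]
  exact ⟨by simp, Or.inl rfl⟩

/-- walk along a row from column a to column b (a ≤ b) staying in the row -/
lemma gn_row_walk (i : Fin N) : ∀ (k : ℕ) (a b : Fin N), (a:ℕ) + k = (b:ℕ) →
    ∃ q : (GN N).Walk (inl (i,a)) (inl (i,b)),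
      ∀ v ∈ q.support, ∃ c : Fin N, a ≤ c ∧ c ≤ b ∧ v = inl (i,c) := by
  intro k
  induction k with
  | zero =>
    intro a b hab
    have : a = b := Fin.ext (by omega)
    subst this
    refine ⟨Walk.nil, ?_⟩
    intro v hv
    simp only [Walk.support_nil, List.mem_singleton] at hv
    exact ⟨a, le_refl a, le_refl a, hv⟩
  | succ k ih =>
    intro a b hab
    have ha1 : (a:ℕ) + 1 < N := by have := b.isLt; omega
    set a' : Fin N := ⟨(a:ℕ)+1, ha1⟩ with ha'
    obtain ⟨q, hq⟩ := ih a' b (by simp [ha']; omega)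
    refine ⟨Walk.cons (gn_adj_row i (by simp [ha'])) q, ?_⟩
    intro v hv
    rw [Walk.support_cons] at hv
    rcases List.mem_cons.mp hv with hv | hv
    · refine ⟨a, le_refl a, ?_, hv⟩
      rw [Fin.le_def]; omega
    · obtain ⟨c, h1, h2, h3⟩ := hq v hv
      refine ⟨c, ?_, h2, h3⟩
      rw [Fin.le_def]
      rw [Fin.le_def] at h1
      simp [ha'] at h1
      omega

end GNLemmas
section Sets

variable (N : ℕ)

abbrev VN := Fin N × Fin N ⊕ Fin N

def rowP (i : Fin N) : Set (VN N) := {x | ∃ l : Fin N, (l:ℕ)+2 ≤ N ∧ x = inl (i, l)}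
def colP (k : Fin N) : Set (VN N) :=
  {x | (∃ l : Fin N, (l:ℕ)+2 ≤ N ∧ x = inl (l, k)) ∨ x = inr k}
def crossS (i k : Fin N) : Set (VN N) := rowP N i ∪ colP N k
def BsetS (lst : Fin N) : Set (VN N) := {x | ∃ l : Fin N, x = inl (lst, l)}
def RsetS (lst : Fin N) : Set (VN N) :=
  {x | (∃ l : Fin N, (l:ℕ)+2 ≤ N ∧ x = inl (l, lst)) ∨ x = inr lst}

/-- connectivity-within-a-set -/
def SetConn (S : Set (VN N)) : Prop :=
  ∀ u ∈ S, ∀ w ∈ S, ∃ q : (GN N).Walk u w, ∀ v ∈ q.support, v ∈ S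

variable {N}

lemma setConn_of_hub {S : Set (VN N)} (hub : VN N)
    (h : ∀ u ∈ S, ∃ q : (GN N).Walk u hub, ∀ v ∈ q.support, v ∈ S) :
    SetConn N S := by
  intro u hu w hw
  obtain ⟨q1, hq1⟩ := h u hu
  obtain ⟨q2, hq2⟩ := h w hw
  refine ⟨q1.append q2.reverse, ?_⟩
  intro v hv
  rw [Walk.mem_support_append_iff] at hv
  rcases hv with hv | hv
  · exact hq1 v hv
  · exact hq2 v (by rwa [Walk.support_reverse, List.mem_reverse] at hv)

/-- walk within a row between any two columns, staying among the listed columns -/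
lemma row_conn (i : Fin N) (a b : Fin N) :
    ∃ q : (GN N).Walk (inl (i,a)) (inl (i,b)),
      ∀ v ∈ q.support, ∃ c : Fin N, ((a ≤ c ∧ c ≤ b) ∨ (b ≤ c ∧ c ≤ a)) ∧ v = inl (i,c) := by
  rcases le_total a b with hab | hab
  · obtain ⟨q, hq⟩ := gn_row_walk i ((b:ℕ) - (a:ℕ)) a b (by rw [Fin.le_def] at hab; omega)
    exact ⟨q, fun v hv => by obtain ⟨c, h1, h2, h3⟩ := hq v hv; exact ⟨c, Or.inl ⟨h1, h2⟩, h3⟩⟩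
  · obtain ⟨q, hq⟩ := gn_row_walk i ((a:ℕ) - (b:ℕ)) b a (by rw [Fin.le_def] at hab; omega)
    exact ⟨q.reverse, fun v hv => by
      rw [Walk.support_reverse, List.mem_reverse] at hv
      obtain ⟨c, h1, h2, h3⟩ := hq v hv; exact ⟨c, Or.inr ⟨h1, h2⟩, h3⟩⟩

lemma Bset_conn (lst : Fin N) : SetConn N (BsetS N lst) := by
  intro u hu w hw
  obtain ⟨l, rfl⟩ := hu
  obtain ⟨l', rfl⟩ := hw
  obtain ⟨q, hq⟩ := row_conn lst l l'
  exact ⟨q, fun v hv => by obtain ⟨c, _, rfl⟩ := hq v hv; exact ⟨c, rfl⟩⟩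

lemma Rset_conn (lst : Fin N) : SetConn N (RsetS N lst) := by
  apply setConn_of_hub (inr lst)
  intro u hu
  rcases hu with ⟨l, hl, rfl⟩ | rfl
  · refine ⟨Walk.cons (gn_adj_star l lst) Walk.nil, ?_⟩
    intro v hv
    simp only [Walk.support_cons, Walk.support_nil, List.mem_cons, List.mem_singleton] at hv
    rcases hv with rfl | hv
    · exact Or.inl ⟨l, hl, rfl⟩
    · rcases hv with rfl | hv
      · exact Or.inr rfl
      · simp at hv
  · exact ⟨Walk.nil, by simp [RsetS]⟩

lemma cross_conn (i k : Fin N) (hi : (i:ℕ)+2 ≤ N) (hk : (k:ℕ)+2 ≤ N) :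
    SetConn N (crossS N i k) := by
  apply setConn_of_hub (inl (i,k))
  intro u hu
  rcases hu with ⟨l, hl, rfl⟩ | hu
  · -- row part: inl (i, l)
    obtain ⟨q, hq⟩ := row_conn i l k
    refine ⟨q, fun v hv => ?_⟩
    obtain ⟨c, hc, rfl⟩ := hq v hv
    refine Or.inl ⟨c, ?_, rfl⟩
    rw [Fin.le_def, Fin.le_def] at hc
    omega
  · rcases hu with ⟨l, hl, rfl⟩ | rfl
    · -- column part: inl (l, k) → inr k → inl (i, k)
      refine ⟨Walk.cons (gn_adj_star l k) (Walk.cons (gn_adj_star i k).symm Walk.nil), ?_⟩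
      intro v hv
      simp only [Walk.support_cons, Walk.support_nil, List.mem_cons,
        List.mem_singleton] at hv
      rcases hv with rfl | rfl | hv
      · exact Or.inr (Or.inl ⟨l, hl, rfl⟩)
      · exact Or.inr (Or.inr rfl)
      · rcases hv with rfl | hv
        · exact Or.inl ⟨k, hk, rfl⟩
        · simp at hv
    · -- hub vertex inr k
      refine ⟨Walk.cons (gn_adj_star i k).symm Walk.nil, ?_⟩
      intro v hv
      simp only [Walk.support_cons, Walk.support_nil, List.mem_cons, List.mem_singleton] at hv
      rcases hv with rfl | hv
      · exact Or.inr (Or.inr rfl)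
      · rcases hv with rfl | hv
        · exact Or.inl ⟨k, hk, rfl⟩
        · simp at hv

end Sets
section Counting

lemma inj_card {α : Type} (X : Finset α) (M : ℕ) (w : Fin M → α) (g : α → ℕ)
    (hw : ∀ j, w j ∈ X) (hg : ∀ j, g (w j) = (j:ℕ)) : M ≤ X.card := by
  have hinj : Set.InjOn w ↑(Finset.univ : Finset (Fin M)) := by
    intro a _ b _ h
    have : (a:ℕ) = (b:ℕ) := by rw [← hg a, ← hg b, h]
    exact Fin.ext this
  simpa using Finset.card_le_card_of_injOn w (fun a _ => hw a) hinj

variable {N : ℕ}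

lemma count_main (hN : 1 ≤ N) (lst : Fin N) (hlst : (lst:ℕ) = N - 1)
    (X : Finset (VN N))
    (hB : ∃ v, v ∈ BsetS N lst ∧ v ∈ X)
    (hR : ∃ v, v ∈ RsetS N lst ∧ v ∈ X)
    (hhit : (∀ i : Fin N, (i:ℕ)+2 ≤ N → ∃ v, v ∈ rowP N i ∧ v ∈ X) ∨
            (∀ k : Fin N, (k:ℕ)+2 ≤ N → ∃ v, v ∈ colP N k ∧ v ∈ X)) :
    N + 1 ≤ X.card := by
  classical
  rcases hhit with hhit | hhit
  · -- rows case
    set g : VN N → ℕ := fun x =>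
      match x with
      | inl p => if (p.1:ℕ) = N-1 then N-1 else if (p.2:ℕ) = N-1 then N else (p.1:ℕ)
      | inr k => if (k:ℕ) = N-1 then N else N+2 with hg
    set w : Fin (N+1) → VN N := fun j =>
      if h : (j:ℕ)+2 ≤ N then (hhit ⟨(j:ℕ), by omega⟩ (by simpa using h)).choose
      else if (j:ℕ)+1 = N then hB.choose else hR.choose with hwdef
    apply inj_card X (N+1) w g
    · intro j
      by_cases h : (j:ℕ)+2 ≤ N
      · simp only [hwdef, dif_pos h]
        exact (hhit ⟨(j:ℕ), by omega⟩ (by simpa using h)).choose_spec.2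
      · by_cases h2 : (j:ℕ)+1 = N
        · simp only [hwdef, dif_neg h, if_pos h2]
          exact hB.choose_spec.2
        · simp only [hwdef, dif_neg h, if_neg h2]
          exact hR.choose_spec.2
    · intro j
      by_cases h : (j:ℕ)+2 ≤ N
      · have hspec := (hhit ⟨(j:ℕ), by omega⟩ (by simpa using h)).choose_spec.1
        obtain ⟨l, hl, hv⟩ := hspec
        simp only [hwdef, dif_pos h, hv, hg]
        have : ((⟨(j:ℕ), by omega⟩ : Fin N) : ℕ) = (j:ℕ) := rfl
        rw [if_neg (by omega), if_neg (by omega)]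
      · by_cases h2 : (j:ℕ)+1 = N
        · have hspec := hB.choose_spec.1
          obtain ⟨l, hv⟩ := hspec
          simp only [hwdef, dif_neg h, if_pos h2, hv, hg]
          rw [if_pos (by omega)]
          omega
        · have hj : (j:ℕ) = N := by have := j.isLt; omega
          have hspec := hR.choose_spec.1
          rcases hspec with ⟨l, hl, hv⟩ | hv
          · simp only [hwdef, dif_neg h, if_neg h2, hv, hg]
            rw [if_neg (by omega), if_pos (by omega)]
            omega
          · simp only [hwdef, dif_neg h, if_neg h2, hv, hg]
            rw [if_pos (by omega)]
            omega
  · -- cols case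
    set g : VN N → ℕ := fun x =>
      match x with
      | inl p => if (p.1:ℕ) = N-1 then N-1 else if (p.2:ℕ) = N-1 then N else (p.2:ℕ)
      | inr k => if (k:ℕ) = N-1 then N else (k:ℕ) with hg
    set w : Fin (N+1) → VN N := fun j =>
      if h : (j:ℕ)+2 ≤ N then (hhit ⟨(j:ℕ), by omega⟩ (by simpa using h)).choose
      else if (j:ℕ)+1 = N then hB.choose else hR.choose with hwdef
    apply inj_card X (N+1) w g
    · intro j
      by_cases h : (j:ℕ)+2 ≤ N
      · simp only [hwdef, dif_pos h]
        exact (hhit ⟨(j:ℕ), by omega⟩ (by simpa using h)).choose_spec.2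
      · by_cases h2 : (j:ℕ)+1 = N
        · simp only [hwdef, dif_neg h, if_pos h2]
          exact hB.choose_spec.2
        · simp only [hwdef, dif_neg h, if_neg h2]
          exact hR.choose_spec.2
    · intro j
      by_cases h : (j:ℕ)+2 ≤ N
      · have hspec := (hhit ⟨(j:ℕ), by omega⟩ (by simpa using h)).choose_spec.1
        rcases hspec with ⟨l, hl, hv⟩ | hv
        · simp only [hwdef, dif_pos h, hv, hg]
          rw [if_neg (by omega), if_neg (by omega)]
        · simp only [hwdef, dif_pos h, hv, hg]
          rw [if_neg (by omega)]
      · by_cases h2 : (j:ℕ)+1 = N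
        · have hspec := hB.choose_spec.1
          obtain ⟨l, hv⟩ := hspec
          simp only [hwdef, dif_neg h, if_pos h2, hv, hg]
          rw [if_pos (by omega)]
          omega
        · have hj : (j:ℕ) = N := by have := j.isLt; omega
          have hspec := hR.choose_spec.1
          rcases hspec with ⟨l, hl, hv⟩ | hv
          · simp only [hwdef, dif_neg h, if_neg h2, hv, hg]
            rw [if_neg (by omega), if_pos (by omega)]
            omega
          · simp only [hwdef, dif_neg h, if_neg h2, hv, hg]
            rw [if_pos (by omega)]
            omega

end Counting
section Decomp

variable {N : ℕ} {ι : Type} {T : SimpleGraph ι}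

def Jset (Bags : ι → Finset (VN N)) (S : Set (VN N)) : Set ι := {n | ∃ v ∈ S, v ∈ Bags n}

lemma walk_bags (hT : T.IsTree) (Bags : ι → Finset (VN N))
    (hedge : ∀ u v : VN N, (GN N).Adj u v → ∃ i, u ∈ Bags i ∧ v ∈ Bags i)
    (hpath : ∀ (v : VN N) (i j : ι) (p : T.Walk i j), p.IsPath → v ∈ Bags i → v ∈ Bags j →
      ∀ m ∈ p.support, v ∈ Bags m)
    {S : Set (VN N)} :
    ∀ {u w : VN N} (q : (GN N).Walk u w), (∀ v ∈ q.support, v ∈ S) →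
      ∀ i j, u ∈ Bags i → w ∈ Bags j →
      ∀ m ∈ (tpath hT i j).support, ∃ v ∈ S, v ∈ Bags m := by
  intro u w q
  induction q with
  | nil =>
    intro hsup i j hi hj m hm
    exact ⟨_, hsup _ (Walk.start_mem_support _),
      hpath _ i j (tpath hT i j) (tpath_isPath hT i j) hi hj m hm⟩
  | @cons x y z h q ih =>
    intro hsup i j hi hj m hm
    obtain ⟨n, hxn, hyn⟩ := hedge x y h
    have hsub : (tpath hT i j).support ⊆ ((tpath hT i n).append (tpath hT n j)).support :=
      tpath_subset_walk hT _
    have hm' := hsub hm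
    rw [Walk.mem_support_append_iff] at hm'
    rcases hm' with hm' | hm'
    · exact ⟨x, hsup x (by simp), hpath x i n (tpath hT i n) (tpath_isPath hT i n) hi hxn m hm'⟩
    · exact ih (fun v hv => hsup v (by rw [Walk.support_cons]; exact List.mem_cons_of_mem _ hv))
        n j hyn hj m hm'

lemma J_tclosed (hT : T.IsTree) (Bags : ι → Finset (VN N))
    (hedge : ∀ u v : VN N, (GN N).Adj u v → ∃ i, u ∈ Bags i ∧ v ∈ Bags i)
    (hpath : ∀ (v : VN N) (i j : ι) (p : T.Walk i j), p.IsPath → v ∈ Bags i → v ∈ Bags j →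
      ∀ m ∈ p.support, v ∈ Bags m)
    {S : Set (VN N)} (hS : SetConn N S) : TClosed hT (Jset Bags S) := by
  intro a ha b hb m hm
  obtain ⟨u, huS, huB⟩ := ha
  obtain ⟨w, hwS, hwB⟩ := hb
  obtain ⟨q, hq⟩ := hS u huS w hwS
  exact walk_bags hT Bags hedge hpath q hq a b huB hwB m hm

lemma J_touch (Bags : ι → Finset (VN N))
    (hcover : ∀ v : VN N, ∃ i, v ∈ Bags i)
    (hedge : ∀ u v : VN N, (GN N).Adj u v → ∃ i, u ∈ Bags i ∧ v ∈ Bags i)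
    {S S' : Set (VN N)} (u w : VN N) (hu : u ∈ S) (hw : w ∈ S')
    (h : u = w ∨ (GN N).Adj u w) : (Jset Bags S ∩ Jset Bags S').Nonempty := by
  rcases h with rfl | h
  · obtain ⟨i, hi⟩ := hcover u
    exact ⟨i, ⟨u, hu, hi⟩, ⟨u, hw, hi⟩⟩
  · obtain ⟨i, hui, hwi⟩ := hedge u w h
    exact ⟨i, ⟨u, hu, hui⟩, ⟨w, hw, hwi⟩⟩

end Decomp

/-- `G_N` has tree-width at least `N`. -/
theorem GN_treewidth_ge (N : ℕ) (hN : 1 ≤ N) : ¬ TreewidthLE (GN N) (N - 1) := by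
  rintro ⟨ι, T, Bags, hT, hcover, hedge, hpath, hcard⟩
  classical
  set lst : Fin N := ⟨N-1, by omega⟩ with hlstdef
  have hlst : (lst:ℕ) = N-1 := rfl
  set crossIdx : List (Fin N × Fin N) :=
    ((List.finRange N).product (List.finRange N)).filter
      (fun p => decide ((p.1:ℕ)+2 ≤ N ∧ (p.2:ℕ)+2 ≤ N)) with hcrossIdx
  set L : List (Set ι) :=
    Jset Bags (BsetS N lst) :: Jset Bags (RsetS N lst)
      :: crossIdx.map (fun p => Jset Bags (crossS N p.1 p.2)) with hL
  have hmemL : ∀ F ∈ L, F = Jset Bags (BsetS N lst) ∨ F = Jset Bags (RsetS N lst) ∨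
      ∃ p : Fin N × Fin N, (p.1:ℕ)+2 ≤ N ∧ (p.2:ℕ)+2 ≤ N ∧
        F = Jset Bags (crossS N p.1 p.2) := by
    intro F hF
    rw [hL] at hF
    rcases List.mem_cons.mp hF with h | h
    · exact Or.inl h
    rcases List.mem_cons.mp h with h | h
    · exact Or.inr (Or.inl h)
    obtain ⟨p, hp, rfl⟩ := List.mem_map.mp h
    rw [hcrossIdx, List.mem_filter] at hp
    have hb := of_decide_eq_true hp.2
    exact Or.inr (Or.inr ⟨p, hb.1, hb.2, rfl⟩)
  have hclosed : ∀ F ∈ L, TClosed hT F := by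
    intro F hF
    rcases hmemL F hF with rfl | rfl | ⟨p, h1, h2, rfl⟩
    · exact J_tclosed hT Bags hedge hpath (Bset_conn lst)
    · exact J_tclosed hT Bags hedge hpath (Rset_conn lst)
    · exact J_tclosed hT Bags hedge hpath (cross_conn p.1 p.2 h1 h2)
  have hint : ∀ F ∈ L, ∀ G ∈ L, (F ∩ G).Nonempty := by
    intro F hF G hG
    rcases hmemL F hF with rfl | rfl | ⟨p, h1, h2, rfl⟩ <;>
      rcases hmemL G hG with rfl | rfl | ⟨p', h1', h2', rfl⟩
    · exact J_touch Bags hcover hedge (inl (lst, lst)) (inl (lst, lst))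
        ⟨lst, rfl⟩ ⟨lst, rfl⟩ (Or.inl rfl)
    · exact J_touch Bags hcover hedge (inl (lst, lst)) (inr lst)
        ⟨lst, rfl⟩ (Or.inr rfl) (Or.inr (gn_adj_star lst lst))
    · exact J_touch Bags hcover hedge (inl (lst, p'.2)) (inr p'.2)
        ⟨p'.2, rfl⟩ (Or.inr (Or.inr rfl)) (Or.inr (gn_adj_star lst p'.2))
    · exact J_touch Bags hcover hedge (inr lst) (inl (lst, lst))
        (Or.inr rfl) ⟨lst, rfl⟩ (Or.inr (gn_adj_star lst lst).symm)
    · exact J_touch Bags hcover hedge (inr lst) (inr lst)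
        (Or.inr rfl) (Or.inr rfl) (Or.inl rfl)
    · -- R vs cross p'
      refine J_touch Bags hcover hedge (inl (p'.1, lst)) (inl (p'.1, ⟨N-2, by omega⟩))
        (Or.inl ⟨p'.1, h1', rfl⟩) (Or.inl ⟨⟨N-2, by omega⟩, by simp; omega, rfl⟩)
        (Or.inr ?_)
      exact (gn_adj_row p'.1 (by simp [hlst]; omega)).symm
    · exact J_touch Bags hcover hedge (inr p.2) (inl (lst, p.2))
        (Or.inr (Or.inr rfl)) ⟨p.2, rfl⟩ (Or.inr (gn_adj_star lst p.2).symm)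
    · -- cross vs R
      refine J_touch Bags hcover hedge (inl (p.1, ⟨N-2, by omega⟩)) (inl (p.1, lst))
        (Or.inl ⟨⟨N-2, by omega⟩, by simp; omega, rfl⟩) (Or.inl ⟨p.1, h1, rfl⟩)
        (Or.inr ?_)
      exact gn_adj_row p.1 (by simp [hlst]; omega)
    · -- cross vs cross
      exact J_touch Bags hcover hedge (inl (p.1, p'.2)) (inl (p.1, p'.2))
        (Or.inl ⟨p'.2, h2', rfl⟩) (Or.inr (Or.inl ⟨p.1, h1, rfl⟩)) (Or.inl rfl)
  obtain ⟨m, hm⟩ := helly_list hT L (by simp [hL]) hclosed hint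
  have hitB : ∃ v, v ∈ BsetS N lst ∧ v ∈ Bags m := by
    have := hm _ (by rw [hL]; exact List.mem_cons_self)
    obtain ⟨v, hv, hv'⟩ := this
    exact ⟨v, hv, hv'⟩
  have hitR : ∃ v, v ∈ RsetS N lst ∧ v ∈ Bags m := by
    have := hm _ (by rw [hL]; exact List.mem_cons_of_mem _ (List.mem_cons_self))
    obtain ⟨v, hv, hv'⟩ := this
    exact ⟨v, hv, hv'⟩
  have hitC : ∀ i k : Fin N, (i:ℕ)+2 ≤ N → (k:ℕ)+2 ≤ N →
      ∃ v, v ∈ crossS N i k ∧ v ∈ Bags m := by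
    intro i k hi hk
    have hmem : Jset Bags (crossS N i k) ∈ L := by
      rw [hL]
      refine List.mem_cons_of_mem _ (List.mem_cons_of_mem _ (List.mem_map.mpr
        ⟨(i, k), ?_, rfl⟩))
      rw [hcrossIdx, List.mem_filter]
      exact ⟨List.pair_mem_product.mpr ⟨List.mem_finRange i, List.mem_finRange k⟩,
        decide_eq_true ⟨hi, hk⟩⟩
    obtain ⟨v, hv, hv'⟩ := hm _ hmem
    exact ⟨v, hv, hv'⟩
  have hhit : (∀ i : Fin N, (i:ℕ)+2 ≤ N → ∃ v, v ∈ rowP N i ∧ v ∈ Bags m) ∨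
      (∀ k : Fin N, (k:ℕ)+2 ≤ N → ∃ v, v ∈ colP N k ∧ v ∈ Bags m) := by
    by_cases hrows : ∀ i : Fin N, (i:ℕ)+2 ≤ N → ∃ v, v ∈ rowP N i ∧ v ∈ Bags m
    · exact Or.inl hrows
    · push_neg at hrows
      obtain ⟨i₀, hi₀, hrow⟩ := hrows
      refine Or.inr fun k hk => ?_
      obtain ⟨v, hv, hv'⟩ := hitC i₀ k hi₀ hk
      rcases hv with hv | hv
      · exact absurd hv' (hrow v hv)
      · exact ⟨v, hv, hv'⟩
  have hcount := count_main hN lst hlst (Bags m) hitB hitR hhit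
  have hle := hcard m
  omega
end

section
/- Let t be a positive integer and let (G, 𝒫) be a partitioned graph such that G contains no K_{t,t} subgraph. Let X₁, y, z ∈ 𝒫 be distinct parts with |X₁| ≥ t, and suppose that neither {X₁, y} nor {X₁, z} is a red edge of the partitioned trigraph of (G, 𝒫). Then the number of vertices of y ∪ z that have a neighbor in X₁ is at most 2t − 2. -/
lemma part_bound {V : Type} (G : SimpleGraph V) (t : ℕ) (hfree : KttFree G t)
    (X w : Finset V) (hcard : t ≤ X.card) (hdisj : ∀ a ∈ X, a ∉ w)
    (hjoin : ∀ x ∈ X, ∀ v ∈ w, G.Adj x v) : w.card ≤ t - 1 := by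
  by_contra h
  push_neg at h
  have hw : t ≤ w.card := by omega
  obtain ⟨A, hA, hAcard⟩ := Finset.exists_subset_card_eq hcard
  obtain ⟨B, hB, hBcard⟩ := Finset.exists_subset_card_eq hw
  exact hfree ⟨A, B, hAcard, hBcard, fun a ha hb => hdisj a (hA ha) (hB hb),
    fun a ha b hb => hjoin a (hA ha) b (hB hb)⟩

/-- In a partitioned graph with no `K_{t,t}` subgraph, if `X₁, y, z` are
distinct parts, `|X₁| ≥ t`, and neither `{X₁, y}` nor `{X₁, z}` is a red edge of the
partitioned trigraph, then at most `2t - 2` vertices of `y ∪ z` have a neighbour in `X₁`. -/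
theorem few_neighbours_without_red (t : ℕ) (ht : 1 ≤ t) {V : Type} (G : SimpleGraph V)
    (P : Finset (Finset V)) (hP : IsPartition P) (hfree : KttFree G t)
    (X₁ y z : Finset V) (hX : X₁ ∈ P) (hy : y ∈ P) (hz : z ∈ P)
    (hd1 : X₁ ≠ y) (hd2 : X₁ ≠ z) (hd3 : y ≠ z) (hcard : t ≤ X₁.card)
    (hry : ¬ RedAdj G X₁ y) (hrz : ¬ RedAdj G X₁ z) :
    {v : V | (v ∈ y ∨ v ∈ z) ∧ ∃ x ∈ X₁, G.Adj x v}.ncard ≤ 2 * t - 2 := by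
  classical
  have hdisj : ∀ (w : Finset V), w ∈ P → X₁ ≠ w → ∀ a ∈ X₁, a ∉ w := by
    intro w hw hne a haX haw
    obtain ⟨U, _, hUuniq⟩ := hP.2 a
    exact hne ((hUuniq X₁ ⟨hX, haX⟩).trans (hUuniq w ⟨hw, haw⟩).symm)
  have key : ∀ (w : Finset V), w ∈ P → X₁ ≠ w → ¬ RedAdj G X₁ w →
      (w.filter (fun v => ∃ x ∈ X₁, G.Adj x v)).card ≤ t - 1 := by
    intro w hw hne hnr
    by_cases hS : (w.filter (fun v => ∃ x ∈ X₁, G.Adj x v)).Nonempty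
    · obtain ⟨v, hv⟩ := hS
      rw [Finset.mem_filter] at hv
      obtain ⟨x, hxX, hadj⟩ := hv.2
      have htri : TriAdj G X₁ w := ⟨hne, x, hxX, v, hv.1, hadj⟩
      have hjoin : ∀ x ∈ X₁, ∀ v ∈ w, G.Adj x v := by
        by_contra hc
        exact hnr ⟨htri, hc⟩
      calc (w.filter (fun v => ∃ x ∈ X₁, G.Adj x v)).card ≤ w.card :=
            Finset.card_filter_le _ _
        _ ≤ t - 1 := part_bound G t hfree X₁ w hcard (hdisj w hw hne) hjoin
    · rw [Finset.not_nonempty_iff_eq_empty] at hS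
      simp [hS]
  have hset : {v : V | (v ∈ y ∨ v ∈ z) ∧ ∃ x ∈ X₁, G.Adj x v} =
      ↑((y.filter (fun v => ∃ x ∈ X₁, G.Adj x v)) ∪
        (z.filter (fun v => ∃ x ∈ X₁, G.Adj x v))) := by
    ext v
    simp only [Set.mem_setOf_eq, Finset.coe_union, Set.mem_union, Finset.mem_coe,
      Finset.mem_filter]
    constructor
    · rintro ⟨hv | hv, hx⟩
      exacts [Or.inl ⟨hv, hx⟩, Or.inr ⟨hv, hx⟩]
    · rintro (⟨hv, hx⟩ | ⟨hv, hx⟩)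
      exacts [⟨Or.inl hv, hx⟩, ⟨Or.inr hv, hx⟩]
  rw [hset, Set.ncard_coe_finset]
  calc _ ≤ (y.filter (fun v => ∃ x ∈ X₁, G.Adj x v)).card +
        (z.filter (fun v => ∃ x ∈ X₁, G.Adj x v)).card := Finset.card_union_le _ _
    _ ≤ (t - 1) + (t - 1) := Nat.add_le_add (key y hy hd1 hry) (key z hz hd2 hrz)
    _ ≤ 2 * t - 2 := by omega
end
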